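/- arXiv:1812.02138 — 11 statements merged into one kernel-verified Lean document; each statement's English description precedes it below -/
import Mathlib

section
/- (Transportation formula.) Let H be a real Hilbert space, T : H ⇒ H a maximal monotone operator, and let z̃_ℓ, v_ℓ ∈ H, ε_ℓ ≥ 0, α_ℓ ≥ 0 for ℓ = 1,…,k satisfy v_ℓ ∈ T^{ε_ℓ}(z̃_ℓ) for each ℓ and Σ_{ℓ=1}^k α_ℓ = 1. Define z̃^a := Σ_{ℓ=1}^k α_ℓ z̃_ℓ, v^a := Σ_{ℓ=1}^k α_ℓ v_ℓ, and ε^a := Σ_{ℓ=1}^k α_ℓ (ε_ℓ + ⟪z̃_ℓ − z̃^a, v_ℓ − v^a⟫). Then ε^a ≥ 0 and v^a ∈ T^{ε^a}(z̃^a). -/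
open Filter Finset Topology
open scoped RealInnerProductSpace

/-- A set-valued operator `T : H ⇒ H` is monotone. -/
def IsMonotoneOp {H : Type*} [NormedAddCommGroup H] [InnerProductSpace ℝ H]
    (T : H → Set H) : Prop :=
  ∀ ⦃z z' v v' : H⦄, v ∈ T z → v' ∈ T z' → 0 ≤ ⟪z - z', v - v'⟫

/-- `T` is maximal monotone: it is monotone and its graph is not properly contained in the
graph of any other monotone operator. -/
def IsMaximalMonotoneOp {H : Type*} [NormedAddCommGroup H] [InnerProductSpace ℝ H]
    (T : H → Set H) : Prop :=
  IsMonotoneOp T ∧ ∀ S : H → Set H, IsMonotoneOp S → (∀ z, T z ⊆ S z) → ∀ z, S z ⊆ T z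

/-- The ε-enlargement `T^ε` of a set-valued operator `T`. -/
def enl {H : Type*} [NormedAddCommGroup H] [InnerProductSpace ℝ H]
    (T : H → Set H) (ε : ℝ) (z : H) : Set H :=
  {v | ∀ z' v', v' ∈ T z' → ⟪z - z', v - v'⟫ ≥ -ε}

/-- the transportation formula for ε-enlargements. -/
theorem stmt1
    {H : Type*} [NormedAddCommGroup H] [InnerProductSpace ℝ H] [CompleteSpace H]
    (T : H → Set H) (hT : IsMaximalMonotoneOp T)
    (k : ℕ) (hk : 1 ≤ k)
    (ztil v : ℕ → H) (ε a : ℕ → ℝ)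
    (hε : ∀ ℓ ∈ Finset.Icc 1 k, 0 ≤ ε ℓ)
    (ha : ∀ ℓ ∈ Finset.Icc 1 k, 0 ≤ a ℓ)
    (hsum : ∑ ℓ ∈ Finset.Icc 1 k, a ℓ = 1)
    (hin : ∀ ℓ ∈ Finset.Icc 1 k, v ℓ ∈ enl T (ε ℓ) (ztil ℓ))
    (za va : H) (εa : ℝ)
    (hza : za = ∑ ℓ ∈ Finset.Icc 1 k, a ℓ • ztil ℓ)
    (hva : va = ∑ ℓ ∈ Finset.Icc 1 k, a ℓ • v ℓ)
    (hεa : εa = ∑ ℓ ∈ Finset.Icc 1 k, a ℓ * (ε ℓ + ⟪ztil ℓ - za, v ℓ - va⟫)) :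
    0 ≤ εa ∧ va ∈ enl T εa za := by
  set s := Finset.Icc 1 k with hs
  -- sums of inner products against the averages
  have hzsum : ∀ w : H, ∑ ℓ ∈ s, a ℓ * ⟪ztil ℓ, w⟫ = ⟪za, w⟫ := by
    intro w
    rw [hza, sum_inner]
    exact Finset.sum_congr rfl fun ℓ _ => (real_inner_smul_left _ _ _).symm
  have hvsum : ∀ w : H, ∑ ℓ ∈ s, a ℓ * ⟪w, v ℓ⟫ = ⟪w, va⟫ := by
    intro w
    rw [hva, inner_sum]
    exact Finset.sum_congr rfl fun ℓ _ => (real_inner_smul_right _ _ _).symm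
  -- key algebraic identity
  have key : ∀ p q : H, ∑ ℓ ∈ s, a ℓ * ⟪ztil ℓ - p, v ℓ - q⟫ =
      ⟪za - p, va - q⟫ + ∑ ℓ ∈ s, a ℓ * ⟪ztil ℓ - za, v ℓ - va⟫ := by
    intro p q
    have expand : ∀ (p q : H), ∑ ℓ ∈ s, a ℓ * ⟪ztil ℓ - p, v ℓ - q⟫ =
        (∑ ℓ ∈ s, a ℓ * ⟪ztil ℓ, v ℓ⟫) - ⟪za, q⟫ - ⟪p, va⟫ + ⟪p, q⟫ := by
      intro p q
      have : ∀ ℓ ∈ s, a ℓ * ⟪ztil ℓ - p, v ℓ - q⟫ =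
          a ℓ * ⟪ztil ℓ, v ℓ⟫ - a ℓ * ⟪ztil ℓ, q⟫ - a ℓ * ⟪p, v ℓ⟫ + a ℓ * ⟪p, q⟫ := by
        intro ℓ _
        simp only [inner_sub_left, inner_sub_right]
        ring
      rw [Finset.sum_congr rfl this]
      simp only [Finset.sum_add_distrib, Finset.sum_sub_distrib, hzsum, hvsum,
        ← Finset.sum_mul, hsum, one_mul]
    rw [expand p q, expand za va]
    simp only [inner_sub_left, inner_sub_right]
    have h1 : ∑ ℓ ∈ s, a ℓ * ⟪ztil ℓ, va⟫ = ⟪za, va⟫ := hzsum va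
    ring
  -- membership
  have hmem : va ∈ enl T εa za := by
    intro z' v' hv'
    have hge : ∀ ℓ ∈ s, a ℓ * (-(ε ℓ)) ≤ a ℓ * ⟪ztil ℓ - z', v ℓ - v'⟫ := fun ℓ hℓ =>
      mul_le_mul_of_nonneg_left (hin ℓ hℓ z' v' hv') (ha ℓ hℓ)
    have hsumge : ∑ ℓ ∈ s, a ℓ * (-(ε ℓ)) ≤ ∑ ℓ ∈ s, a ℓ * ⟪ztil ℓ - z', v ℓ - v'⟫ :=
      Finset.sum_le_sum hge
    have hkey := key z' v'
    have hεa' : εa = (∑ ℓ ∈ s, a ℓ * ε ℓ) + ∑ ℓ ∈ s, a ℓ * ⟪ztil ℓ - za, v ℓ - va⟫ := by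
      rw [hεa, ← Finset.sum_add_distrib]
      exact Finset.sum_congr rfl fun ℓ _ => by ring
    have : ∑ ℓ ∈ s, a ℓ * (-(ε ℓ)) = -(∑ ℓ ∈ s, a ℓ * ε ℓ) := by
      rw [← Finset.sum_neg_distrib]
      exact Finset.sum_congr rfl fun ℓ _ => by ring
    rw [this] at hsumge
    linarith
  refine ⟨?_, hmem⟩
  -- nonnegativity via maximality
  by_contra hneg
  push_neg at hneg
  have hmem2 : ∀ z w, w ∈ T z → ⟪za - z, va - w⟫ ≥ -εa ∧ ⟪z - za, w - va⟫ ≥ -εa := by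
    intro z w hw
    have h := hmem z w hw
    refine ⟨h, ?_⟩
    rw [show z - za = -(za - z) by abel, show w - va = -(va - w) by abel, inner_neg_neg]
    exact h
  set Sop : H → Set H := fun z => T z ∪ {w | z = za ∧ w = va} with hSop
  have hmono : IsMonotoneOp Sop := by
    intro z z' w w' hw hw'
    rcases hw with hw | ⟨h1, h2⟩ <;> rcases hw' with hw' | ⟨h3, h4⟩
    · exact hT.1 hw hw'
    · subst h3; subst h4
      have h := (hmem2 z w hw).2
      linarith
    · subst h1; subst h2
      have h := (hmem2 z' w' hw').1
      linarith
    · subst h1; subst h2; subst h3; subst h4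
      simp
  have hsub : ∀ z, T z ⊆ Sop z := fun z => Set.subset_union_left
  have hva_in : va ∈ T za := hT.2 Sop hmono hsub za (Or.inr ⟨rfl, rfl⟩)
  have := hmem za va hva_in
  simp at this
  linarith
end

section
/- (Svaiter's lemma, part (a).) Let H be a real Hilbert space, T : H ⇒ H a maximal monotone operator, and let z̃, v, w ∈ H, λ > 0, ε ≥ 0, σ ∈ [0,1) satisfy v ∈ T^{ε}(z̃) and ‖λv + z̃ − w‖² + 2λε ≤ σ²‖z̃ − w‖². Let τ ∈ [0,1] and set z₊ := w − τλv. Then for every z ∈ H: ‖w − z‖² − ‖z₊ − z‖² ≥ (1−σ)²τ‖z̃ − w‖² + 2τλ(ε + ⟪z̃ − z, v⟫) + τ(1−τ)‖λv‖². -/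
open Filter Finset Topology
open scoped RealInnerProductSpace

/-- Svaiter's lemma, part (a). -/
theorem stmt2
    {H : Type*} [NormedAddCommGroup H] [InnerProductSpace ℝ H] [CompleteSpace H]
    (T : H → Set H) (hT : IsMaximalMonotoneOp T)
    (ztil v w : H) (lam ε σ τ : ℝ)
    (hlam : 0 < lam) (hε : 0 ≤ ε) (hσ0 : 0 ≤ σ) (hσ1 : σ < 1)
    (hτ0 : 0 ≤ τ) (hτ1 : τ ≤ 1)
    (hin : v ∈ enl T ε ztil)
    (herr : ‖lam • v + ztil - w‖ ^ 2 + 2 * lam * ε ≤ σ ^ 2 * ‖ztil - w‖ ^ 2)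
    (zp : H) (hzp : zp = w - (τ * lam) • v) :
    ∀ z : H,
      ‖w - z‖ ^ 2 - ‖zp - z‖ ^ 2 ≥
        (1 - σ) ^ 2 * τ * ‖ztil - w‖ ^ 2 + 2 * τ * lam * (ε + ⟪ztil - z, v⟫)
          + τ * (1 - τ) * ‖lam • v‖ ^ 2 := by
  intro z
  subst hzp
  have h1 : ‖lam • v + ztil - w‖ ^ 2
      = ‖lam • v‖ ^ 2 + 2 * ⟪lam • v, ztil - w⟫ + ‖ztil - w‖ ^ 2 := by
    rw [add_sub_assoc]; exact norm_add_sq_real _ _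
  have h2 : ‖w - (τ * lam) • v - z‖ ^ 2
      = ‖w - z‖ ^ 2 - 2 * ⟪w - z, (τ * lam) • v⟫ + ‖(τ * lam) • v‖ ^ 2 := by
    rw [sub_right_comm]; exact norm_sub_sq_real _ _
  have h3 : ⟪ztil - z, v⟫ = ⟪ztil - w, v⟫ + ⟪w - z, v⟫ := by
    rw [← inner_add_left, sub_add_sub_cancel]
  have h4 : ‖lam • v‖ ^ 2 = lam ^ 2 * ‖v‖ ^ 2 := by
    rw [norm_smul]; simp [abs_of_pos hlam]; ring
  have h5 : ‖(τ * lam) • v‖ ^ 2 = (τ * lam) ^ 2 * ‖v‖ ^ 2 := by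
    rw [norm_smul, Real.norm_eq_abs, mul_pow, sq_abs]
  have h6 : ⟪lam • v, ztil - w⟫ = lam * ⟪ztil - w, v⟫ := by
    rw [real_inner_smul_left, real_inner_comm]
  have h7 : ⟪w - z, (τ * lam) • v⟫ = (τ * lam) * ⟪w - z, v⟫ := by
    rw [real_inner_smul_right]
  rw [h1, h4, h6] at herr
  rw [h2, h3, h4, h5, h7]
  nlinarith [mul_nonneg hτ0 (sub_nonneg.2 herr),
    mul_nonneg (mul_nonneg (mul_nonneg hτ0 hσ0) (sub_nonneg.2 hσ1.le)) (sq_nonneg ‖ztil - w‖),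
    sq_nonneg ‖ztil - w‖]
end

section
/- (Svaiter's lemma, part (b).) Let H be a real Hilbert space, T : H ⇒ H a maximal monotone operator, and let z̃, v, w ∈ H, λ > 0, ε ≥ 0, σ ∈ [0,1) satisfy v ∈ T^{ε}(z̃) and ‖λv + z̃ − w‖² + 2λε ≤ σ²‖z̃ − w‖². Let τ ∈ [0,1] and set z₊ := w − τλv. Then for every z* with 0 ∈ T(z*): ‖w − z*‖² − ‖z₊ − z*‖² ≥ (1−σ²)τ‖z̃ − w‖² + τ(1−τ)‖λv‖². -/
open Filter Finset Topology
open scoped RealInnerProductSpace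

/-- Svaiter's lemma, part (b). -/
theorem stmt3
    {H : Type*} [NormedAddCommGroup H] [InnerProductSpace ℝ H] [CompleteSpace H]
    (T : H → Set H) (hT : IsMaximalMonotoneOp T)
    (ztil v w : H) (lam ε σ τ : ℝ)
    (hlam : 0 < lam) (hε : 0 ≤ ε) (hσ0 : 0 ≤ σ) (hσ1 : σ < 1)
    (hτ0 : 0 ≤ τ) (hτ1 : τ ≤ 1)
    (hin : v ∈ enl T ε ztil)
    (herr : ‖lam • v + ztil - w‖ ^ 2 + 2 * lam * ε ≤ σ ^ 2 * ‖ztil - w‖ ^ 2)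
    (zp : H) (hzp : zp = w - (τ * lam) • v) :
    ∀ zs : H, (0 : H) ∈ T zs →
      ‖w - zs‖ ^ 2 - ‖zp - zs‖ ^ 2 ≥
        (1 - σ ^ 2) * τ * ‖ztil - w‖ ^ 2 + τ * (1 - τ) * ‖lam • v‖ ^ 2 := by
  intro zs hzs
  have hkey : ⟪ztil - zs, v - 0⟫ ≥ -ε := hin zs 0 hzs
  rw [sub_zero] at hkey
  have e1 : ‖w - zs‖ ^ 2 - ‖zp - zs‖ ^ 2
      = 2 * (τ * lam) * ⟪w - zs, v⟫ - (τ * lam) ^ 2 * ‖v‖ ^ 2 := by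
    have : zp - zs = (w - zs) - (τ * lam) • v := by rw [hzp]; abel
    rw [this, norm_sub_sq_real (w - zs) ((τ * lam) • v), real_inner_smul_right, norm_smul]
    simp [abs_mul, abs_of_nonneg hτ0, abs_of_nonneg hlam.le]
    ring
  have e2 : ‖lam • v + ztil - w‖ ^ 2
      = lam ^ 2 * ‖v‖ ^ 2 + 2 * lam * ⟪ztil - w, v⟫ + ‖ztil - w‖ ^ 2 := by
    have : lam • v + ztil - w = lam • v + (ztil - w) := by abel
    rw [this, norm_add_sq_real, real_inner_smul_left, norm_smul,
      real_inner_comm]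
    simp [abs_of_nonneg hlam.le]
    ring
  have e3 : ⟪ztil - zs, v⟫ = ⟪ztil - w, v⟫ + ⟪w - zs, v⟫ := by
    rw [← inner_add_left]; norm_num
  have e4 : ‖lam • v‖ ^ 2 = lam ^ 2 * ‖v‖ ^ 2 := by
    rw [norm_smul]; simp [abs_of_nonneg hlam.le]; ring
  rw [e2] at herr
  rw [e1, e4]
  nlinarith [sq_nonneg (‖ztil - w‖), sq_nonneg σ, mul_nonneg hτ0 (sub_nonneg.2 hτ1),
    mul_nonneg hτ0 hlam.le]
end

section
/- Let {φ_k}_{k ≥ −1}, {s_k}_{k ≥ 1}, {α_k}_{k ≥ 0}, {δ_k}_{k ≥ 1} be sequences in [0,∞) and α ∈ ℝ such that φ₀ = φ_{−1}, 0 ≤ α_{k−1} ≤ α < 1 for all k ≥ 1, and φ_k − φ_{k−1} + s_k ≤ α_{k−1}(φ_{k−1} − φ_{k−2}) + δ_k for all k ≥ 1. Then for all k ≥ 1: φ_k + Σ_{j=1}^k s_j ≤ φ₀ + (1/(1−α)) Σ_{j=1}^k δ_j. -/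
open Filter Finset Topology

/-- Alvarez–Attouch auxiliary lemma, part (a).
Indexing convention: φ is indexed so that `φ k` is the paper's `φ_k` for `k ≥ 0`; the paper's
`φ_{−1}` equals `φ₀`, which is encoded by truncated subtraction (`k - 2 = 0` when `k = 1`). -/
theorem stmt5 (φ s αs δ : ℕ → ℝ) (α : ℝ)
    (hφ : ∀ k, 0 ≤ φ k)
    (hs : ∀ k, 1 ≤ k → 0 ≤ s k)
    (hδ : ∀ k, 1 ≤ k → 0 ≤ δ k)
    (hαs : ∀ k, 0 ≤ αs k ∧ αs k ≤ α)
    (hα : α < 1)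
    (hrec : ∀ k, 1 ≤ k →
      φ k - φ (k - 1) + s k ≤ αs (k - 1) * (φ (k - 1) - φ (k - 2)) + δ k) :
    ∀ k, 1 ≤ k →
      φ k + ∑ j ∈ Finset.Icc 1 k, s j ≤
        φ 0 + (1 / (1 - α)) * ∑ j ∈ Finset.Icc 1 k, δ j := by
  have hα0 : 0 ≤ α := le_trans (hαs 0).1 (hαs 0).2
  have h1 : (0:ℝ) < 1 - α := by linarith
  -- strengthened invariant
  have Q : ∀ k : ℕ, (1 - α) * (φ k + ∑ j ∈ Finset.Icc 1 k, s j)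
      + α * max (φ k - φ (k - 1)) 0 ≤ (1 - α) * φ 0 + ∑ j ∈ Finset.Icc 1 k, δ j := by
    intro k
    induction k with
    | zero => simp
    | succ k ih =>
      have hk1 : 1 ≤ k + 1 := by omega
      have hrk := hrec (k + 1) hk1
      have e1 : k + 1 - 1 = k := by omega
      have e2 : k + 1 - 2 = k - 1 := by omega
      rw [e1, e2] at hrk
      set M := max (φ k - φ (k - 1)) 0 with hM
      have hM0 : 0 ≤ M := le_max_right _ _
      have hMge : φ k - φ (k - 1) ≤ M := le_max_left _ _
      -- αs k * θ ≤ α * M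
      have hstep : αs k * (φ k - φ (k - 1)) ≤ α * M := by
        calc αs k * (φ k - φ (k - 1)) ≤ αs k * M :=
              mul_le_mul_of_nonneg_left hMge (hαs k).1
          _ ≤ α * M := mul_le_mul_of_nonneg_right (hαs k).2 hM0
      have h2 : φ (k + 1) - φ k + s (k + 1) ≤ α * M + δ (k + 1) := by
        calc φ (k + 1) - φ k + s (k + 1) ≤ αs k * (φ k - φ (k - 1)) + δ (k + 1) := hrk
          _ ≤ α * M + δ (k + 1) := by linarith
      have hA0 : 0 ≤ α * M + δ (k + 1) := by
        have := hδ (k + 1) hk1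
        positivity
      have h3 : max (φ (k + 1) - φ k) 0 ≤ α * M + δ (k + 1) := by
        apply max_le _ hA0
        have := hs (k + 1) hk1
        linarith
      rw [Finset.sum_Icc_succ_top hk1 s, Finset.sum_Icc_succ_top hk1 δ]
      have e3 : k + 1 - 1 = k := by omega
      rw [e3]
      have h2' : (1 - α) * (φ (k + 1) - φ k + s (k + 1)) ≤ (1 - α) * (α * M + δ (k + 1)) :=
        mul_le_mul_of_nonneg_left h2 (le_of_lt h1)
      have h3' : α * max (φ (k + 1) - φ k) 0 ≤ α * (α * M + δ (k + 1)) :=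
        mul_le_mul_of_nonneg_left h3 hα0
      nlinarith [ih]
  intro k hk
  have hQ := Q k
  have hM0 : 0 ≤ α * max (φ k - φ (k - 1)) 0 := by positivity
  rw [one_div, ← sub_le_iff_le_add', inv_mul_eq_div, le_div_iff₀ h1]
  nlinarith [hQ]
end

section
/- Let {φ_k}_{k ≥ −1}, {s_k}_{k ≥ 1}, {α_k}_{k ≥ 0}, {δ_k}_{k ≥ 1} be sequences in [0,∞) and α ∈ ℝ such that φ₀ = φ_{−1}, 0 ≤ α_{k−1} ≤ α < 1 for all k ≥ 1, and φ_k − φ_{k−1} + s_k ≤ α_{k−1}(φ_{k−1} − φ_{k−2}) + δ_k for all k ≥ 1. If Σ_{k=1}^∞ δ_k < +∞, then the sequence {φ_k} converges to some element of [0,∞). -/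
open Filter Finset Topology

/-- Alvarez–Attouch auxiliary lemma, part (b): if `Σ δ_k < ∞` then `{φ_k}`
converges to some element of `[0, ∞)`.
Indexing convention: `φ k` is the paper's `φ_k` for `k ≥ 0`; the paper's `φ_{−1}` equals `φ₀`,
which is encoded by truncated subtraction (`k - 2 = 0` when `k = 1`). -/
theorem stmt6 (φ s αs δ : ℕ → ℝ) (α : ℝ)
    (hφ : ∀ k, 0 ≤ φ k)
    (hs : ∀ k, 1 ≤ k → 0 ≤ s k)
    (hδ : ∀ k, 1 ≤ k → 0 ≤ δ k)
    (hαs : ∀ k, 0 ≤ αs k ∧ αs k ≤ α)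
    (hα : α < 1)
    (hrec : ∀ k, 1 ≤ k →
      φ k - φ (k - 1) + s k ≤ αs (k - 1) * (φ (k - 1) - φ (k - 2)) + δ k)
    (hsum : Summable δ) :
    ∃ c : ℝ, 0 ≤ c ∧ Tendsto φ atTop (𝓝 c) := by
  have hα0 : 0 ≤ α := le_trans (hαs 0).1 (hαs 0).2
  set θ : ℕ → ℝ := fun k => max (φ k - φ (k - 1)) 0 with hθdef
  have hθnn : ∀ k, 0 ≤ θ k := fun k => le_max_right _ _
  have hθ0 : θ 0 = 0 := by simp [hθdef]
  have hθle : ∀ k, φ k - φ (k - 1) ≤ θ k := fun k => le_max_left _ _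
  have hθrec : ∀ k, 1 ≤ k → θ k ≤ α * θ (k - 1) + δ k := by
    intro k hk
    have hb : 0 ≤ α * θ (k - 1) + δ k :=
      add_nonneg (mul_nonneg hα0 (hθnn _)) (hδ k hk)
    refine max_le ?_ hb
    have h1 := hrec k hk
    have h2 : φ k - φ (k - 1) ≤ αs (k - 1) * (φ (k - 1) - φ (k - 2)) + δ k := by
      have := hs k hk; linarith
    have h3 : φ (k - 1) - φ (k - 2) ≤ θ (k - 1) := by
      have e : k - 1 - 1 = k - 2 := by omega
      have h := hθle (k - 1)
      rwa [e] at h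
    have h4 : αs (k - 1) * (φ (k - 1) - φ (k - 2)) ≤ α * θ (k - 1) := by
      calc αs (k - 1) * (φ (k - 1) - φ (k - 2)) ≤ αs (k - 1) * θ (k - 1) :=
            mul_le_mul_of_nonneg_left h3 (hαs _).1
        _ ≤ α * θ (k - 1) := mul_le_mul_of_nonneg_right (hαs _).2 (hθnn _)
    linarith
  -- summability of θ
  have hδ' : Summable (fun k => δ (k + 1)) := (summable_nat_add_iff 1).2 hsum
  set C := ∑' k, δ (k + 1) with hC
  have hCnn : 0 ≤ C := tsum_nonneg (fun k => hδ (k + 1) (by omega))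
  have hSbound : ∀ n, ∑ k ∈ range n, θ (k + 1) ≤ C / (1 - α) := by
    intro n
    set S := ∑ k ∈ range n, θ (k + 1) with hS
    have h1 : S ≤ α * (∑ k ∈ range n, θ k) + ∑ k ∈ range n, δ (k + 1) := by
      rw [Finset.mul_sum, ← Finset.sum_add_distrib]
      refine Finset.sum_le_sum fun k _ => ?_
      have := hθrec (k + 1) (by omega)
      simpa using this
    have h2 : ∑ k ∈ range n, θ k ≤ S := by
      have hsub : ∑ k ∈ range n, θ k ≤ ∑ k ∈ range (n + 1), θ k :=
        Finset.sum_le_sum_of_subset_of_nonneg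
          (Finset.range_subset_range.2 (by omega)) (fun i _ _ => hθnn i)
      have : ∑ k ∈ range (n + 1), θ k = S + θ 0 := Finset.sum_range_succ' θ n
      rw [this, hθ0, add_zero] at hsub; exact hsub
    have h3 : ∑ k ∈ range n, δ (k + 1) ≤ C :=
      Summable.sum_le_tsum _ (fun k _ => hδ (k + 1) (by omega)) hδ'
    have h4 : S ≤ α * S + C := by nlinarith
    have h5 : S * (1 - α) ≤ C := by nlinarith
    rw [le_div_iff₀ (by linarith)]
    exact h5
  have hθsum' : Summable (fun k => θ (k + 1)) :=
    summable_of_sum_range_le (fun k => hθnn _) hSbound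
  have hθsum : Summable θ := (summable_nat_add_iff 1).1 hθsum'
  set T := ∑' k, θ k with hT
  -- ψ is antitone and bounded below
  set ψ : ℕ → ℝ := fun n => φ n - ∑ k ∈ range (n + 1), θ k with hψdef
  have hψanti : Antitone ψ := by
    refine antitone_nat_of_succ_le fun n => ?_
    have h1 : φ (n + 1) - φ n ≤ θ (n + 1) := by
      have := hθle (n + 1); simpa using this
    have h2 : ∑ k ∈ range (n + 2), θ k = ∑ k ∈ range (n + 1), θ k + θ (n + 1) :=
      Finset.sum_range_succ θ (n + 1)
    simp only [hψdef]
    rw [h2]; linarith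
  have hψbdd : BddBelow (Set.range ψ) := by
    refine ⟨-T, ?_⟩
    rintro x ⟨n, rfl⟩
    have h1 : ∑ k ∈ range (n + 1), θ k ≤ T := Summable.sum_le_tsum _ (fun k _ => hθnn k) hθsum
    have := hφ n
    simp only [hψdef]; linarith
  have hψlim : Tendsto ψ atTop (𝓝 (⨅ n, ψ n)) := tendsto_atTop_ciInf hψanti hψbdd
  -- partial sums tend to T
  have hpart : Tendsto (fun n => ∑ k ∈ range (n + 1), θ k) atTop (𝓝 T) :=
    hθsum.hasSum.tendsto_sum_nat.comp (tendsto_add_atTop_nat 1)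
  have hφlim : Tendsto φ atTop (𝓝 ((⨅ n, ψ n) + T)) := by
    have : φ = fun n => ψ n + ∑ k ∈ range (n + 1), θ k := by
      funext n; simp [hψdef]
    rw [this]
    exact hψlim.add hpart
  refine ⟨(⨅ n, ψ n) + T, ?_, hφlim⟩
  exact ge_of_tendsto' hφlim hφ
end

section
/- Let {z_k}, {w_k}, {z̃_k}, {v_k}, {ε_k}, {λ_k}, {α_k} be generated by Algorithm 1 (inertial under-relaxed HPE) for a maximal monotone operator T on a real Hilbert space H, with parameters α, σ ∈ [0,1), τ ∈ (0,1]. Define η := 2/((1+σ)τ) − 1 (which is > 0) and s_k := max{η‖z_k − w_{k−1}‖², (1−σ²)τ‖z̃_k − w_{k−1}‖²}. Then for every z* with 0 ∈ T(z*) and every k ≥ 1: ‖z_k − z*‖² + s_k ≤ ‖w_{k−1} − z*‖². -/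
open Filter Finset Topology
open scoped RealInnerProductSpace

set_option maxHeartbeats 1000000

/-- key estimate for Algorithm 1 (inertial under-relaxed HPE).
Indexing convention: `z k` is the paper's `z_k` for `k ≥ 0`, and the paper's `z_{−1} = z₀`
is encoded by truncated subtraction; `w k` is the paper's `w_k`. -/
theorem stmt7
    {H : Type*} [NormedAddCommGroup H] [InnerProductSpace ℝ H] [CompleteSpace H]
    (T : H → Set H) (hT : IsMaximalMonotoneOp T)
    (α σ τ : ℝ) (hα0 : 0 ≤ α) (hα1 : α < 1) (hσ0 : 0 ≤ σ) (hσ1 : σ < 1)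
    (hτ0 : 0 < τ) (hτ1 : τ ≤ 1)
    (z w ztil v : ℕ → H) (ε lam αs : ℕ → ℝ)
    (hαs : ∀ k, 0 ≤ αs k ∧ αs k ≤ α)
    (hw : ∀ k, w k = z k + αs k • (z k - z (k - 1)))
    (hlam : ∀ k, 1 ≤ k → 0 < lam k)
    (hεnn : ∀ k, 1 ≤ k → 0 ≤ ε k)
    (hin : ∀ k, 1 ≤ k → v k ∈ enl T (ε k) (ztil k))
    (herr : ∀ k, 1 ≤ k →
      ‖lam k • v k + ztil k - w (k - 1)‖ ^ 2 + 2 * lam k * ε k ≤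
        σ ^ 2 * ‖ztil k - w (k - 1)‖ ^ 2)
    (hz : ∀ k, 1 ≤ k → z k = w (k - 1) - (τ * lam k) • v k) :
    0 < 2 / ((1 + σ) * τ) - 1 ∧
    ∀ zs : H, (0 : H) ∈ T zs → ∀ k, 1 ≤ k →
      ‖z k - zs‖ ^ 2 +
        max ((2 / ((1 + σ) * τ) - 1) * ‖z k - w (k - 1)‖ ^ 2)
          ((1 - σ ^ 2) * τ * ‖ztil k - w (k - 1)‖ ^ 2) ≤
        ‖w (k - 1) - zs‖ ^ 2 := by
  have h1σ : (0:ℝ) < 1 + σ := by linarith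
  have hστ : 0 < (1 + σ) * τ := mul_pos h1σ hτ0
  have hη : 0 < 2 / ((1 + σ) * τ) - 1 := by
    rw [sub_pos, lt_div_iff₀ hστ]; nlinarith
  refine ⟨hη, fun zs hzs k hk => ?_⟩
  have hl := hlam k hk
  have hε := hεnn k hk
  have herr' := herr k hk
  have hmon : ⟪ztil k - zs, v k⟫ ≥ -(ε k) := by
    have := hin k hk zs 0 hzs
    simpa using this
  set a := ztil k - w (k - 1) with ha
  set e := lam k • v k + ztil k - w (k - 1) with he
  set u := w (k - 1) - zs with hu
  have hlv : lam k • v k = e - a := by rw [he, ha]; abel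
  have hzk : z k - zs = u - τ • (e - a) := by
    rw [hz k hk, ← hlv, ← mul_smul, hu]; abel
  have hzkw : z k - w (k - 1) = -(τ • (e - a)) := by
    rw [hz k hk, ← hlv, ← mul_smul]; abel
  have hQ : ⟪u, e - a⟫ ≥ ‖a‖ ^ 2 - ⟪e, a⟫ - lam k * ε k := by
    have heq : ⟪a + u, e - a⟫ = lam k * ⟪ztil k - zs, v k⟫ := by
      rw [show a + u = ztil k - zs from by rw [ha, hu]; abel, ← hlv,
        real_inner_smul_right]
    have h1 : ⟪a + u, e - a⟫ ≥ -(lam k * ε k) := by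
      rw [heq]
      nlinarith [mul_nonneg hl.le (by linarith : (0:ℝ) ≤ ⟪ztil k - zs, v k⟫ + ε k)]
    have h3 : ⟪a, e - a⟫ = ⟪e, a⟫ - ‖a‖ ^ 2 := by
      rw [inner_sub_right (𝕜 := ℝ) a e a, real_inner_self_eq_norm_sq,
        real_inner_comm a e]
    have h2 : ⟪a + u, e - a⟫ = ⟪e, a⟫ - ‖a‖ ^ 2 + ⟪u, e - a⟫ := by
      rw [inner_add_left, h3]
    linarith [h2 ▸ h1]
  clear_value a e u
  -- scalar abbreviations
  have hA : (0:ℝ) ≤ ‖a‖ := norm_nonneg a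
  have hE : (0:ℝ) ≤ ‖e‖ := norm_nonneg e
  have hL : (0:ℝ) ≤ lam k * ε k := mul_nonneg hl.le hε
  have hF : ‖e - a‖ ^ 2 = ‖e‖ ^ 2 - 2 * ⟪e, a⟫ + ‖a‖ ^ 2 := norm_sub_sq_real e a
  have hP : -(‖e‖ * ‖a‖) ≤ ⟪e, a⟫ := neg_le_of_abs_le (abs_real_inner_le_norm e a)
  have hEA : ‖e‖ ≤ σ * ‖a‖ := by
    by_contra h
    push_neg at h
    have : σ * ‖a‖ * (σ * ‖a‖) < ‖e‖ * ‖e‖ :=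
      mul_lt_mul'' h h (by positivity) (by positivity)
    nlinarith
  have key1 : ‖e - a‖ ^ 2 ≤ (1 + σ) * ⟪u, e - a⟫ := by
    have hq' : (1 + σ) * (‖a‖ ^ 2 - ⟪e, a⟫ - lam k * ε k) ≤ (1 + σ) * ⟪u, e - a⟫ :=
      mul_le_mul_of_nonneg_left hQ h1σ.le
    linarith [hq', herr', hF, mul_nonneg (by linarith : (0:ℝ) ≤ 1 - σ) (by linarith : (0:ℝ) ≤ ⟪e, a⟫ + ‖e‖ * ‖a‖),
      mul_nonneg (by linarith : (0:ℝ) ≤ 1 - σ) (mul_nonneg hA (by linarith : (0:ℝ) ≤ σ * ‖a‖ - ‖e‖)),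
      mul_nonneg (by linarith : (0:ℝ) ≤ 1 - σ) hL]
  have key2 : τ * ‖e - a‖ ^ 2 + (1 - σ ^ 2) * ‖a‖ ^ 2 ≤ 2 * ⟪u, e - a⟫ := by
    have h6 : τ * ‖e - a‖ ^ 2 ≤ ‖e - a‖ ^ 2 := by nlinarith [sq_nonneg ‖e - a‖]
    linarith [hF, herr', hQ]
  have hnorm1 : ‖u - τ • (e - a)‖ ^ 2 =
      ‖u‖ ^ 2 - 2 * (τ * ⟪u, e - a⟫) + τ ^ 2 * ‖e - a‖ ^ 2 := by
    rw [norm_sub_sq_real, real_inner_smul_right, norm_smul, Real.norm_eq_abs,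
      abs_of_pos hτ0, mul_pow]
  have hnorm2 : ‖-(τ • (e - a))‖ ^ 2 = τ ^ 2 * ‖e - a‖ ^ 2 := by
    rw [norm_neg, norm_smul, Real.norm_eq_abs, abs_of_pos hτ0, mul_pow]
  rw [hzk, hzkw, hnorm1, hnorm2]
  have hG1 : (2 / ((1 + σ) * τ) - 1) * (τ ^ 2 * ‖e - a‖ ^ 2) ≤
      2 * (τ * ⟪u, e - a⟫) - τ ^ 2 * ‖e - a‖ ^ 2 := by
    have e1 : (2 / ((1 + σ) * τ) - 1) * (τ ^ 2 * ‖e - a‖ ^ 2) =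
        2 * τ / (1 + σ) * ‖e - a‖ ^ 2 - τ ^ 2 * ‖e - a‖ ^ 2 := by
      field_simp
    rw [e1]
    have : 2 * τ / (1 + σ) * ‖e - a‖ ^ 2 ≤ 2 * (τ * ⟪u, e - a⟫) := by
      rw [div_mul_eq_mul_div, div_le_iff₀ h1σ]
      nlinarith [mul_le_mul_of_nonneg_left key1 (by positivity : (0:ℝ) ≤ 2 * τ)]
    linarith
  have hG2 : (1 - σ ^ 2) * τ * ‖a‖ ^ 2 ≤
      2 * (τ * ⟪u, e - a⟫) - τ ^ 2 * ‖e - a‖ ^ 2 := by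
    nlinarith [mul_le_mul_of_nonneg_left key2 hτ0.le]
  have := max_le hG1 hG2
  linarith
end

section
/- Let {z_k}, {w_k}, {z̃_k}, {v_k}, {ε_k}, {λ_k}, {α_k} be generated by Algorithm 1 (inertial under-relaxed HPE) for a maximal monotone operator T on a real Hilbert space H, with parameters α, σ ∈ [0,1), τ ∈ (0,1]. Let z* satisfy 0 ∈ T(z*), define φ_k := ‖z_k − z*‖² for k ≥ −1, δ_k := α_{k−1}(1+α_{k−1})‖z_{k−1} − z_{k−2}‖² for k ≥ 1, η := 2/((1+σ)τ) − 1 and s_k := max{η‖z_k − w_{k−1}‖², (1−σ²)τ‖z̃_k − w_{k−1}‖²}. Then φ₀ = φ_{−1} and, for all k ≥ 1: φ_k − φ_{k−1} + s_k ≤ α_{k−1}(φ_{k−1} − φ_{k−2}) + δ_k. -/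
open Filter Finset Topology
open scoped RealInnerProductSpace

set_option maxHeartbeats 1000000 in
/-- the sequences `φ_k`, `s_k`, `α_k`, `δ_k` built from Algorithm 1 satisfy the
Alvarez–Attouch recursion.  Indexing convention: `z k` is the paper's `z_k` for `k ≥ 0`, the
paper's `z_{−1} = z₀` (hence `φ₀ = φ_{−1}`) being encoded by truncated subtraction. -/
theorem stmt9
    {H : Type*} [NormedAddCommGroup H] [InnerProductSpace ℝ H] [CompleteSpace H]
    (T : H → Set H) (hT : IsMaximalMonotoneOp T)
    (α σ τ : ℝ) (hα0 : 0 ≤ α) (hα1 : α < 1) (hσ0 : 0 ≤ σ) (hσ1 : σ < 1)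
    (hτ0 : 0 < τ) (hτ1 : τ ≤ 1)
    (z w ztil v : ℕ → H) (ε lam αs : ℕ → ℝ)
    (hαs : ∀ k, 0 ≤ αs k ∧ αs k ≤ α)
    (hw : ∀ k, w k = z k + αs k • (z k - z (k - 1)))
    (hlam : ∀ k, 1 ≤ k → 0 < lam k)
    (hεnn : ∀ k, 1 ≤ k → 0 ≤ ε k)
    (hin : ∀ k, 1 ≤ k → v k ∈ enl T (ε k) (ztil k))
    (herr : ∀ k, 1 ≤ k →
      ‖lam k • v k + ztil k - w (k - 1)‖ ^ 2 + 2 * lam k * ε k ≤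
        σ ^ 2 * ‖ztil k - w (k - 1)‖ ^ 2)
    (hz : ∀ k, 1 ≤ k → z k = w (k - 1) - (τ * lam k) • v k)
    (zs : H) (hzs : (0 : H) ∈ T zs)
    (η : ℝ) (hη : η = 2 / ((1 + σ) * τ) - 1)
    (φ δ s : ℕ → ℝ)
    (hφ : ∀ k, φ k = ‖z k - zs‖ ^ 2)
    (hδ : ∀ k, 1 ≤ k →
      δ k = αs (k - 1) * (1 + αs (k - 1)) * ‖z (k - 1) - z (k - 2)‖ ^ 2)
    (hs : ∀ k, 1 ≤ k →
      s k = max (η * ‖z k - w (k - 1)‖ ^ 2) ((1 - σ ^ 2) * τ * ‖ztil k - w (k - 1)‖ ^ 2)) :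
    ∀ k, 1 ≤ k →
      φ k - φ (k - 1) + s k ≤ αs (k - 1) * (φ (k - 1) - φ (k - 2)) + δ k := by
  intro k hk
  have hl := hlam k hk
  have he := hεnn k hk
  have herrk := herr k hk
  have hzk := hz k hk
  have haa := hαs (k - 1)
  have h1σ : (0:ℝ) < 1 + σ := by linarith
  -- monotonicity fact from the enlargement
  have hmono : -ε k ≤ ⟪ztil k - zs, v k⟫ := by
    have h := hin k hk
    simp only [enl, Set.mem_setOf_eq] at h
    simpa using h zs 0 hzs
  -- expand the error criterion
  have harr : lam k • v k + ztil k - w (k - 1)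
      = lam k • v k + (ztil k - w (k - 1)) := by abel
  rw [harr, norm_add_sq_real, real_inner_smul_left, norm_smul, Real.norm_eq_abs,
    mul_pow, sq_abs] at herrk
  -- expansion of φ k
  have hexp : φ k = ‖w (k - 1) - zs‖ ^ 2
      - 2 * (τ * lam k) * ⟪w (k - 1) - zs, v k⟫ + (τ * lam k) ^ 2 * ‖v k‖ ^ 2 := by
    have h1 : z k - zs = (w (k - 1) - zs) - (τ * lam k) • v k := by rw [hzk]; abel
    rw [hφ, h1, norm_sub_sq_real, real_inner_smul_right, norm_smul, Real.norm_eq_abs,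
      mul_pow, sq_abs]
    ring
  have hI : ⟪w (k - 1) - zs, v k⟫
      = -⟪v k, ztil k - w (k - 1)⟫ + ⟪ztil k - zs, v k⟫ := by
    have h1 : w (k - 1) - zs = -(ztil k - w (k - 1)) + (ztil k - zs) := by abel
    rw [h1, inner_add_left, inner_neg_left, real_inner_comm (ztil k - w (k - 1)) (v k)]
  -- main decrease estimate
  have hC : τ * (1 - τ) * (lam k * ‖v k‖) ^ 2
      + τ * (1 - σ ^ 2) * ‖ztil k - w (k - 1)‖ ^ 2 ≤ ‖w (k - 1) - zs‖ ^ 2 - φ k := by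
    rw [hexp, hI]
    nlinarith [mul_le_mul_of_nonneg_left herrk hτ0.le,
      mul_le_mul_of_nonneg_left hmono (by positivity : (0:ℝ) ≤ 2 * (τ * lam k))]
  -- triangle-inequality bound:  λ‖v‖ ≤ (1+σ)‖z̃-w‖
  have hM : lam k * ‖v k‖ ≤ (1 + σ) * ‖ztil k - w (k - 1)‖ := by
    have he2 : ‖lam k • v k + (ztil k - w (k - 1))‖ ^ 2
        ≤ (σ * ‖ztil k - w (k - 1)‖) ^ 2 := by
      rw [norm_add_sq_real, real_inner_smul_left, norm_smul, Real.norm_eq_abs,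
        mul_pow, sq_abs]
      nlinarith [mul_nonneg hl.le he]
    have he3 : ‖lam k • v k + (ztil k - w (k - 1))‖ ≤ σ * ‖ztil k - w (k - 1)‖ := by
      have := Real.sqrt_le_sqrt he2
      rwa [Real.sqrt_sq (norm_nonneg _), Real.sqrt_sq (by positivity)] at this
    have h4 : lam k • v k
        = (lam k • v k + (ztil k - w (k - 1))) - (ztil k - w (k - 1)) := by abel
    have h5 : ‖lam k • v k‖ ≤ σ * ‖ztil k - w (k - 1)‖ + ‖ztil k - w (k - 1)‖ := by
      rw [h4]
      exact (norm_sub_le _ _).trans (by linarith [he3])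
    rw [norm_smul, Real.norm_eq_abs, abs_of_pos hl] at h5
    linarith
  have hM2 : (lam k * ‖v k‖) ^ 2 ≤ ((1 + σ) * ‖ztil k - w (k - 1)‖) ^ 2 :=
    pow_le_pow_left₀ (by positivity) hM 2
  -- η relation without division
  have hη' : η * ((1 + σ) * τ) = 2 - (1 + σ) * τ := by
    rw [hη]
    field_simp
  -- branch A
  have hA : η * ‖z k - w (k - 1)‖ ^ 2
      ≤ τ * (1 - τ) * (lam k * ‖v k‖) ^ 2
        + τ * (1 - σ ^ 2) * ‖ztil k - w (k - 1)‖ ^ 2 := by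
    have h1 : z k - w (k - 1) = -((τ * lam k) • v k) := by rw [hzk]; abel
    rw [h1, norm_neg, norm_smul, Real.norm_eq_abs, mul_pow, sq_abs]
    rw [← mul_le_mul_iff_of_pos_right h1σ]
    have hkey : η * ((τ * lam k) ^ 2 * ‖v k‖ ^ 2) * (1 + σ)
        = (2 - (1 + σ) * τ) * (τ * (lam k * ‖v k‖) ^ 2) := by
      linear_combination (τ * lam k ^ 2 * ‖v k‖ ^ 2) * hη'
    linarith [hkey, mul_nonneg (mul_nonneg hτ0.le (by linarith : (0:ℝ) ≤ 1 - σ))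
        (sub_nonneg.mpr hM2)]
  -- branch B
  have hB : (1 - σ ^ 2) * τ * ‖ztil k - w (k - 1)‖ ^ 2
      ≤ τ * (1 - τ) * (lam k * ‖v k‖) ^ 2
        + τ * (1 - σ ^ 2) * ‖ztil k - w (k - 1)‖ ^ 2 := by
    linarith [mul_nonneg (mul_nonneg hτ0.le (by linarith : (0:ℝ) ≤ 1 - τ))
        (sq_nonneg (lam k * ‖v k‖))]
  have hsk : s k ≤ ‖w (k - 1) - zs‖ ^ 2 - φ k := by
    rw [hs k hk]
    exact max_le (hA.trans hC) (hB.trans hC)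
  -- identity for ‖w_{k-1} - z*‖²
  have hWdef := hw (k - 1)
  rw [show k - 1 - 1 = k - 2 from by omega] at hWdef
  have hW : ‖w (k - 1) - zs‖ ^ 2
      = φ (k - 1) + αs (k - 1) * (φ (k - 1) - φ (k - 2)) + δ k := by
    rw [hφ (k - 1), hφ (k - 2), hδ k hk]
    have h1 : w (k - 1) - zs
        = (z (k - 1) - zs) + αs (k - 1) • (z (k - 1) - z (k - 2)) := by
      rw [hWdef]; abel
    have h2 : z (k - 2) - zs = (z (k - 1) - zs) - (z (k - 1) - z (k - 2)) := by abel
    rw [h1, h2, norm_add_sq_real,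
      norm_sub_sq_real (z (k - 1) - zs) (z (k - 1) - z (k - 2)),
      real_inner_smul_right, norm_smul, Real.norm_eq_abs, mul_pow, sq_abs]
    ring
  linarith
end

section
/- Let {z_k}, {λ_k}, {α_k} be generated by Algorithm 1 (inertial under-relaxed HPE) for a maximal monotone operator T on a real Hilbert space H with T⁻¹(0) := {z : 0 ∈ T(z)} nonempty, with parameters α, σ ∈ [0,1), τ ∈ (0,1]. If Σ_{k=0}^∞ α_k ‖z_k − z_{k−1}‖² < +∞ and there is λ̲ > 0 with λ_k ≥ λ̲ for all k ≥ 1, then {z_k} converges weakly to a point z with 0 ∈ T(z). -/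
open Filter Finset Topology
open scoped RealInnerProductSpace

section Auxiliary

open Set

/-- Weak sequential compactness of bounded sequences in a real Hilbert space. -/
lemma exists_weak_subseq {H : Type*} [NormedAddCommGroup H] [InnerProductSpace ℝ H]
    [CompleteSpace H] (u : ℕ → H) (M : ℝ) (hM : ∀ n, ‖u n‖ ≤ M) :
    ∃ (p : H) (φ : ℕ → ℕ), StrictMono φ ∧
      ∀ y : H, Tendsto (fun n => ⟪u (φ n), y⟫) atTop (𝓝 ⟪p, y⟫) := by
  have hM0 : 0 ≤ M := (norm_nonneg (u 0)).trans (hM 0)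
  -- the closed separable subspace containing the sequence
  set E : Submodule ℝ H := (Submodule.span ℝ (Set.range u)).topologicalClosure with hE
  haveI : CompleteSpace E := (Submodule.span ℝ (Set.range u)).isClosed_topologicalClosure.completeSpace_coe
  have huE : ∀ n, u n ∈ E :=
    fun n => Submodule.le_topologicalClosure _ (Submodule.subset_span ⟨n, rfl⟩)
  -- a countable dense family in E
  have hsep : TopologicalSpace.IsSeparable (E : Set H) := by
    have h1 : TopologicalSpace.IsSeparable (Set.range u) :=
      (Set.countable_range u).isSeparable
    exact (h1.span.closure).mono (by
      rw [hE, Submodule.topologicalClosure_coe])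
  obtain ⟨c, hc_count, hc_sub⟩ := hsep
  obtain ⟨e, he⟩ : ∃ e : ℕ → H, insert (0:H) c = Set.range e :=
    (hc_count.insert 0).exists_eq_range (insert_nonempty _ _)
  have hdense : ∀ x ∈ E, ∀ δ : ℝ, 0 < δ → ∃ i, ‖x - e i‖ < δ := by
    intro x hx δ hδ
    have : x ∈ closure c := hc_sub hx
    obtain ⟨y, hyc, hy⟩ := Metric.mem_closure_iff.mp this δ hδ
    have : y ∈ Set.range e := by rw [← he]; exact Set.mem_insert_of_mem _ hyc
    obtain ⟨i, rfl⟩ := this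
    exact ⟨i, by rwa [← dist_eq_norm]⟩
  -- diagonal extraction on the countable family
  set S : Set (ℕ → ℝ) := Set.pi Set.univ (fun i => Set.Icc (-(M * ‖e i‖)) (M * ‖e i‖)) with hS
  have hScomp : IsCompact S := isCompact_univ_pi fun i => isCompact_Icc
  have hmem : ∀ n, (fun i => ⟪u n, e i⟫) ∈ S := by
    intro n i _
    have h1 : |⟪u n, e i⟫| ≤ ‖u n‖ * ‖e i‖ := abs_real_inner_le_norm _ _
    have h2 : ‖u n‖ * ‖e i‖ ≤ M * ‖e i‖ :=
      mul_le_mul_of_nonneg_right (hM n) (norm_nonneg _)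
    constructor
    · linarith [(abs_le.mp (h1.trans h2)).1]
    · linarith [(abs_le.mp (h1.trans h2)).2]
  obtain ⟨L, -, φ, hφ, hLtend⟩ := hScomp.isSeqCompact hmem
  have hcoord : ∀ i, Tendsto (fun n => ⟪u (φ n), e i⟫) atTop (𝓝 (L i)) := by
    intro i
    have := (continuous_apply i).continuousAt.tendsto.comp hLtend
    exact this
  -- convergence of ⟪u (φ n), y⟫ for every y
  have hconv : ∀ y : H, ∃ l : ℝ, Tendsto (fun n => ⟪u (φ n), y⟫) atTop (𝓝 l) := by
    intro y
    set q : H := (E.orthogonalProjection y : H) with hq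
    have hqE : q ∈ E := (E.orthogonalProjection y).2
    have hneq : ∀ n, ⟪u (φ n), y⟫ = ⟪u (φ n), q⟫ := by
      intro n
      have h1 : y - q ∈ Eᗮ := Submodule.sub_starProjection_mem_orthogonal (K := E) y
      have h2 : ⟪u (φ n), y - q⟫ = 0 :=
        Submodule.inner_right_of_mem_orthogonal (huE (φ n)) h1
      have := inner_sub_right (𝕜 := ℝ) (u (φ n)) y q
      rw [h2] at this
      linarith [this]
    have hcauchy : CauchySeq (fun n => ⟪u (φ n), q⟫) := by
      rw [Metric.cauchySeq_iff]
      intro δ hδ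
      obtain ⟨i, hi⟩ := hdense q hqE (δ / (4 * (M + 1))) (by positivity)
      obtain ⟨N, hN⟩ := (Metric.cauchySeq_iff.mp (hcoord i).cauchySeq) (δ/2) (by linarith)
      refine ⟨N, fun m hm n hn => ?_⟩
      have key : ∀ a b : ℕ, |⟪u (φ a), q⟫ - ⟪u (φ b), q⟫ -
          (⟪u (φ a), e i⟫ - ⟪u (φ b), e i⟫)| ≤ 2 * M * (δ / (4 * (M + 1))) := by
        intro a b
        have : ⟪u (φ a), q⟫ - ⟪u (φ b), q⟫ - (⟪u (φ a), e i⟫ - ⟪u (φ b), e i⟫)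
            = ⟪u (φ a) - u (φ b), q - e i⟫ := by
          rw [inner_sub_left, inner_sub_right, inner_sub_right]; ring
        rw [this]
        calc |⟪u (φ a) - u (φ b), q - e i⟫| ≤ ‖u (φ a) - u (φ b)‖ * ‖q - e i‖ :=
              abs_real_inner_le_norm _ _
          _ ≤ (2 * M) * (δ / (4 * (M + 1))) := by
              apply mul_le_mul _ hi.le (norm_nonneg _) (by positivity)
              calc ‖u (φ a) - u (φ b)‖ ≤ ‖u (φ a)‖ + ‖u (φ b)‖ := norm_sub_le _ _
                _ ≤ 2 * M := by linarith [hM (φ a), hM (φ b)]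
      have h2 : |⟪u (φ m), e i⟫ - ⟪u (φ n), e i⟫| < δ/2 := by
        have := hN m hm n hn
        rwa [Real.dist_eq] at this
      have h3 : 2 * M * (δ / (4 * (M + 1))) ≤ δ / 2 := by
        have hM1 : (0:ℝ) < M + 1 := by linarith
        have heq : 2 * M * (δ / (4 * (M + 1))) = δ / 2 * (M / (M + 1)) := by
          field_simp; ring
        have hle : M / (M + 1) ≤ 1 := (div_le_one hM1).mpr (by linarith)
        nlinarith
      rw [Real.dist_eq]
      have := key m n
      have habs : |⟪u (φ m), q⟫ - ⟪u (φ n), q⟫| ≤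
          |⟪u (φ m), q⟫ - ⟪u (φ n), q⟫ - (⟪u (φ m), e i⟫ - ⟪u (φ n), e i⟫)| +
          |⟪u (φ m), e i⟫ - ⟪u (φ n), e i⟫| := by
        have := abs_sub_abs_le_abs_sub (⟪u (φ m), q⟫ - ⟪u (φ n), q⟫)
          (⟪u (φ m), e i⟫ - ⟪u (φ n), e i⟫)
        calc |⟪u (φ m), q⟫ - ⟪u (φ n), q⟫|
            = |(⟪u (φ m), q⟫ - ⟪u (φ n), q⟫ - (⟪u (φ m), e i⟫ - ⟪u (φ n), e i⟫))
              + (⟪u (φ m), e i⟫ - ⟪u (φ n), e i⟫)| := by ring_nf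
          _ ≤ _ := abs_add_le _ _
      linarith
    obtain ⟨l, hl⟩ := cauchySeq_tendsto_of_complete hcauchy
    refine ⟨l, ?_⟩
    simp only [hneq]
    exact hl
  -- build the weak limit via Riesz representation
  choose F hF using hconv
  have Fadd : ∀ y₁ y₂, F (y₁ + y₂) = F y₁ + F y₂ := by
    intro y₁ y₂
    refine tendsto_nhds_unique (hF (y₁ + y₂)) ?_
    have := (hF y₁).add (hF y₂)
    simpa [inner_add_right] using this
  have Fsmul : ∀ (a : ℝ) y, F (a • y) = a * F y := by
    intro a y
    refine tendsto_nhds_unique (hF (a • y)) ?_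
    have := (hF y).const_mul a
    simpa [inner_smul_right] using this
  have Fbound : ∀ y, |F y| ≤ M * ‖y‖ := by
    intro y
    have h1 : Tendsto (fun n => |⟪u (φ n), y⟫|) atTop (𝓝 |F y|) := (hF y).abs
    refine le_of_tendsto h1 (Eventually.of_forall fun n => ?_)
    calc |⟪u (φ n), y⟫| ≤ ‖u (φ n)‖ * ‖y‖ := abs_real_inner_le_norm _ _
      _ ≤ M * ‖y‖ := mul_le_mul_of_nonneg_right (hM (φ n)) (norm_nonneg _)
  let ℓ : H →L[ℝ] ℝ := LinearMap.mkContinuous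
    { toFun := F, map_add' := Fadd, map_smul' := Fsmul } M
    (fun y => by simpa [Real.norm_eq_abs] using Fbound y)
  refine ⟨(InnerProductSpace.toDual ℝ H).symm ℓ, φ, hφ, fun y => ?_⟩
  have : ⟪(InnerProductSpace.toDual ℝ H).symm ℓ, y⟫ = ℓ y :=
    InnerProductSpace.toDual_symm_apply
  rw [this]
  exact hF y


lemma scalar_aux (τ σ L A B V R E N : ℝ) (hτ0 : 0 < τ) (hτ1 : τ ≤ 1) (hL : 0 < L)
    (hE : 0 ≤ E) (hV : 0 ≤ V) (hR : 0 ≤ R)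
    (f1 : L^2 * V - 2 * (L * A) + R + 2 * L * E ≤ σ^2 * R) (hB : B ≥ -E) :
    N - 2 * ((τ * L) * (A + B)) + (τ * L)^2 * V + τ * (1 - σ^2) * R ≤ N := by
  have h1 : 2 * (L * A) ≥ L^2 * V + (1 - σ^2) * R + 2 * L * E := by linarith
  have h2 : τ * (2 * (L * A)) ≥ τ * (L^2 * V + (1 - σ^2) * R + 2 * L * E) :=
    mul_le_mul_of_nonneg_left h1 hτ0.le
  have h3 : (2 * (τ * L)) * B ≥ (2 * (τ * L)) * (-E) :=
    mul_le_mul_of_nonneg_left hB (by positivity)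
  have hττ : 0 ≤ τ - τ^2 := by nlinarith
  have h4 : (τ * L)^2 * V ≤ τ * (L^2 * V) := by
    nlinarith [mul_nonneg hττ (mul_nonneg (sq_nonneg L) hV)]
  nlinarith [h2, h3, h4]

lemma seq_aux (h s r : ℕ → ℝ) (α c : ℝ) (hα0 : 0 ≤ α) (hα1 : α < 1) (hc : 0 < c)
    (hhnn : ∀ k, 0 ≤ h k) (hrnn : ∀ k, 0 ≤ r k) (hsnn : ∀ k, 0 ≤ s k)
    (hssum : Summable s)
    (key : ∀ k, h (k+1) + c * r (k+1) ≤ h k + α * max (h k - h (k-1)) 0 + 2 * s k) :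
    (∃ L, Tendsto h atTop (𝓝 L)) ∧ Summable (fun k => r (k+1)) ∧ ∃ C, ∀ N, h N ≤ C := by
  set p : ℕ → ℝ := fun k => max (h k - h (k-1)) 0 with hp
  have hpnn : ∀ k, 0 ≤ p k := fun k => le_max_right _ _
  have hp0 : p 0 = 0 := by simp [hp]
  have hpsucc : ∀ k, p (k+1) = max (h (k+1) - h k) 0 := by intro k; simp [hp]
  have hts_s : 0 ≤ ∑' k, s k := tsum_nonneg hsnn
  have hpstep : ∀ k, p (k+1) ≤ α * p k + 2 * s k := by
    intro k
    rw [hpsucc]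
    have hnn : 0 ≤ α * p k + 2 * s k := by
      have := mul_nonneg hα0 (hpnn k); have := hsnn k; linarith
    apply max_le _ hnn
    have h1 := key k
    have h2 := mul_nonneg hc.le (hrnn (k+1))
    linarith
  have hSb : ∀ n, ∑ k ∈ range n, p k ≤ α * (∑ k ∈ range n, p k) + 2 * ∑' k, s k := by
    intro n
    cases n with
    | zero => simpa using by positivity
    | succ m =>
      have hS : ∑ k ∈ range (m+1), p k = ∑ k ∈ range m, p (k+1) := by
        rw [Finset.sum_range_succ', hp0, add_zero]
      have hchain : ∑ k ∈ range m, p (k+1)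
          ≤ α * ∑ k ∈ range m, p k + 2 * ∑' k, s k := by
        calc ∑ k ∈ range m, p (k+1)
            ≤ ∑ k ∈ range m, (α * p k + 2 * s k) :=
              Finset.sum_le_sum (fun k _ => hpstep k)
          _ = α * ∑ k ∈ range m, p k + 2 * ∑ k ∈ range m, s k := by
              rw [Finset.sum_add_distrib, ← Finset.mul_sum, ← Finset.mul_sum]
          _ ≤ α * ∑ k ∈ range m, p k + 2 * ∑' k, s k := by
              have e2 : ∑ k ∈ range m, s k ≤ ∑' k, s k :=
                hssum.sum_le_tsum _ (fun i _ => hsnn i)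
              linarith
      have hsub : ∑ k ∈ range m, p k ≤ ∑ k ∈ range (m+1), p k := by
        apply Finset.sum_le_sum_of_subset_of_nonneg
        · exact Finset.range_subset_range.mpr (Nat.le_succ m)
        · exact fun i _ _ => hpnn i
      have e4 := mul_le_mul_of_nonneg_left hsub hα0
      linarith [hS]
  have hpsum : Summable p := by
    apply summable_of_sum_range_le hpnn (c := 2 * (∑' k, s k) / (1 - α))
    intro n
    rw [le_div_iff₀ (by linarith)]
    have := hSb n
    linarith
  have hts_p : 0 ≤ ∑' k, p k := tsum_nonneg hpnn
  have hdle : ∀ N, h (N+1) - h N ≤ p (N+1) := fun N => by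
    rw [hpsucc]; exact le_max_left _ _
  set u : ℕ → ℝ := fun N => h N - ∑ k ∈ range (N+1), p k with hu
  have hu_anti : Antitone u := by
    apply antitone_nat_of_succ_le
    intro N
    simp only [hu]
    rw [Finset.sum_range_succ]
    have := hdle N
    linarith
  have hu_bdd : BddBelow (Set.range u) := by
    refine ⟨-(∑' k, p k), ?_⟩
    rintro x ⟨N, rfl⟩
    have h1 := hpsum.sum_le_tsum (range (N+1)) (fun i _ => hpnn i)
    have h2 := hhnn N
    simp only [hu]
    linarith
  have htendu := tendsto_atTop_ciInf hu_anti hu_bdd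
  have htendsum : Tendsto (fun N => ∑ k ∈ range (N+1), p k) atTop (𝓝 (∑' k, p k)) :=
    hpsum.hasSum.tendsto_sum_nat.comp (tendsto_add_atTop_nat 1)
  have hu0 : u 0 = h 0 := by simp [hu, hp0]
  refine ⟨⟨(⨅ i, u i) + ∑' k, p k, ?_⟩, ?_, ⟨h 0 + ∑' k, p k, ?_⟩⟩
  · have := htendu.add htendsum
    simpa [hu] using this
  · -- summability of shifted r
    apply summable_of_sum_range_le (c := (h 0 + α * (∑' k, p k) + 2 * ∑' k, s k)/c)
      (fun k => hrnn (k+1))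
    intro n
    rw [le_div_iff₀ hc]
    have t1 : ∑ k ∈ range n, ((h k - h (k+1)) + (α * p k + 2 * s k))
        = (h 0 - h n) + (α * ∑ k ∈ range n, p k + 2 * ∑ k ∈ range n, s k) := by
      rw [Finset.sum_add_distrib, Finset.sum_range_sub' h, Finset.sum_add_distrib,
        ← Finset.mul_sum, ← Finset.mul_sum]
    have t2 : ∑ k ∈ range n, (c * r (k+1)) ≤
        ∑ k ∈ range n, ((h k - h (k+1)) + (α * p k + 2 * s k)) := by
      apply Finset.sum_le_sum
      intro k _
      have := key k
      linarith
    have t3 : (∑ k ∈ range n, r (k+1)) * c = ∑ k ∈ range n, (c * r (k+1)) := by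
      rw [Finset.sum_mul]; congr 1; funext k; ring
    have e1 : ∑ k ∈ range n, p k ≤ ∑' k, p k := hpsum.sum_le_tsum _ (fun i _ => hpnn i)
    have e2 : ∑ k ∈ range n, s k ≤ ∑' k, s k := hssum.sum_le_tsum _ (fun i _ => hsnn i)
    have e3 := hhnn n
    have e4 := mul_le_mul_of_nonneg_left e1 hα0
    rw [t3]
    rw [t1] at t2
    linarith
  · -- boundedness
    intro N
    have h1 : u N ≤ u 0 := hu_anti (Nat.zero_le N)
    have h2 := hpsum.sum_le_tsum (range (N+1)) (fun i _ => hpnn i)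
    rw [hu0] at h1
    simp only [hu] at h1
    linarith


lemma fejer_aux {H : Type*} [NormedAddCommGroup H] [InnerProductSpace ℝ H]
    (T : H → Set H) (α σ τ : ℝ) (hα0 : 0 ≤ α) (hα1 : α < 1) (hσ0 : 0 ≤ σ) (hσ1 : σ < 1)
    (hτ0 : 0 < τ) (hτ1 : τ ≤ 1)
    (z w ztil v : ℕ → H) (ε lam αs : ℕ → ℝ)
    (hαs : ∀ k, 0 ≤ αs k ∧ αs k ≤ α)
    (hw : ∀ k, w k = z k + αs k • (z k - z (k - 1)))
    (hlam : ∀ k, 1 ≤ k → 0 < lam k)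
    (hεnn : ∀ k, 1 ≤ k → 0 ≤ ε k)
    (hin : ∀ k, 1 ≤ k → v k ∈ enl T (ε k) (ztil k))
    (herr : ∀ k, 1 ≤ k →
      ‖lam k • v k + ztil k - w (k - 1)‖ ^ 2 + 2 * lam k * ε k ≤
        σ ^ 2 * ‖ztil k - w (k - 1)‖ ^ 2)
    (hz : ∀ k, 1 ≤ k → z k = w (k - 1) - (τ * lam k) • v k)
    (hsum : Summable (fun k => αs k * ‖z k - z (k - 1)‖ ^ 2))
    (zs : H) (hzs : (0:H) ∈ T zs) :
    (∃ L, Tendsto (fun k => ‖z k - zs‖ ^ 2) atTop (𝓝 L)) ∧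
    Summable (fun k => ‖ztil (k+1) - w k‖ ^ 2) ∧
    ∃ C, ∀ k, ‖z k - zs‖ ^ 2 ≤ C := by
  set c : ℝ := τ * (1 - σ^2) with hcdef
  have hcpos : 0 < c := by
    have : 0 < 1 - σ^2 := by nlinarith
    positivity
  -- Part 2: expansion of the inertial step
  have part2 : ∀ j, ‖w j - zs‖^2 ≤ ‖z j - zs‖^2
      + αs j * (‖z j - zs‖^2 - ‖z (j-1) - zs‖^2)
      + 2 * (αs j * ‖z j - z (j-1)‖^2) := by
    intro j
    set a : ℝ := αs j with ha
    set p : H := z j - zs with hpd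
    set q : H := z (j-1) - zs with hqd
    have ha0 : 0 ≤ a := (hαs j).1
    have ha1 : a ≤ α := (hαs j).2
    have hwj : w j - zs = p + a • (p - q) := by
      rw [hw j, hpd, hqd]
      module
    have hpq : p - q = z j - z (j-1) := by rw [hpd, hqd]; abel
    have e1 : ‖p + a • (p - q)‖^2
        = ‖p‖^2 + 2 * (a * ⟪p, p - q⟫) + a^2 * ‖p - q‖^2 := by
      rw [norm_add_sq_real, real_inner_smul_right, norm_smul, Real.norm_eq_abs,
        mul_pow, sq_abs]
    have e3 : ⟪p, p - q⟫ = ‖p‖^2 - ⟪p, q⟫ := by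
      rw [inner_sub_right, real_inner_self_eq_norm_sq]
    have e4 : ‖p - q‖^2 = ‖p‖^2 - 2 * ⟪p, q⟫ + ‖q‖^2 := norm_sub_sq_real p q
    rw [hwj, ← hpq, e1, e3]
    have hD : 0 ≤ ‖p - q‖^2 := by positivity
    have haa : a ≤ 1 := le_of_lt (lt_of_le_of_lt ha1 hα1)
    have hfact : (a^2 - a) * ‖p - q‖^2 ≤ 0 :=
      mul_nonpos_of_nonpos_of_nonneg (by nlinarith) hD
    have e4a : a * ‖p - q‖^2 = a * ‖p‖^2 - 2 * (a * ⟪p, q⟫) + a * ‖q‖^2 := by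
      rw [e4]; ring
    nlinarith [e4a, hfact]
  -- Part 1: the HPE contraction step
  have part1 : ∀ k, 1 ≤ k →
      ‖z k - zs‖^2 + c * ‖ztil k - w (k-1)‖^2 ≤ ‖w (k-1) - zs‖^2 := by
    intro k hk
    set L : ℝ := lam k with hL
    set V : ℝ := ‖v k‖^2 with hV
    set R : ℝ := ‖ztil k - w (k-1)‖^2 with hR
    set E : ℝ := ε k with hE
    set a : H := w (k-1) - zs with had
    set g : H := w (k-1) - ztil k with hgd
    have hLpos : 0 < L := hlam k hk
    have hEnn : 0 ≤ E := hεnn k hk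
    have hVnn : 0 ≤ V := by rw [hV]; positivity
    have hRnn : 0 ≤ R := by rw [hR]; positivity
    set A : ℝ := ⟪g, v k⟫ with hA
    set B : ℝ := ⟪ztil k - zs, v k⟫ with hB
    -- B ≥ -E from the enlargement
    have hBge : B ≥ -E := by
      have := hin k hk zs 0 hzs
      rw [sub_zero] at this
      exact this
    -- inner product decomposition
    have hadecomp : ⟪a, v k⟫ = A + B := by
      have : a = g + (ztil k - zs) := by rw [had, hgd]; abel
      rw [this, inner_add_left, hA, hB]
    -- error criterion expansion
    have f1 : L^2 * V - 2 * (L * A) + R + 2 * L * E ≤ σ^2 * R := by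
      have hsplit : lam k • v k + ztil k - w (k-1) = L • v k - g := by
        rw [hgd, hL]; abel
      have hexp : ‖L • v k - g‖^2 = L^2 * V - 2 * (L * A) + R := by
        rw [norm_sub_sq_real, norm_smul, Real.norm_eq_abs, mul_pow, sq_abs,
          real_inner_smul_left, real_inner_comm]
        have : ‖g‖^2 = R := by rw [hgd, hR, ← norm_neg]; congr 1; abel
        rw [this, hA, hV]
      have hthis := herr k hk
      rw [hsplit, hexp] at hthis
      rw [← hR, ← hE, ← hL] at hthis
      linarith
    -- expansion of the iterate
    have hzk : z k - zs = a - (τ * L) • v k := by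
      rw [hz k hk, had, hL]; abel
    have hexp2 : ‖z k - zs‖^2 = ‖a‖^2 - 2 * ((τ * L) * ⟪a, v k⟫) + (τ * L)^2 * V := by
      rw [hzk, norm_sub_sq_real, real_inner_smul_right, norm_smul, Real.norm_eq_abs,
        mul_pow, sq_abs, hV]
    rw [hexp2, hadecomp, hcdef]
    have goal := scalar_aux τ σ L A B V R E (‖a‖^2) hτ0 hτ1 hLpos hEnn hVnn hRnn f1 hBge
    linarith [goal]
  -- combine and appeal to the real-sequence lemma
  have key : ∀ k, ‖z (k+1) - zs‖^2 + c * ‖ztil (k+1) - w k‖^2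
      ≤ ‖z k - zs‖^2 + α * max (‖z k - zs‖^2 - ‖z (k-1) - zs‖^2) 0
        + 2 * (αs k * ‖z k - z (k-1)‖^2) := by
    intro k
    have h1 := part1 (k+1) (Nat.le_add_left 1 k)
    have h2 := part2 k
    simp only [Nat.add_sub_cancel] at h1
    have h3 : αs k * (‖z k - zs‖^2 - ‖z (k-1) - zs‖^2)
        ≤ α * max (‖z k - zs‖^2 - ‖z (k-1) - zs‖^2) 0 := by
      rcases le_or_gt (‖z k - zs‖^2 - ‖z (k-1) - zs‖^2) 0 with hng | hps
      · have e1 : αs k * (‖z k - zs‖^2 - ‖z (k-1) - zs‖^2) ≤ 0 :=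
          mul_nonpos_of_nonneg_of_nonpos (hαs k).1 hng
        have e2 : 0 ≤ α * max (‖z k - zs‖^2 - ‖z (k-1) - zs‖^2) 0 :=
          mul_nonneg hα0 (le_max_right _ _)
        linarith
      · rw [max_eq_left hps.le]
        exact mul_le_mul_of_nonneg_right (hαs k).2 hps.le
    linarith
  have := seq_aux (fun k => ‖z k - zs‖^2) (fun k => αs k * ‖z k - z (k-1)‖^2)
    (fun k => ‖ztil k - w (k-1)‖^2) α c hα0 hα1 hcpos
    (fun k => by positivity) (fun k => by positivity)
    (fun k => mul_nonneg (hαs k).1 (by positivity)) hsum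
    (fun k => by simp only [Nat.add_sub_cancel]; exact key k)
  obtain ⟨c1, c2, c3⟩ := this
  refine ⟨c1, ?_, c3⟩
  exact c2.congr (fun k => by simp)

end Auxiliary

/-- weak convergence of Algorithm 1 under the summability condition.
Indexing convention: `z k` is the paper's `z_k` for `k ≥ 0`, the paper's `z_{−1} = z₀` being
encoded by truncated subtraction; weak convergence is expressed via inner products. -/
theorem stmt10
    {H : Type*} [NormedAddCommGroup H] [InnerProductSpace ℝ H] [CompleteSpace H]
    (T : H → Set H) (hT : IsMaximalMonotoneOp T)
    (α σ τ : ℝ) (hα0 : 0 ≤ α) (hα1 : α < 1) (hσ0 : 0 ≤ σ) (hσ1 : σ < 1)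
    (hτ0 : 0 < τ) (hτ1 : τ ≤ 1)
    (z w ztil v : ℕ → H) (ε lam αs : ℕ → ℝ)
    (hαs : ∀ k, 0 ≤ αs k ∧ αs k ≤ α)
    (hw : ∀ k, w k = z k + αs k • (z k - z (k - 1)))
    (hlam : ∀ k, 1 ≤ k → 0 < lam k)
    (hεnn : ∀ k, 1 ≤ k → 0 ≤ ε k)
    (hin : ∀ k, 1 ≤ k → v k ∈ enl T (ε k) (ztil k))
    (herr : ∀ k, 1 ≤ k →
      ‖lam k • v k + ztil k - w (k - 1)‖ ^ 2 + 2 * lam k * ε k ≤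
        σ ^ 2 * ‖ztil k - w (k - 1)‖ ^ 2)
    (hz : ∀ k, 1 ≤ k → z k = w (k - 1) - (τ * lam k) • v k)
    (hzero : ∃ zs : H, (0 : H) ∈ T zs)
    (hsum : Summable (fun k => αs k * ‖z k - z (k - 1)‖ ^ 2))
    (lamlb : ℝ) (hlb : 0 < lamlb) (hlam2 : ∀ k, 1 ≤ k → lamlb ≤ lam k) :
    ∃ zinf : H, (0 : H) ∈ T zinf ∧
      ∀ y : H, Tendsto (fun k => ⟪z k, y⟫) atTop (𝓝 ⟪zinf, y⟫) := by
  classical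
  obtain ⟨zstar, hzstar⟩ := hzero
  obtain ⟨⟨L0, hL0⟩, hrsum, C0, hC0⟩ :=
    fejer_aux T α σ τ hα0 hα1 hσ0 hσ1 hτ0 hτ1 z w ztil v ε lam αs hαs hw hlam hεnn hin
      herr hz hsum zstar hzstar
  -- boundedness of the iterates
  set Cz : ℝ := ‖zstar‖ + Real.sqrt C0 with hCz
  have hbz : ∀ k, ‖z k‖ ≤ Cz := by
    intro k
    have h2 : ‖z k - zstar‖ ≤ Real.sqrt C0 := by
      rw [← Real.sqrt_sq (norm_nonneg (z k - zstar))]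
      exact Real.sqrt_le_sqrt (hC0 k)
    have h3 : ‖z k‖ ≤ ‖zstar‖ + ‖z k - zstar‖ := by
      have : z k = zstar + (z k - zstar) := by abel
      calc ‖z k‖ = ‖zstar + (z k - zstar)‖ := by rw [← this]
        _ ≤ ‖zstar‖ + ‖z k - zstar‖ := norm_add_le _ _
    rw [hCz]; linarith
  -- residuals go to zero
  have hr0 : Tendsto (fun k => ‖ztil (k+1) - w k‖ ^ 2) atTop (𝓝 0) :=
    hrsum.tendsto_atTop_zero
  have hρ0 : Tendsto (fun k => ‖ztil (k+1) - w k‖) atTop (𝓝 0) := by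
    have h := (Real.continuous_sqrt.tendsto 0).comp hr0
    rw [Real.sqrt_zero] at h
    exact h.congr (fun k => Real.sqrt_sq (norm_nonneg _))
  have hvb : ∀ k : ℕ, lam (k+1) * ‖v (k+1)‖ ≤ (1 + σ) * ‖ztil (k+1) - w k‖ := by
    intro k
    have hk1 : 1 ≤ k + 1 := Nat.le_add_left 1 k
    have herrk := herr (k+1) hk1
    simp only [Nat.add_sub_cancel] at herrk
    have hεk := hεnn (k+1) hk1
    have hlamk := hlam (k+1) hk1
    have h1 : ‖lam (k+1) • v (k+1) + ztil (k+1) - w k‖ ^ 2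
        ≤ σ ^ 2 * ‖ztil (k+1) - w k‖ ^ 2 := by
      have := mul_nonneg (mul_nonneg (by norm_num : (0:ℝ) ≤ 2) hlamk.le) hεk
      nlinarith [herrk]
    have h2 : ‖lam (k+1) • v (k+1) + ztil (k+1) - w k‖ ≤ σ * ‖ztil (k+1) - w k‖ := by
      have hσρ : 0 ≤ σ * ‖ztil (k+1) - w k‖ := mul_nonneg hσ0 (norm_nonneg _)
      rw [← Real.sqrt_sq (norm_nonneg (lam (k+1) • v (k+1) + ztil (k+1) - w k))]
      calc Real.sqrt (‖lam (k+1) • v (k+1) + ztil (k+1) - w k‖ ^ 2)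
          ≤ Real.sqrt (σ ^ 2 * ‖ztil (k+1) - w k‖ ^ 2) := Real.sqrt_le_sqrt h1
        _ = σ * ‖ztil (k+1) - w k‖ := by rw [← mul_pow, Real.sqrt_sq hσρ]
    have h3 : ‖lam (k+1) • v (k+1)‖ ≤ σ * ‖ztil (k+1) - w k‖ + ‖ztil (k+1) - w k‖ := by
      have he : lam (k+1) • v (k+1)
          = (lam (k+1) • v (k+1) + ztil (k+1) - w k) - (ztil (k+1) - w k) := by abel
      rw [he]
      exact (norm_sub_le _ _).trans (add_le_add h2 le_rfl)
    have h4 : ‖lam (k+1) • v (k+1)‖ = lam (k+1) * ‖v (k+1)‖ := by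
      rw [norm_smul, Real.norm_eq_abs, abs_of_pos hlamk]
    rw [← h4]; linarith
  have hv0 : Tendsto (fun k => ‖v k‖) atTop (𝓝 0) := by
    rw [← Filter.tendsto_add_atTop_iff_nat 1]
    apply squeeze_zero (fun k => norm_nonneg _)
      (g := fun k => (1 + σ) / lamlb * ‖ztil (k+1) - w k‖)
    · intro k
      have hk1 : 1 ≤ k + 1 := Nat.le_add_left 1 k
      have h5 : lamlb * ‖v (k+1)‖ ≤ (1 + σ) * ‖ztil (k+1) - w k‖ :=
        le_trans (mul_le_mul_of_nonneg_right (hlam2 (k+1) hk1) (norm_nonneg _)) (hvb k)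
      rw [div_mul_eq_mul_div, le_div_iff₀ hlb]
      nlinarith [h5]
    · have := hρ0.const_mul ((1 + σ) / lamlb)
      simpa using this
  have hε0 : Tendsto (fun k => ε k) atTop (𝓝 0) := by
    rw [← Filter.tendsto_add_atTop_iff_nat 1]
    apply squeeze_zero (fun k => hεnn (k+1) (Nat.le_add_left 1 k))
      (g := fun k => σ ^ 2 / (2 * lamlb) * ‖ztil (k+1) - w k‖ ^ 2)
    · intro k
      have hk1 : 1 ≤ k + 1 := Nat.le_add_left 1 k
      have herrk := herr (k+1) hk1
      simp only [Nat.add_sub_cancel] at herrk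
      have hεk := hεnn (k+1) hk1
      have hlamk := hlam2 (k+1) hk1
      have h1 : 2 * lamlb * ε (k+1) ≤ 2 * lam (k+1) * ε (k+1) := by nlinarith
      have h2 : 2 * lam (k+1) * ε (k+1) ≤ σ ^ 2 * ‖ztil (k+1) - w k‖ ^ 2 := by
        nlinarith [sq_nonneg ‖lam (k+1) • v (k+1) + ztil (k+1) - w k‖]
      rw [div_mul_eq_mul_div, le_div_iff₀ (by linarith)]
      nlinarith
    · have := hr0.const_mul (σ ^ 2 / (2 * lamlb))
      simpa using this
  have hzt0 : Tendsto (fun k => ‖ztil k - z k‖) atTop (𝓝 0) := by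
    rw [← Filter.tendsto_add_atTop_iff_nat 1]
    apply squeeze_zero (fun k => norm_nonneg _)
      (g := fun k => (2 + σ) * ‖ztil (k+1) - w k‖)
    · intro k
      have hk1 : 1 ≤ k + 1 := Nat.le_add_left 1 k
      have hzk := hz (k+1) hk1
      simp only [Nat.add_sub_cancel] at hzk
      have he : ztil (k+1) - z (k+1) = (ztil (k+1) - w k) + (τ * lam (k+1)) • v (k+1) := by
        rw [hzk]; abel
      have h1 : ‖ztil (k+1) - z (k+1)‖
          ≤ ‖ztil (k+1) - w k‖ + ‖(τ * lam (k+1)) • v (k+1)‖ := by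
        rw [he]; exact norm_add_le _ _
      have h2 : ‖(τ * lam (k+1)) • v (k+1)‖ = τ * lam (k+1) * ‖v (k+1)‖ := by
        rw [norm_smul, Real.norm_eq_abs,
          abs_of_pos (mul_pos hτ0 (hlam (k+1) hk1))]
      have h3 : τ * lam (k+1) * ‖v (k+1)‖ ≤ lam (k+1) * ‖v (k+1)‖ := by
        nlinarith [mul_nonneg (hlam (k+1) hk1).le (norm_nonneg (v (k+1)))]
      have h4 := hvb k
      rw [h2] at h1
      nlinarith [norm_nonneg (ztil (k+1) - w k)]
    · have := hρ0.const_mul (2 + σ)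
      simpa using this
  -- existence of the limit of distances to any zero of T
  have limexists : ∀ p : H, (0:H) ∈ T p →
      ∃ L, Tendsto (fun k => ‖z k - p‖ ^ 2) atTop (𝓝 L) := fun p hp =>
    (fejer_aux T α σ τ hα0 hα1 hσ0 hσ1 hτ0 hτ1 z w ztil v ε lam αs hαs hw hlam hεnn hin
      herr hz hsum p hp).1
  -- every subsequential weak cluster point is a zero of T
  have subcluster : ∀ K : ℕ → ℕ, Tendsto K atTop atTop →
      ∃ q : H, (0:H) ∈ T q ∧ ∃ φ : ℕ → ℕ, StrictMono φ ∧
        ∀ y, Tendsto (fun n => ⟪z (K (φ n)), y⟫) atTop (𝓝 ⟪q, y⟫) := by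
    intro K hK
    obtain ⟨q, φ, hφ, hweak⟩ := exists_weak_subseq (fun n => z (K n)) Cz (fun n => hbz _)
    have hKφ : Tendsto (fun n => K (φ n)) atTop atTop := hK.comp hφ.tendsto_atTop
    refine ⟨q, ?_, φ, hφ, hweak⟩
    -- show 0 ∈ T q using maximal monotonicity
    have hcase : ∀ x' u' : H, u' ∈ T x' → 0 ≤ ⟪q - x', (0:H) - u'⟫ := by
      intro x' u' hu'
      have hK1 : ∀ᶠ n in atTop, 1 ≤ K (φ n) := hKφ.eventually_ge_atTop 1
      have hf : ∀ᶠ n in atTop,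
          -ε (K (φ n)) ≤ ⟪ztil (K (φ n)) - x', v (K (φ n)) - u'⟫ := by
        filter_upwards [hK1] with n hn
        exact hin (K (φ n)) hn x' u' hu'
      have hεK : Tendsto (fun n => -ε (K (φ n))) atTop (𝓝 0) := by
        have := (hε0.comp hKφ).neg
        simpa using this
      have t1 : Tendsto (fun n => ⟪ztil (K (φ n)) - z (K (φ n)), v (K (φ n))⟫) atTop
          (𝓝 0) := by
        apply squeeze_zero_norm
          (a := fun n => ‖ztil (K (φ n)) - z (K (φ n))‖ * ‖v (K (φ n))‖)
        · intro n
          rw [Real.norm_eq_abs]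
          exact abs_real_inner_le_norm _ _
        · have := (hzt0.comp hKφ).mul (hv0.comp hKφ)
          simpa using this
      have t2 : Tendsto (fun n => ⟪z (K (φ n)) - x', v (K (φ n))⟫) atTop (𝓝 0) := by
        apply squeeze_zero_norm (a := fun n => (Cz + ‖x'‖) * ‖v (K (φ n))‖)
        · intro n
          rw [Real.norm_eq_abs]
          refine (abs_real_inner_le_norm _ _).trans ?_
          apply mul_le_mul_of_nonneg_right _ (norm_nonneg _)
          exact (norm_sub_le _ _).trans (add_le_add (hbz _) le_rfl)
        · have := (hv0.comp hKφ).const_mul (Cz + ‖x'‖)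
          simpa using this
      have t3 : Tendsto (fun n => ⟪ztil (K (φ n)) - z (K (φ n)), u'⟫) atTop (𝓝 0) := by
        apply squeeze_zero_norm
          (a := fun n => ‖ztil (K (φ n)) - z (K (φ n))‖ * ‖u'‖)
        · intro n
          rw [Real.norm_eq_abs]
          exact abs_real_inner_le_norm _ _
        · have := (hzt0.comp hKφ).mul_const ‖u'‖
          simpa using this
      have t4 : Tendsto (fun n => ⟪z (K (φ n)), u'⟫) atTop (𝓝 ⟪q, u'⟫) := hweak u'
      have hlim : Tendsto (fun n => ⟪ztil (K (φ n)) - x', v (K (φ n)) - u'⟫) atTop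
          (𝓝 ⟪q - x', (0:H) - u'⟫) := by
        have hcomb := ((t1.add t2).sub t3).sub (t4.sub (tendsto_const_nhds : Tendsto (fun _ : ℕ => ⟪x', u'⟫) atTop (𝓝 ⟪x', u'⟫)))
        have hval : ⟪q - x', (0:H) - u'⟫ = 0 + 0 - 0 - (⟪q, u'⟫ - ⟪x', u'⟫) := by
          simp only [inner_sub_left, inner_sub_right, inner_zero_left, inner_zero_right]
          ring
        rw [hval]
        apply hcomb.congr
        intro n
        simp only [inner_sub_left, inner_sub_right]
        ring
      exact le_of_tendsto_of_tendsto hεK hlim hf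
    set S : H → Set H := fun x => T x ∪ {u | x = q ∧ u = 0} with hS
    have hmono : IsMonotoneOp S := by
      intro x x' uu uu' hu hu'
      rcases hu with hu | ⟨hxq, huz⟩ <;> rcases hu' with hu' | ⟨hxq', huz'⟩
      · exact hT.1 hu hu'
      · rw [hxq', huz']
        have h1 := hcase x uu hu
        have h2 : ⟪x - q, uu - 0⟫ = ⟪q - x, (0:H) - uu⟫ := by
          rw [← inner_neg_neg]
          congr 1 <;> abel
        rw [h2]; exact h1
      · rw [hxq, huz]
        exact hcase x' uu' hu'
      · rw [hxq, hxq', huz, huz']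
        simp
    have hsubT : ∀ x, T x ⊆ S x := fun x => Set.subset_union_left
    have := hT.2 S hmono hsubT q
    exact this (Or.inr ⟨rfl, rfl⟩)
  -- the weak limit candidate
  obtain ⟨zinf, hzinfT, φ0, hφ0, hzinfw⟩ := subcluster id tendsto_id
  refine ⟨zinf, hzinfT, ?_⟩
  intro y
  apply tendsto_of_subseq_tendsto
  intro ns hns
  obtain ⟨q, hqT, φ1, hφ1, hqw⟩ := subcluster ns hns
  -- Opial-type uniqueness: q = zinf
  obtain ⟨Lq, hLq⟩ := limexists q hqT
  obtain ⟨Li, hLi⟩ := limexists zinf hzinfT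
  have hfull : Tendsto (fun k => ⟪z k, q - zinf⟫) atTop
      (𝓝 ((‖q‖ ^ 2 - ‖zinf‖ ^ 2 - (Lq - Li)) / 2)) := by
    have h1 : Tendsto (fun k => (‖q‖ ^ 2 - ‖zinf‖ ^ 2
        - (‖z k - q‖ ^ 2 - ‖z k - zinf‖ ^ 2)) / 2) atTop
        (𝓝 ((‖q‖ ^ 2 - ‖zinf‖ ^ 2 - (Lq - Li)) / 2)) :=
      (tendsto_const_nhds.sub (hLq.sub hLi)).div_const 2
    apply h1.congr
    intro k
    rw [norm_sub_sq_real, norm_sub_sq_real, inner_sub_right]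
    ring
  have hint1 : ⟪zinf, q - zinf⟫ = (‖q‖ ^ 2 - ‖zinf‖ ^ 2 - (Lq - Li)) / 2 := by
    have hc : Tendsto (fun n => ⟪z (id (φ0 n)), q - zinf⟫) atTop
        (𝓝 ((‖q‖ ^ 2 - ‖zinf‖ ^ 2 - (Lq - Li)) / 2)) :=
      hfull.comp (tendsto_id.comp hφ0.tendsto_atTop)
    exact tendsto_nhds_unique (hzinfw (q - zinf)) hc
  have hint2 : ⟪q, q - zinf⟫ = (‖q‖ ^ 2 - ‖zinf‖ ^ 2 - (Lq - Li)) / 2 := by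
    have hc : Tendsto (fun n => ⟪z (ns (φ1 n)), q - zinf⟫) atTop
        (𝓝 ((‖q‖ ^ 2 - ‖zinf‖ ^ 2 - (Lq - Li)) / 2)) :=
      hfull.comp (hns.comp hφ1.tendsto_atTop)
    exact tendsto_nhds_unique (hqw (q - zinf)) hc
  have hqz : q = zinf := by
    have h3 : ⟪q - zinf, q - zinf⟫ = (0:ℝ) := by
      rw [inner_sub_left, hint1, hint2]; ring
    have h4 : q - zinf = 0 := inner_self_eq_zero.mp h3
    exact sub_eq_zero.mp h4
  exact ⟨φ1, hqz ▸ hqw y⟩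
end

section
/- Let {z_k}, {λ_k}, {α_k} be generated by Algorithm 1 (inertial under-relaxed HPE) for a maximal monotone operator T on a real Hilbert space H with T⁻¹(0) nonempty, and assume Assumption (A) holds. Let η := 2/((1+σ)τ) − 1 and q(t) := (η−1)t² − (1+2η)t + η. Then q(α) > 0; for every z* with 0 ∈ T(z*) and every k ≥ 1, Σ_{j=1}^k ‖z_j − z_{j−1}‖² ≤ 2‖z₀ − z*‖² / ((1−α) q(α)); and if moreover λ_k ≥ λ̲ > 0 for all k ≥ 1, then {z_k} converges weakly to a point z with 0 ∈ T(z). -/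
open Filter Finset Topology
open scoped RealInnerProductSpace

theorem norm_exp_id' {H : Type*} [NormedAddCommGroup H] [InnerProductSpace ℝ H] (x y : H) (a : ℝ) :
    ‖x + a • (x - y)‖ ^ 2
      = ‖x‖ ^ 2 + a * (‖x‖ ^ 2 - ‖y‖ ^ 2) + a * (1 + a) * ‖x - y‖ ^ 2 := by
  have h1 := norm_add_sq_real x (a • (x - y))
  have h2 : ‖a • (x - y)‖ ^ 2 = a ^ 2 * ‖x - y‖ ^ 2 := by
    rw [norm_smul, Real.norm_eq_abs, mul_pow, sq_abs]
  have h3 : (inner ℝ x (a • (x - y)) : ℝ) = a * (‖x‖ ^ 2 - inner ℝ x y) := by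
    rw [real_inner_smul_right, inner_sub_right, real_inner_self_eq_norm_sq]
  have h4 := norm_sub_sq_real x y
  rw [h1, h2, h3]
  linear_combination (-a) * h4

set_option maxHeartbeats 1000000 in
theorem step_ineq' {H : Type*} [NormedAddCommGroup H] [InnerProductSpace ℝ H]
    (σ τ lam ε : ℝ) (hσ0 : 0 ≤ σ) (hσ1 : σ < 1) (hτ0 : 0 < τ) (hτ1 : τ ≤ 1)
    (hlam : 0 < lam) (hεnn : 0 ≤ ε)
    (W Zt V Z zs : H)
    (hZ : Z = W - (τ * lam) • V)
    (e1 : ⟪Zt - zs, V⟫ ≥ -ε)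
    (herr : ‖lam • V + Zt - W‖ ^ 2 + 2 * lam * ε ≤ σ ^ 2 * ‖Zt - W‖ ^ 2)
    (η : ℝ) (hη : η = 2 / ((1 + σ) * τ) - 1) :
    ‖Z - zs‖ ^ 2 ≤ ‖W - zs‖ ^ 2 - η * ‖Z - W‖ ^ 2 := by
  have hσ1' : (0:ℝ) < 1 + σ := by linarith
  have hS : (0:ℝ) ≤ ‖Zt - W‖ := norm_nonneg _
  have hV : (0:ℝ) ≤ ‖V‖ := norm_nonneg _
  have hX : (0:ℝ) ≤ lam * ‖V‖ := mul_nonneg hlam.le hV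
  have e2 : lam ^ 2 * ‖V‖ ^ 2 + 2 * lam * ⟪V, Zt - W⟫ + ‖Zt - W‖ ^ 2 + 2 * lam * ε
      ≤ σ ^ 2 * ‖Zt - W‖ ^ 2 := by
    have hexp : ‖lam • V + Zt - W‖ ^ 2
        = lam ^ 2 * ‖V‖ ^ 2 + 2 * lam * ⟪V, Zt - W⟫ + ‖Zt - W‖ ^ 2 := by
      rw [add_sub_assoc, norm_add_sq_real, norm_smul, Real.norm_eq_abs,
        real_inner_smul_left, mul_pow, sq_abs]
      ring
    rw [hexp] at herr
    linarith
  have hCS : -(‖V‖ * ‖Zt - W‖) ≤ ⟪V, Zt - W⟫ :=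
    (abs_le.1 (abs_real_inner_le_norm V (Zt - W))).1
  have hCS' : 2 * lam * (-(‖V‖ * ‖Zt - W‖)) ≤ 2 * lam * ⟪V, Zt - W⟫ :=
    mul_le_mul_of_nonneg_left hCS (by positivity)
  have hlamε : (0:ℝ) ≤ 2 * lam * ε := by positivity
  have t1 : (lam * ‖V‖ - ‖Zt - W‖) ^ 2 ≤ (σ * ‖Zt - W‖) ^ 2 := by nlinarith [e2, hCS', hlamε]
  have h5 : lam * ‖V‖ ≤ (1 + σ) * ‖Zt - W‖ := by
    nlinarith [t1, mul_nonneg hσ0 hS]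
  have A3 : lam ^ 2 * ‖V‖ ^ 2 ≤ (1 + σ) ^ 2 * ‖Zt - W‖ ^ 2 := by
    have := mul_self_le_mul_self hX h5
    nlinarith [this]
  have A1 : 2 * lam * ⟪V, W - Zt⟫
      ≥ lam ^ 2 * ‖V‖ ^ 2 + (1 - σ ^ 2) * ‖Zt - W‖ ^ 2 + 2 * lam * ε := by
    have hflip : (⟪V, W - Zt⟫ : ℝ) = -⟪V, Zt - W⟫ := by
      rw [← inner_neg_right]; congr 1; abel
    rw [hflip]; linarith
  have A2 : 2 * lam * (⟪V, Zt - zs⟫ : ℝ) ≥ 2 * lam * (-ε) := by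
    apply mul_le_mul_of_nonneg_left _ (by positivity)
    rwa [real_inner_comm] at e1
  have A5 : (⟪V, W - zs⟫ : ℝ) = ⟪V, W - Zt⟫ + ⟪V, Zt - zs⟫ := by
    rw [← inner_add_right]; congr 1; abel
  have A4 : ‖Z - zs‖ ^ 2
      = ‖W - zs‖ ^ 2 - 2 * (τ * lam) * ⟪V, W - zs⟫ + (τ * lam) ^ 2 * ‖V‖ ^ 2 := by
    have hzz : Z - zs = (W - zs) - (τ * lam) • V := by rw [hZ]; abel
    rw [hzz, norm_sub_sq_real, norm_smul, Real.norm_eq_abs, real_inner_smul_right, mul_pow,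
      sq_abs, real_inner_comm]
    ring
  have A6 : ‖Z - W‖ ^ 2 = (τ * lam) ^ 2 * ‖V‖ ^ 2 := by
    have hzw : Z - W = -((τ * lam) • V) := by rw [hZ]; abel
    rw [hzw, norm_neg, norm_smul, Real.norm_eq_abs, mul_pow, sq_abs]
  have A3' : (1 - σ) / (1 + σ) * (lam ^ 2 * ‖V‖ ^ 2) ≤ (1 - σ ^ 2) * ‖Zt - W‖ ^ 2 := by
    rw [div_mul_eq_mul_div, div_le_iff₀ hσ1']
    nlinarith [A3]
  have h1 : 2 * lam * ⟪V, W - zs⟫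
      ≥ lam ^ 2 * ‖V‖ ^ 2 + (1 - σ ^ 2) * ‖Zt - W‖ ^ 2 := by
    rw [A5, mul_add]
    linarith [A1, A2]
  have h2 : 2 * lam * ⟪V, W - zs⟫ ≥ 2 / (1 + σ) * (lam ^ 2 * ‖V‖ ^ 2) := by
    have h3 : 2 / (1 + σ) * (lam ^ 2 * ‖V‖ ^ 2)
        = lam ^ 2 * ‖V‖ ^ 2 + (1 - σ) / (1 + σ) * (lam ^ 2 * ‖V‖ ^ 2) := by
      field_simp; ring
    rw [h3]; linarith [A3']
  have key : 2 * (τ * lam) * ⟪V, W - zs⟫ ≥ τ * (2 / (1 + σ)) * (lam ^ 2 * ‖V‖ ^ 2) := by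
    calc 2 * (τ * lam) * ⟪V, W - zs⟫ = τ * (2 * lam * ⟪V, W - zs⟫) := by ring
    _ ≥ τ * (2 / (1 + σ) * (lam ^ 2 * ‖V‖ ^ 2)) := mul_le_mul_of_nonneg_left h2 hτ0.le
    _ = τ * (2 / (1 + σ)) * (lam ^ 2 * ‖V‖ ^ 2) := by ring
  have hηt : η * τ ^ 2 = 2 * τ / (1 + σ) - τ ^ 2 := by
    rw [hη]; field_simp
  have hfin : τ * (2 / (1 + σ)) * (lam ^ 2 * ‖V‖ ^ 2)
      = (1 + η) * ((τ * lam) ^ 2 * ‖V‖ ^ 2) := by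
    linear_combination (-(lam ^ 2 * ‖V‖ ^ 2)) * hηt
  rw [A4, A6]
  linarith [key, hfin.symm.le, hfin.le]

theorem cross_ineq' {H : Type*} [NormedAddCommGroup H] [InnerProductSpace ℝ H]
    (u vv : H) (a c : ℝ) (hc0 : 0 ≤ c) (hca : c ≤ a) (ha1 : a ≤ 1) :
    (1 - a) * ‖u‖ ^ 2 - a * (1 - a) * ‖vv‖ ^ 2 ≤ ‖u - c • vv‖ ^ 2 := by
  have hexp : ‖u - c • vv‖ ^ 2 = ‖u‖ ^ 2 - 2 * c * ⟪u, vv⟫ + c ^ 2 * ‖vv‖ ^ 2 := by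
    rw [norm_sub_sq_real, real_inner_smul_right, norm_smul, Real.norm_eq_abs, mul_pow, sq_abs]
    ring
  rcases eq_or_lt_of_le (le_trans hc0 hca) with ha | ha
  · have hc : c = 0 := le_antisymm (ha ▸ hca) hc0
    rw [hexp, hc, ← ha]
    nlinarith [sq_nonneg ‖vv‖, sq_nonneg ‖u‖]
  · have h2 : 0 ≤ a ^ 2 * ‖u‖ ^ 2 - 2 * (a * c) * ⟪u, vv⟫ + c ^ 2 * ‖vv‖ ^ 2 := by
      have hh := norm_sub_sq_real (a • u) (c • vv)
      have hi : (inner ℝ (a • u) (c • vv) : ℝ) = (a * c) * ⟪u, vv⟫ := by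
        rw [real_inner_smul_left, real_inner_smul_right]; ring
      rw [hi, norm_smul, norm_smul, Real.norm_eq_abs, Real.norm_eq_abs, mul_pow, mul_pow,
        sq_abs, sq_abs] at hh
      nlinarith [sq_nonneg ‖a • u - c • vv‖, hh]
    have key : 0 ≤ (1 - a) * ((a - c) * (a + c)) * ‖vv‖ ^ 2 := by
      apply mul_nonneg (mul_nonneg (by linarith) _) (sq_nonneg _)
      exact mul_nonneg (by linarith) (by linarith)
    rw [hexp]
    nlinarith [h2, key, ha]

set_option maxHeartbeats 2000000 in
/-- second weak-convergence result for Algorithm 1 under Assumption (A).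
Indexing convention: `z k` is the paper's `z_k` for `k ≥ 0`, the paper's `z_{−1} = z₀` being
encoded by truncated subtraction; weak convergence is expressed via inner products. -/
theorem stmt11
    {H : Type*} [NormedAddCommGroup H] [InnerProductSpace ℝ H] [CompleteSpace H]
    (T : H → Set H) (hT : IsMaximalMonotoneOp T)
    (α σ τ : ℝ) (hα0 : 0 ≤ α) (hα1 : α < 1) (hσ0 : 0 ≤ σ) (hσ1 : σ < 1)
    (hτ0 : 0 < τ) (hτ1 : τ ≤ 1)
    (z w ztil v : ℕ → H) (ε lam αs : ℕ → ℝ)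
    (hαs : ∀ k, 0 ≤ αs k ∧ αs k ≤ α)
    (hmono : ∀ k, αs k ≤ αs (k + 1))
    (hw : ∀ k, w k = z k + αs k • (z k - z (k - 1)))
    (hlam : ∀ k, 1 ≤ k → 0 < lam k)
    (hεnn : ∀ k, 1 ≤ k → 0 ≤ ε k)
    (hin : ∀ k, 1 ≤ k → v k ∈ enl T (ε k) (ztil k))
    (herr : ∀ k, 1 ≤ k →
      ‖lam k • v k + ztil k - w (k - 1)‖ ^ 2 + 2 * lam k * ε k ≤
        σ ^ 2 * ‖ztil k - w (k - 1)‖ ^ 2)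
    (hz : ∀ k, 1 ≤ k → z k = w (k - 1) - (τ * lam k) • v k)
    -- Assumption (A):
    (β β' : ℝ) (hαβ : α < β) (hβ1 : β < 1)
    (hβ' : β' = max β (2 * (1 - σ) / (3 - σ + Real.sqrt (9 + 2 * σ - 7 * σ ^ 2))))
    (hτA : τ = 2 * (β' - 1) ^ 2 / ((1 + σ) * (2 * (β' - 1) ^ 2 + 3 * β' - 1)))
    (η : ℝ) (hη : η = 2 / ((1 + σ) * τ) - 1)
    (q : ℝ → ℝ) (hq : ∀ t, q t = (η - 1) * t ^ 2 - (1 + 2 * η) * t + η)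
    (hzero : ∃ zs : H, (0 : H) ∈ T zs) :
    0 < q α ∧
    (∀ zs : H, (0 : H) ∈ T zs → ∀ k, 1 ≤ k →
      ∑ j ∈ Finset.Icc 1 k, ‖z j - z (j - 1)‖ ^ 2 ≤
        2 * ‖z 0 - zs‖ ^ 2 / ((1 - α) * q α)) ∧
    (∀ lamlb : ℝ, 0 < lamlb → (∀ k, 1 ≤ k → lamlb ≤ lam k) →
      ∃ zinf : H, (0 : H) ∈ T zinf ∧
        ∀ y : H, Tendsto (fun k => ⟪z k, y⟫) atTop (𝓝 ⟪zinf, y⟫)) := by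
  -- scalar preamble
  have hσ1' : (0:ℝ) < 1 + σ := by linarith
  have h1α : (0:ℝ) < 1 - α := by linarith
  have hηpos : 0 < η := by
    rw [hη]
    have h2 : (1 + σ) * τ < 2 := by nlinarith
    have h3 : 0 < (1 + σ) * τ := by positivity
    have : 1 < 2 / ((1 + σ) * τ) := (one_lt_div h3).2 h2
    linarith
  have hsq : 0 ≤ Real.sqrt (9 + 2 * σ - 7 * σ ^ 2) := Real.sqrt_nonneg _
  have hβ'lt1 : β' < 1 := by
    rw [hβ']
    apply max_lt hβ1
    rw [div_lt_one (by linarith)]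
    linarith
  have hβ'α : α < β' := lt_of_lt_of_le hαβ (hβ' ▸ le_max_left _ _)
  have hβ'ne : β' - 1 ≠ 0 := by intro h; nlinarith
  have hden2 : 0 < 2 * (β' - 1) ^ 2 + 3 * β' - 1 := by nlinarith [sq_nonneg (β' - 1/4)]
  have hηf : η = (β' ^ 2 + β') / (β' - 1) ^ 2 := by
    rw [hη, hτA]
    field_simp
    ring
  have hqα : q α = η * (1 - α) ^ 2 - α * (1 + α) := by rw [hq]; ring
  have hqpos : 0 < q α := by
    rw [hqα, hηf]
    rw [sub_pos, div_mul_eq_mul_div, lt_div_iff₀ (by positivity)]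
    have h1 : 0 < β' - α := by linarith
    have h2 : 0 < 1 + α + β' - 3 * α * β' := by nlinarith
    nlinarith [mul_pos h1 h2]
  set B : ℝ := α * (1 + α) + η * α * (1 - α) with hB
  have hB0 : 0 ≤ B := by
    have h1 : 0 ≤ α * (1 + α) := mul_nonneg hα0 (by linarith)
    have h2 : 0 ≤ η * α * (1 - α) := mul_nonneg (mul_nonneg hηpos.le hα0) (by linarith)
    rw [hB]; linarith
  have hq' : η * (1 - α) - B = q α := by rw [hqα, hB]; ring
  -- the master estimate, for an arbitrary zero zs of T
  have main : ∀ zs : H, (0 : H) ∈ T zs →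
      (∀ k, ‖z k - zs‖ ^ 2 ≤ ‖z 0 - zs‖ ^ 2 / (1 - α)) ∧
      (∀ k, ∑ j ∈ Finset.Icc 1 k, ‖z j - z (j - 1)‖ ^ 2 ≤
        2 * ‖z 0 - zs‖ ^ 2 / ((1 - α) * q α)) ∧
      (∃ l : ℝ, Tendsto (fun k => ‖z k - zs‖ ^ 2) atTop (𝓝 l)) := by
    intro zs hzs
    have lemA : ∀ j : ℕ,
        ‖z (j + 1) - zs‖ ^ 2 ≤ ‖w j - zs‖ ^ 2 - η * ‖z (j + 1) - w j‖ ^ 2 := by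
      intro j
      have h1 := hz (j + 1) (by omega)
      have h2 := herr (j + 1) (by omega)
      have h3 := hin (j + 1) (by omega) zs 0 hzs
      simp only [Nat.add_sub_cancel] at h1 h2
      rw [sub_zero] at h3
      exact step_ineq' σ τ (lam (j + 1)) (ε (j + 1)) hσ0 hσ1 hτ0 hτ1
        (hlam _ (by omega)) (hεnn _ (by omega)) (w j) (ztil (j + 1)) (v (j + 1))
        (z (j + 1)) zs h1 h3 h2 η hη
    have lemB : ∀ j : ℕ, ‖w j - zs‖ ^ 2
        = ‖z j - zs‖ ^ 2 + αs j * (‖z j - zs‖ ^ 2 - ‖z (j - 1) - zs‖ ^ 2)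
          + αs j * (1 + αs j) * ‖z j - z (j - 1)‖ ^ 2 := by
      intro j
      have hr : w j - zs = (z j - zs) + αs j • ((z j - zs) - (z (j - 1) - zs)) := by
        rw [hw j]
        have : (z j - zs) - (z (j - 1) - zs) = z j - z (j - 1) := by abel
        rw [this]
        abel
      rw [hr, norm_exp_id']
      have : (z j - zs) - (z (j - 1) - zs) = z j - z (j - 1) := by abel
      rw [this]
    have lemC : ∀ j : ℕ,
        (1 - α) * ‖z (j + 1) - z j‖ ^ 2 - α * (1 - α) * ‖z j - z (j - 1)‖ ^ 2
          ≤ ‖z (j + 1) - w j‖ ^ 2 := by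
      intro j
      have hr : z (j + 1) - w j = (z (j + 1) - z j) - αs j • (z j - z (j - 1)) := by
        rw [hw j]; abel
      rw [hr]
      exact cross_ineq' _ _ α (αs j) (hαs j).1 (hαs j).2 hα1.le
    have I2 : ∀ j : ℕ, ‖z (j + 1) - zs‖ ^ 2
        ≤ ‖z j - zs‖ ^ 2 + αs j * (‖z j - zs‖ ^ 2 - ‖z (j - 1) - zs‖ ^ 2)
          + B * ‖z j - z (j - 1)‖ ^ 2 - η * (1 - α) * ‖z (j + 1) - z j‖ ^ 2 := by
      intro j
      have h1 := lemA j
      rw [lemB j] at h1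
      have hC := mul_le_mul_of_nonneg_left (lemC j) hηpos.le
      have hcoef : αs j * (1 + αs j) * ‖z j - z (j - 1)‖ ^ 2
          ≤ α * (1 + α) * ‖z j - z (j - 1)‖ ^ 2 := by
        apply mul_le_mul_of_nonneg_right _ (sq_nonneg _)
        nlinarith [(hαs j).1, (hαs j).2, hα0]
      have hηα : 0 ≤ η * α * (1 - α) * ‖z j - z (j - 1)‖ ^ 2 := by
        apply mul_nonneg _ (sq_nonneg _); nlinarith
      rw [hB]
      nlinarith [h1, hC, hcoef, hηα]
    -- the Lyapunov sequence
    set M : ℕ → ℝ := fun k =>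
      ‖z k - zs‖ ^ 2 - αs k * ‖z (k - 1) - zs‖ ^ 2 + B * ‖z k - z (k - 1)‖ ^ 2 with hM
    have I3 : ∀ j : ℕ, M (j + 1) ≤ M j - q α * ‖z (j + 1) - z j‖ ^ 2 := by
      intro j
      have h1 := I2 j
      have h2 : (αs (j + 1) - αs j) * ‖z j - zs‖ ^ 2 ≥ 0 :=
        mul_nonneg (by linarith [hmono j]) (sq_nonneg _)
      simp only [hM, Nat.add_sub_cancel]
      nlinarith [h1, h2, hq']
    have hd0 : ‖z 0 - z (0 - 1)‖ ^ 2 = 0 := by norm_num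
    have hM0 : M 0 ≤ ‖z 0 - zs‖ ^ 2 := by
      simp only [hM]
      rw [hd0]
      nlinarith [(hαs 0).1, sq_nonneg ‖z 0 - zs‖]
    have hMlb : ∀ k, ‖z k - zs‖ ^ 2 - α * ‖z (k - 1) - zs‖ ^ 2 ≤ M k := by
      intro k
      simp only [hM]
      have h1 : αs k * ‖z (k - 1) - zs‖ ^ 2 ≤ α * ‖z (k - 1) - zs‖ ^ 2 :=
        mul_le_mul_of_nonneg_right (hαs k).2 (sq_nonneg _)
      nlinarith [mul_nonneg hB0 (sq_nonneg ‖z k - z (k - 1)‖)]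
    have I4 : ∀ k, M k + q α * ∑ j ∈ Finset.Icc 1 k, ‖z j - z (j - 1)‖ ^ 2 ≤ M 0 := by
      intro k
      induction k with
      | zero => simp
      | succ n ih =>
        rw [Finset.sum_Icc_succ_top (by omega)]
        have h1 := I3 n
        simp only [Nat.add_sub_cancel]
        nlinarith [h1, ih]
    have hMle : ∀ k, M k ≤ M 0 := by
      intro k
      have := I4 k
      have hs : 0 ≤ ∑ j ∈ Finset.Icc 1 k, ‖z j - z (j - 1)‖ ^ 2 :=
        Finset.sum_nonneg fun j _ => sq_nonneg _
      nlinarith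
    have hbd : ∀ k, ‖z k - zs‖ ^ 2 ≤ ‖z 0 - zs‖ ^ 2 / (1 - α) := by
      intro k
      induction k with
      | zero =>
        rw [le_div_iff₀ h1α]
        nlinarith [sq_nonneg ‖z 0 - zs‖]
      | succ n ih =>
        have h1 := hMlb (n + 1)
        simp only [Nat.add_sub_cancel] at h1
        have h2 : M (n + 1) ≤ ‖z 0 - zs‖ ^ 2 := le_trans (hMle (n + 1)) hM0
        have h3 : α * ‖z n - zs‖ ^ 2 ≤ α * (‖z 0 - zs‖ ^ 2 / (1 - α)) :=
          mul_le_mul_of_nonneg_left ih hα0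
        have h4 : α * (‖z 0 - zs‖ ^ 2 / (1 - α)) + ‖z 0 - zs‖ ^ 2
            = ‖z 0 - zs‖ ^ 2 / (1 - α) := by
          field_simp
          ring
        linarith
    refine ⟨hbd, ?_, ?_⟩
    · -- sum bound
      intro k
      have h1 := I4 k
      have h2 := hMlb k
      have h3 : ‖z (k - 1) - zs‖ ^ 2 ≤ ‖z 0 - zs‖ ^ 2 / (1 - α) := hbd (k - 1)
      have h5 : q α * ∑ j ∈ Finset.Icc 1 k, ‖z j - z (j - 1)‖ ^ 2
          ≤ ‖z 0 - zs‖ ^ 2 + α * (‖z 0 - zs‖ ^ 2 / (1 - α)) := by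
        have h6 : α * ‖z (k - 1) - zs‖ ^ 2 ≤ α * (‖z 0 - zs‖ ^ 2 / (1 - α)) :=
          mul_le_mul_of_nonneg_left h3 hα0
        nlinarith [sq_nonneg ‖z k - zs‖, hM0]
      have h7 : ‖z 0 - zs‖ ^ 2 + α * (‖z 0 - zs‖ ^ 2 / (1 - α))
          = ‖z 0 - zs‖ ^ 2 / (1 - α) := by field_simp; ring
      rw [le_div_iff₀ (by positivity)]
      have h8 : 0 ≤ ‖z 0 - zs‖ ^ 2 / (1 - α) := by positivity
      nlinarith [h1, h5]
    · -- existence of the limit of ‖z k - zs‖²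
      set Θ : ℕ → ℝ := fun k =>
        max (‖z k - zs‖ ^ 2 - ‖z (k - 1) - zs‖ ^ 2) 0 with hΘ
      have hΘnn : ∀ k, 0 ≤ Θ k := fun k => le_max_right _ _
      have hΘge : ∀ k, ‖z k - zs‖ ^ 2 - ‖z (k - 1) - zs‖ ^ 2 ≤ Θ k := fun k => le_max_left _ _
      have hΘstep : ∀ j : ℕ, Θ (j + 2) ≤ α * Θ (j + 1) + B * ‖z (j + 1) - z j‖ ^ 2 := by
        intro j
        have h1 := I2 (j + 1)
        simp only [Nat.add_sub_cancel] at h1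
        have hdnn : 0 ≤ η * (1 - α) * ‖z (j + 1 + 1) - z (j + 1)‖ ^ 2 := by positivity
        have h2 : αs (j + 1) * (‖z (j + 1) - zs‖ ^ 2 - ‖z j - zs‖ ^ 2) ≤ α * Θ (j + 1) := by
          have hle : ‖z (j + 1) - zs‖ ^ 2 - ‖z j - zs‖ ^ 2 ≤ Θ (j + 1) := by
            have := hΘge (j + 1); simpa [Nat.add_sub_cancel] using this
          calc αs (j + 1) * (‖z (j + 1) - zs‖ ^ 2 - ‖z j - zs‖ ^ 2)
              ≤ αs (j + 1) * Θ (j + 1) := mul_le_mul_of_nonneg_left hle (hαs _).1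
            _ ≤ α * Θ (j + 1) := mul_le_mul_of_nonneg_right (hαs _).2 (hΘnn _)
        have h3 : ‖z (j + 2) - zs‖ ^ 2 - ‖z (j + 1) - zs‖ ^ 2
            ≤ α * Θ (j + 1) + B * ‖z (j + 1) - z j‖ ^ 2 := by
          have : (j + 1 + 1) = j + 2 := rfl
          rw [this] at h1 hdnn
          linarith
        have h4 : (0:ℝ) ≤ α * Θ (j + 1) + B * ‖z (j + 1) - z j‖ ^ 2 := by
          have := mul_nonneg hα0 (hΘnn (j + 1))
          have := mul_nonneg hB0 (sq_nonneg ‖z (j + 1) - z j‖)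
          linarith
        have h5 : Θ (j + 2) = max (‖z (j + 2) - zs‖ ^ 2 - ‖z (j + 2 - 1) - zs‖ ^ 2) 0 := rfl
        rw [h5]
        have : (j + 2 - 1 : ℕ) = j + 1 := rfl
        rw [this]
        exact max_le h3 h4
      -- partial sums of Θ are bounded
      set D : ℝ := 2 * ‖z 0 - zs‖ ^ 2 / ((1 - α) * q α) with hD
      have hD0 : 0 ≤ D := by positivity
      have hSd : ∀ n, ∑ j ∈ Finset.Icc 1 n, ‖z j - z (j - 1)‖ ^ 2 ≤ D := by
        intro n
        have h1 := I4 n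
        have h2 := hMlb n
        have h3 := hbd (n - 1)
        have h6 : α * ‖z (n - 1) - zs‖ ^ 2 ≤ α * (‖z 0 - zs‖ ^ 2 / (1 - α)) :=
          mul_le_mul_of_nonneg_left h3 hα0
        have h7 : ‖z 0 - zs‖ ^ 2 + α * (‖z 0 - zs‖ ^ 2 / (1 - α))
            = ‖z 0 - zs‖ ^ 2 / (1 - α) := by field_simp; ring
        have h5 : q α * ∑ j ∈ Finset.Icc 1 n, ‖z j - z (j - 1)‖ ^ 2
            ≤ ‖z 0 - zs‖ ^ 2 / (1 - α) := by
          nlinarith [sq_nonneg ‖z n - zs‖, hM0]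
        have hDD : D = (2 * ‖z 0 - zs‖ ^ 2 / (1 - α)) / q α := by
          rw [hD, div_div]
        rw [hDD, le_div_iff₀ hqpos]
        have h9 : ‖z 0 - zs‖ ^ 2 / (1 - α) ≤ 2 * ‖z 0 - zs‖ ^ 2 / (1 - α) := by
          gcongr
          nlinarith [sq_nonneg ‖z 0 - zs‖]
        calc (∑ j ∈ Finset.Icc 1 n, ‖z j - z (j - 1)‖ ^ 2) * q α
            = q α * ∑ j ∈ Finset.Icc 1 n, ‖z j - z (j - 1)‖ ^ 2 := mul_comm _ _
          _ ≤ ‖z 0 - zs‖ ^ 2 / (1 - α) := h5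
          _ ≤ 2 * ‖z 0 - zs‖ ^ 2 / (1 - α) := h9
      have hSrec : ∀ n, ∑ j ∈ Finset.Icc 1 (n + 1), Θ j
          ≤ Θ 1 + α * ∑ j ∈ Finset.Icc 1 n, Θ j
            + B * ∑ j ∈ Finset.Icc 1 n, ‖z j - z (j - 1)‖ ^ 2 := by
        intro n
        induction n with
        | zero => simp
        | succ m ih =>
          rw [show m + 1 + 1 = (m + 1) + 1 from rfl,
            Finset.sum_Icc_succ_top (by omega : 1 ≤ (m + 1) + 1) Θ,
            Finset.sum_Icc_succ_top (by omega : 1 ≤ m + 1) Θ,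
            Finset.sum_Icc_succ_top (by omega : 1 ≤ m + 1) (fun j => ‖z j - z (j - 1)‖ ^ 2)]
          simp only [Nat.add_sub_cancel]
          rw [Finset.sum_Icc_succ_top (by omega : 1 ≤ m + 1) Θ] at ih
          have h1 := hΘstep m
          have h2 : ‖z (m + 1) - z (m + 1 - 1)‖ ^ 2 = ‖z (m + 1) - z m‖ ^ 2 := by
            simp only [Nat.add_sub_cancel]
          have h3 : Θ (m + 1 + 1) = Θ (m + 2) := rfl
          have hαΘ : 0 ≤ α * Θ (m + 1) := mul_nonneg hα0 (hΘnn _)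
          have hBd : 0 ≤ B * ‖z (m + 1) - z m‖ ^ 2 := mul_nonneg hB0 (sq_nonneg _)
          linarith [ih, h1]
      set Dθ : ℝ := (Θ 1 + B * D) / (1 - α) with hDθ
      have hSθbd : ∀ n, ∑ j ∈ Finset.Icc 1 n, Θ j ≤ Dθ := by
        have hnum : 0 ≤ Θ 1 + B * D := by
          have := mul_nonneg hB0 hD0
          linarith [hΘnn 1]
        intro n
        induction n with
        | zero =>
          simp only [show Finset.Icc 1 0 = (∅ : Finset ℕ) from rfl, Finset.sum_empty]
          rw [hDθ]
          positivity
        | succ m ih =>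
          have h1 := hSrec m
          have h2 : ∑ j ∈ Finset.Icc 1 m, Θ j ≤ ∑ j ∈ Finset.Icc 1 (m + 1), Θ j := by
            rw [Finset.sum_Icc_succ_top (by omega : 1 ≤ m + 1) Θ]
            linarith [hΘnn (m + 1)]
          have h3 : B * ∑ j ∈ Finset.Icc 1 m, ‖z j - z (j - 1)‖ ^ 2 ≤ B * D :=
            mul_le_mul_of_nonneg_left (hSd m) hB0
          have h4 : α * ∑ j ∈ Finset.Icc 1 m, Θ j ≤ α * ∑ j ∈ Finset.Icc 1 (m + 1), Θ j :=
            mul_le_mul_of_nonneg_left h2 hα0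
          have h5 : (1 - α) * ∑ j ∈ Finset.Icc 1 (m + 1), Θ j ≤ Θ 1 + B * D := by
            nlinarith [h1, h3, h4]
          rw [hDθ, le_div_iff₀ h1α]
          nlinarith [h5]
      -- convergence of partial sums of Θ and of ‖z k - zs‖²
      have hSθmono : Monotone (fun n => ∑ j ∈ Finset.Icc 1 n, Θ j) := by
        apply monotone_nat_of_le_succ
        intro n
        rw [Finset.sum_Icc_succ_top (by omega : 1 ≤ n + 1) Θ]
        linarith [hΘnn (n + 1)]
      have hSθlim : ∃ Lθ, Tendsto (fun n => ∑ j ∈ Finset.Icc 1 n, Θ j) atTop (𝓝 Lθ) := by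
        refine ⟨_, tendsto_atTop_ciSup hSθmono ⟨Dθ, ?_⟩⟩
        rintro x ⟨n, rfl⟩
        exact hSθbd n
      have hφanti : Antitone (fun n => ‖z n - zs‖ ^ 2 - ∑ j ∈ Finset.Icc 1 n, Θ j) := by
        apply antitone_nat_of_succ_le
        intro n
        rw [Finset.sum_Icc_succ_top (by omega : 1 ≤ n + 1) Θ]
        have h1 : ‖z (n + 1) - zs‖ ^ 2 - ‖z n - zs‖ ^ 2 ≤ Θ (n + 1) := by
          have := hΘge (n + 1)
          simpa [Nat.add_sub_cancel] using this
        linarith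
      have hφlim : ∃ Lφ, Tendsto (fun n => ‖z n - zs‖ ^ 2 - ∑ j ∈ Finset.Icc 1 n, Θ j)
          atTop (𝓝 Lφ) := by
        refine ⟨_, tendsto_atTop_ciInf hφanti ⟨-Dθ, ?_⟩⟩
        rintro x ⟨n, rfl⟩
        have := hSθbd n
        have := sq_nonneg ‖z n - zs‖
        simp only
        nlinarith
      obtain ⟨Lθ, hLθ⟩ := hSθlim
      obtain ⟨Lφ, hLφ⟩ := hφlim
      refine ⟨Lφ + Lθ, ?_⟩
      have := hLφ.add hLθ
      apply this.congr
      intro n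
      ring
  -- Part 2 follows from `main`
  refine ⟨hqpos, fun zs hzs k _ => (main zs hzs).2.1 k, ?_⟩
  -- Part 3
  intro lamlb hlamlb hlb
  obtain ⟨zs₀, hzs₀⟩ := hzero
  have hbd0 := (main zs₀ hzs₀).1
  set M₀ : ℝ := Real.sqrt (‖z 0 - zs₀‖ ^ 2 / (1 - α)) + ‖zs₀‖ with hM₀def
  have hM₀ : ∀ k, ‖z k‖ ≤ M₀ := by
    intro k
    have h1 : ‖z k - zs₀‖ ≤ Real.sqrt (‖z 0 - zs₀‖ ^ 2 / (1 - α)) := by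
      have h2 := Real.sqrt_le_sqrt (hbd0 k)
      rwa [Real.sqrt_sq (norm_nonneg _)] at h2
    calc ‖z k‖ = ‖(z k - zs₀) + zs₀‖ := by rw [sub_add_cancel]
    _ ≤ ‖z k - zs₀‖ + ‖zs₀‖ := norm_add_le _ _
    _ ≤ M₀ := by rw [hM₀def]; linarith
  have hSum : Summable (fun k => ‖z k - z (k - 1)‖ ^ 2) := by
    apply summable_of_sum_range_le (c := 2 * ‖z 0 - zs₀‖ ^ 2 / ((1 - α) * q α))
      (fun n => sq_nonneg _)
    intro n
    cases n with
    | zero => simp; positivity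
    | succ m =>
      have hrange : Finset.range (m + 1) = insert 0 (Finset.Icc 1 m) := by
        ext j; simp only [Finset.mem_range, Finset.mem_insert, Finset.mem_Icc]; omega
      rw [hrange, Finset.sum_insert (by simp)]
      have h0 : ‖z 0 - z (0 - 1)‖ ^ 2 = 0 := by norm_num
      rw [h0, zero_add]
      exact (main zs₀ hzs₀).2.1 m
  have hd0' : Tendsto (fun k => ‖z k - z (k - 1)‖ ^ 2) atTop (𝓝 0) := hSum.tendsto_atTop_zero
  have hnd : Tendsto (fun k => ‖z k - z (k - 1)‖) atTop (𝓝 0) := by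
    have hcont : Tendsto Real.sqrt (𝓝 0) (𝓝 0) := by
      have := Real.continuous_sqrt.tendsto 0
      simpa using this
    have h2 := hcont.comp hd0'
    apply h2.congr
    intro k
    simp [Function.comp, Real.sqrt_sq (norm_nonneg _)]
  have hnd1 : Tendsto (fun k : ℕ => ‖z (k - 1) - z (k - 1 - 1)‖) atTop (𝓝 0) := by
    have := hnd.comp (tendsto_sub_atTop_nat 1)
    exact this
  have hebound : ∀ k : ℕ,
      ‖z k - w (k - 1)‖ ≤ ‖z k - z (k - 1)‖ + α * ‖z (k - 1) - z (k - 1 - 1)‖ := by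
    intro k
    rw [hw (k - 1)]
    have hr : z k - (z (k - 1) + αs (k - 1) • (z (k - 1) - z (k - 1 - 1)))
        = (z k - z (k - 1)) - αs (k - 1) • (z (k - 1) - z (k - 1 - 1)) := by abel
    rw [hr]
    refine le_trans (norm_sub_le _ _) ?_
    rw [norm_smul, Real.norm_eq_abs, abs_of_nonneg (hαs _).1]
    have := mul_le_mul_of_nonneg_right (hαs (k - 1)).2 (norm_nonneg (z (k - 1) - z (k - 1 - 1)))
    linarith
  have he : Tendsto (fun k => ‖z k - w (k - 1)‖) atTop (𝓝 0) := by
    apply squeeze_zero (fun k => norm_nonneg _) hebound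
    have := hnd.add (hnd1.const_mul α)
    simpa using this
  have he2 : ∀ k, 1 ≤ k → τ * lam k * ‖v k‖ = ‖z k - w (k - 1)‖ := by
    intro k hk
    have h1 := hz k hk
    have hr : z k - w (k - 1) = -((τ * lam k) • v k) := by rw [h1]; abel
    rw [hr, norm_neg, norm_smul, Real.norm_eq_abs,
      abs_of_nonneg (mul_nonneg hτ0.le (hlam k hk).le)]
  have hnv : Tendsto (fun k => ‖v k‖) atTop (𝓝 0) := by
    apply squeeze_zero' (g := fun k => ‖z k - w (k - 1)‖ / (τ * lamlb))
      (Eventually.of_forall fun k => norm_nonneg _) ?_ ?_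
    · filter_upwards [eventually_ge_atTop 1] with k hk
      show ‖v k‖ ≤ ‖z k - w (k - 1)‖ / (τ * lamlb)
      rw [le_div_iff₀ (by positivity)]
      calc ‖v k‖ * (τ * lamlb) ≤ ‖v k‖ * (τ * lam k) := by
            apply mul_le_mul_of_nonneg_left _ (norm_nonneg _)
            exact mul_le_mul_of_nonneg_left (hlb k hk) hτ0.le
      _ = τ * lam k * ‖v k‖ := by ring
      _ = ‖z k - w (k - 1)‖ := he2 k hk
    · simpa using he.div_const (τ * lamlb)
  have hv0 : Tendsto v atTop (𝓝 0) := tendsto_zero_iff_norm_tendsto_zero.2 hnv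
  have hlv : Tendsto (fun k => lam k * ‖v k‖) atTop (𝓝 0) := by
    apply squeeze_zero' (g := fun k => ‖z k - w (k - 1)‖ / τ) ?_ ?_
      (by simpa using he.div_const τ)
    · filter_upwards [eventually_ge_atTop 1] with k hk
      exact mul_nonneg (hlam k hk).le (norm_nonneg _)
    · filter_upwards [eventually_ge_atTop 1] with k hk
      show lam k * ‖v k‖ ≤ ‖z k - w (k - 1)‖ / τ
      rw [le_div_iff₀ hτ0, ← he2 k hk]
      ring_nf
      exact le_refl _
  have hsnn : ∀ k, (0:ℝ) ≤ ‖ztil k - w (k - 1)‖ := fun k => norm_nonneg _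
  have hsb : ∀ k, 1 ≤ k → (1 - σ) * ‖ztil k - w (k - 1)‖ ≤ lam k * ‖v k‖ := by
    intro k hk
    have h2 := herr k hk
    have h3 : 0 ≤ 2 * lam k * ε k :=
      mul_nonneg (mul_nonneg (by norm_num) (hlam k hk).le) (hεnn k hk)
    have hX2 : ‖lam k • v k + ztil k - w (k - 1)‖ ^ 2 ≤ (σ * ‖ztil k - w (k - 1)‖) ^ 2 := by
      nlinarith [h2]
    have hX : ‖lam k • v k + ztil k - w (k - 1)‖ ≤ σ * ‖ztil k - w (k - 1)‖ := by
      nlinarith [hX2, norm_nonneg (lam k • v k + ztil k - w (k - 1)),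
        mul_nonneg hσ0 (hsnn k)]
    have htri : ‖ztil k - w (k - 1)‖
        ≤ ‖lam k • v k + ztil k - w (k - 1)‖ + ‖lam k • v k‖ := by
      have hr : ztil k - w (k - 1) = (lam k • v k + ztil k - w (k - 1)) - lam k • v k := by
        abel
      rw [hr]
      exact norm_sub_le _ _
    have hnsm : ‖lam k • v k‖ = lam k * ‖v k‖ := by
      rw [norm_smul, Real.norm_eq_abs, abs_of_nonneg (hlam k hk).le]
    rw [hnsm] at htri
    linarith
  have hs : Tendsto (fun k => ‖ztil k - w (k - 1)‖) atTop (𝓝 0) := by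
    apply squeeze_zero' (g := fun k => lam k * ‖v k‖ / (1 - σ))
      (Eventually.of_forall hsnn) ?_ ?_
    · filter_upwards [eventually_ge_atTop 1] with k hk
      show ‖ztil k - w (k - 1)‖ ≤ lam k * ‖v k‖ / (1 - σ)
      rw [le_div_iff₀ (by linarith : (0:ℝ) < 1 - σ)]
      linarith [hsb k hk]
    · simpa using hlv.div_const (1 - σ)
  have hε0 : Tendsto ε atTop (𝓝 0) := by
    apply squeeze_zero' (g := fun k => σ ^ 2 * ‖ztil k - w (k - 1)‖ ^ 2 / (2 * lamlb)) ?_ ?_ ?_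
    · filter_upwards [eventually_ge_atTop 1] with k hk
      exact hεnn k hk
    · filter_upwards [eventually_ge_atTop 1] with k hk
      show ε k ≤ σ ^ 2 * ‖ztil k - w (k - 1)‖ ^ 2 / (2 * lamlb)
      rw [le_div_iff₀ (by linarith : (0:ℝ) < 2 * lamlb)]
      have h2 := herr k hk
      have h4 : 2 * lamlb * ε k ≤ 2 * lam k * ε k := by
        apply mul_le_mul_of_nonneg_right _ (hεnn k hk)
        linarith [hlb k hk]
      nlinarith [sq_nonneg ‖lam k • v k + ztil k - w (k - 1)‖]
    · have h5 := ((hs.mul hs).const_mul (σ ^ 2)).div_const (2 * lamlb)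
      have h6 : Tendsto (fun k => σ ^ 2 * ‖ztil k - w (k - 1)‖ ^ 2 / (2 * lamlb))
          atTop (𝓝 (σ ^ 2 * (0 * 0) / (2 * lamlb))) := by
        apply h5.congr
        intro k
        ring
      simpa using h6
  have hztz : Tendsto (fun k => ztil k - z k) atTop (𝓝 0) := by
    rw [tendsto_zero_iff_norm_tendsto_zero]
    apply squeeze_zero (g := fun k => ‖ztil k - w (k - 1)‖ + ‖z k - w (k - 1)‖)
      (fun k => norm_nonneg _) ?_ ?_
    · intro k
      show ‖ztil k - z k‖ ≤ ‖ztil k - w (k - 1)‖ + ‖z k - w (k - 1)‖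
      have hr : ztil k - z k = (ztil k - w (k - 1)) - (z k - w (k - 1)) := by abel
      rw [hr]
      exact norm_sub_le _ _
    · simpa using hs.add he
  have hztn : Tendsto (fun k => ‖ztil k - z k‖) atTop (𝓝 0) := by
    simpa using hztz.norm
  have hzv : Tendsto (fun k => (⟪ztil k, v k⟫ : ℝ)) atTop (𝓝 0) := by
    apply squeeze_zero_norm (a := fun k => (M₀ + ‖ztil k - z k‖) * ‖v k‖) ?_ ?_
    · intro k
      show ‖(⟪ztil k, v k⟫ : ℝ)‖ ≤ (M₀ + ‖ztil k - z k‖) * ‖v k‖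
      rw [Real.norm_eq_abs]
      refine le_trans (abs_real_inner_le_norm _ _) ?_
      apply mul_le_mul_of_nonneg_right _ (norm_nonneg _)
      calc ‖ztil k‖ = ‖z k + (ztil k - z k)‖ := by congr 1; abel
      _ ≤ ‖z k‖ + ‖ztil k - z k‖ := norm_add_le _ _
      _ ≤ M₀ + ‖ztil k - z k‖ := by linarith [hM₀ k]
    · have h7 : Tendsto (fun k => (M₀ + ‖ztil k - z k‖) * ‖v k‖) atTop (𝓝 ((M₀ + 0) * 0)) :=
        (tendsto_const_nhds.add hztn).mul hnv
      simpa using h7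
  -- limits along ultrafilters
  have hUlim : ∀ 𝒱 : Ultrafilter ℕ, (𝒱 : Filter ℕ) ≤ atTop →
      ∃ p : H, (0 : H) ∈ T p ∧
        ∀ y : H, Tendsto (fun k => (⟪z k, y⟫ : ℝ)) (𝒱 : Filter ℕ) (𝓝 ⟪p, y⟫) := by
    intro 𝒱 h𝒱
    have habs : ∀ (y : H) (k : ℕ), |(⟪z k, y⟫ : ℝ)| ≤ M₀ * ‖y‖ := by
      intro y k
      refine le_trans (abs_real_inner_le_norm _ _) ?_
      exact mul_le_mul_of_nonneg_right (hM₀ k) (norm_nonneg y)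
    have hex : ∀ y : H, ∃ c : ℝ, Tendsto (fun k => (⟪z k, y⟫ : ℝ)) (𝒱 : Filter ℕ) (𝓝 c) := by
      intro y
      have hle : (Ultrafilter.map (fun k => (⟪z k, y⟫ : ℝ)) 𝒱 : Filter ℝ)
          ≤ 𝓟 (Set.Icc (-(M₀ * ‖y‖)) (M₀ * ‖y‖)) := by
        rw [Ultrafilter.coe_map]
        apply Filter.le_principal_iff.2
        rw [Filter.mem_map]
        exact Filter.univ_mem' (fun k => Set.mem_Icc.2 (abs_le.1 (habs y k)))
      obtain ⟨c, -, hc⟩ := isCompact_Icc.ultrafilter_le_nhds _ hle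
      rw [Ultrafilter.coe_map] at hc
      exact ⟨c, hc⟩
    choose c hc using hex
    have hadd : ∀ y₁ y₂ : H, c (y₁ + y₂) = c y₁ + c y₂ := by
      intro y₁ y₂
      refine tendsto_nhds_unique (hc _) ?_
      have h1 := (hc y₁).add (hc y₂)
      apply h1.congr
      intro k
      rw [← inner_add_right]
    have hsmul : ∀ (r : ℝ) (y : H), c (r • y) = r * c y := by
      intro r y
      refine tendsto_nhds_unique (hc _) ?_
      have h1 := (hc y).const_mul r
      apply h1.congr
      intro k
      rw [real_inner_smul_right]
    have hcb : ∀ y, |c y| ≤ M₀ * ‖y‖ := by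
      intro y
      have h1 : c y ≤ M₀ * ‖y‖ :=
        le_of_tendsto (hc y) (Eventually.of_forall fun k => (abs_le.1 (habs y k)).2)
      have h2 : -(M₀ * ‖y‖) ≤ c y :=
        ge_of_tendsto (hc y) (Eventually.of_forall fun k => (abs_le.1 (habs y k)).1)
      exact abs_le.2 ⟨h2, h1⟩
    let flin : H →ₗ[ℝ] ℝ :=
      { toFun := c
        map_add' := hadd
        map_smul' := hsmul }
    let fc : H →L[ℝ] ℝ := flin.mkContinuous M₀ (fun y => by
      rw [Real.norm_eq_abs]; exact hcb y)
    set p : H := (InnerProductSpace.toDual ℝ H).symm fc with hpdef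
    have hp : ∀ y, (⟪p, y⟫ : ℝ) = c y := by
      intro y
      rw [hpdef]
      exact InnerProductSpace.toDual_symm_apply
    have hincl : ∀ (y u : H), u ∈ T y → 0 ≤ ⟪p - y, (0 : H) - u⟫ := by
      intro y u hu
      have hev : ∀ᶠ k in (𝒱 : Filter ℕ), -ε k ≤ ⟪ztil k - y, v k - u⟫ := by
        apply Filter.Eventually.filter_mono h𝒱
        filter_upwards [eventually_ge_atTop 1] with k hk
        exact hin k hk y u hu
      have t3 : Tendsto (fun k => (⟪ztil k - z k, u⟫ : ℝ)) atTop (𝓝 0) := by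
        apply squeeze_zero_norm (a := fun k => ‖ztil k - z k‖ * ‖u‖) ?_ ?_
        · intro k
          show ‖(⟪ztil k - z k, u⟫ : ℝ)‖ ≤ ‖ztil k - z k‖ * ‖u‖
          rw [Real.norm_eq_abs]
          exact abs_real_inner_le_norm _ _
        · simpa using hztn.mul_const ‖u‖
      have t4 : Tendsto (fun k => (⟪y, v k⟫ : ℝ)) atTop (𝓝 0) := by
        have h8 : Tendsto (fun k => (⟪y, v k⟫ : ℝ)) atTop (𝓝 (⟪y, (0 : H)⟫ : ℝ)) :=
          tendsto_const_nhds.inner hv0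
        simpa using h8
      have hb : Tendsto (fun k => (⟪z k, u⟫ : ℝ) + ⟪ztil k - z k, u⟫) (𝒱 : Filter ℕ)
          (𝓝 (c u + 0)) := (hc u).add (t3.mono_left h𝒱)
      have hg : Tendsto (fun k =>
          (⟪ztil k, v k⟫ : ℝ) - ((⟪z k, u⟫ : ℝ) + ⟪ztil k - z k, u⟫) - ⟪y, v k⟫
            + ⟪y, u⟫ + ε k) (𝒱 : Filter ℕ)
          (𝓝 (0 - (c u + 0) - 0 + ⟪y, u⟫ + 0)) :=
        ((((hzv.mono_left h𝒱).sub hb).sub (t4.mono_left h𝒱)).add_const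
          (⟪y, u⟫ : ℝ)).add (hε0.mono_left h𝒱)
      have hpt : ∀ k, (⟪ztil k - y, v k - u⟫ : ℝ) + ε k
          = (⟪ztil k, v k⟫ : ℝ) - ((⟪z k, u⟫ : ℝ) + ⟪ztil k - z k, u⟫) - ⟪y, v k⟫
            + ⟪y, u⟫ + ε k := by
        intro k
        simp only [inner_sub_left, inner_sub_right]
        ring
      have hlim1 : Tendsto (fun k => (⟪ztil k - y, v k - u⟫ : ℝ) + ε k) (𝒱 : Filter ℕ)
          (𝓝 (0 - (c u + 0) - 0 + ⟪y, u⟫ + 0)) := by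
        apply hg.congr
        intro k
        exact (hpt k).symm
      have h0le : (0:ℝ) ≤ 0 - (c u + 0) - 0 + ⟪y, u⟫ + 0 := by
        apply ge_of_tendsto hlim1
        apply hev.mono
        intro k hk
        linarith
      have h9 : (⟪p - y, (0 : H) - u⟫ : ℝ) = ⟪y, u⟫ - ⟪p, u⟫ := by
        rw [zero_sub, inner_neg_right, inner_sub_left]
        ring
      rw [h9, hp u]
      linarith
    classical
    set S : H → Set H := fun x => if x = p then insert (0 : H) (T x) else T x with hS
    have hmemS : ∀ x u, u ∈ S x ↔ u ∈ T x ∨ (x = p ∧ u = 0) := by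
      intro x u
      by_cases hx : x = p
      · subst hx
        simp [hS]
        tauto
      · simp [hS, hx]
    have hSmono : IsMonotoneOp S := by
      intro x x' u u' hu hu'
      rcases (hmemS x u).1 hu with hu1 | ⟨hx1, hu1⟩
      · rcases (hmemS x' u').1 hu' with hu2 | ⟨hx2, hu2⟩
        · exact hT.1 hu1 hu2
        · subst hx2; subst hu2
          have h10 := hincl x u hu1
          have hr : x - p = -(p - x) := by abel
          have hr2 : u - 0 = -((0 : H) - u) := by abel
          rw [hr, hr2, inner_neg_neg]
          exact h10
      · subst hx1; subst hu1
        rcases (hmemS x' u').1 hu' with hu2 | ⟨hx2, hu2⟩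
        · exact hincl x' u' hu2
        · subst hx2; subst hu2
          simp
    have hsub : ∀ x, T x ⊆ S x := fun x u hu => (hmemS x u).2 (Or.inl hu)
    have h0p : (0 : H) ∈ T p :=
      hT.2 S hSmono hsub p ((hmemS p 0).2 (Or.inr ⟨rfl, rfl⟩))
    exact ⟨p, h0p, fun y => (hp y) ▸ hc y⟩
  -- uniqueness of ultrafilter limit points (Opial)
  have huniq : ∀ (V1 V2 : Ultrafilter ℕ), (V1 : Filter ℕ) ≤ atTop → (V2 : Filter ℕ) ≤ atTop →
      ∀ p₁ p₂ : H, (0 : H) ∈ T p₁ → (0 : H) ∈ T p₂ →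
      (∀ y, Tendsto (fun k => (⟪z k, y⟫ : ℝ)) (V1 : Filter ℕ) (𝓝 ⟪p₁, y⟫)) →
      (∀ y, Tendsto (fun k => (⟪z k, y⟫ : ℝ)) (V2 : Filter ℕ) (𝓝 ⟪p₂, y⟫)) → p₁ = p₂ := by
    intro V1 V2 hV1 hV2 p₁ p₂ h01 h02 hl1 hl2
    obtain ⟨l₁, hL1⟩ := (main p₁ h01).2.2
    obtain ⟨l₂, hL2⟩ := (main p₂ h02).2.2
    have hct : Tendsto (fun k => (⟪z k, p₁ - p₂⟫ : ℝ)) atTop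
        (𝓝 ((‖p₁‖ ^ 2 - ‖p₂‖ ^ 2 - (l₁ - l₂)) / 2)) := by
      have h1 : Tendsto
          (fun k => (‖p₁‖ ^ 2 - ‖p₂‖ ^ 2 - (‖z k - p₁‖ ^ 2 - ‖z k - p₂‖ ^ 2)) / 2) atTop
          (𝓝 ((‖p₁‖ ^ 2 - ‖p₂‖ ^ 2 - (l₁ - l₂)) / 2)) :=
        (tendsto_const_nhds.sub (hL1.sub hL2)).div_const 2
      apply h1.congr
      intro k
      rw [inner_sub_right, norm_sub_sq_real, norm_sub_sq_real]
      ring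
    have e1 : (⟪p₁, p₁ - p₂⟫ : ℝ) = (‖p₁‖ ^ 2 - ‖p₂‖ ^ 2 - (l₁ - l₂)) / 2 :=
      tendsto_nhds_unique (hl1 (p₁ - p₂)) (hct.mono_left hV1)
    have e2 : (⟪p₂, p₁ - p₂⟫ : ℝ) = (‖p₁‖ ^ 2 - ‖p₂‖ ^ 2 - (l₁ - l₂)) / 2 :=
      tendsto_nhds_unique (hl2 (p₁ - p₂)) (hct.mono_left hV2)
    have h3 : (⟪p₁ - p₂, p₁ - p₂⟫ : ℝ) = 0 := by
      rw [inner_sub_left, e1, e2]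
      ring
    have h4 := inner_self_eq_zero.1 h3
    exact sub_eq_zero.1 h4
  obtain ⟨zinf, h0inf, hinfl⟩ := hUlim (Ultrafilter.of atTop) (Ultrafilter.of_le _)
  refine ⟨zinf, h0inf, fun y => ?_⟩
  rw [tendsto_iff_ultrafilter]
  intro V hV
  obtain ⟨p, h0p, hpl⟩ := hUlim V hV
  have hpe : p = zinf :=
    huniq V (Ultrafilter.of atTop) hV (Ultrafilter.of_le _) p zinf h0p h0inf hpl hinfl
  rw [← hpe]
  exact hpl y
end

section
/- Let {z_k}, {w_k}, {z̃_k}, {v_k}, {λ_k}, {α_k} be generated by Algorithm 1 (inertial under-relaxed HPE) for a maximal monotone operator T on a real Hilbert space H with T⁻¹(0) nonempty, and assume Assumption (A) holds. Let η := 2/((1+σ)τ) − 1 and q(t) := (η−1)t² − (1+2η)t + η, and let z* satisfy 0 ∈ T(z*). Then for all k ≥ 1: ‖z_k − z*‖² + Σ_{j=1}^k τ · max{ητ‖λ_j v_j‖², (1−σ²)‖z̃_j − w_{j−1}‖²} ≤ (1 + 2α(1+α)/((1−α)² q(α))) ‖z₀ − z*‖². -/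
set_option maxHeartbeats 1600000

open Filter Finset Topology
open scoped RealInnerProductSpace

private lemma norm_comb {H : Type*} [NormedAddCommGroup H] [InnerProductSpace ℝ H]
    (x y : H) (a : ℝ) :
    ‖x + a • (x - y)‖ ^ 2 =
      (1 + a) * ‖x‖ ^ 2 - a * ‖y‖ ^ 2 + a * (1 + a) * ‖x - y‖ ^ 2 := by
  have h1 : ‖x + a • (x - y)‖ ^ 2
      = ‖x‖ ^ 2 + 2 * (a * ⟪x, x - y⟫) + a ^ 2 * ‖x - y‖ ^ 2 := by
    rw [norm_add_sq_real, real_inner_smul_right, norm_smul, Real.norm_eq_abs, mul_pow, sq_abs]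
  have h2 := norm_sub_sq_real x y
  have h3 : ⟪x, x - y⟫ = ‖x‖ ^ 2 - ⟪x, y⟫ := by
    rw [inner_sub_right, real_inner_self_eq_norm_sq]
  rw [h1, h2, h3]; ring

private lemma sq_tri (a X x y : ℝ) (hX : 0 ≤ X) (hx : 0 ≤ x) (hy : 0 ≤ y)
    (ha0 : 0 ≤ a) (ha1 : a < 1) (hle : X ≤ x + a * y) :
    (1 - a) * X ^ 2 ≤ x ^ 2 + a * (1 - a) * y ^ 2 := by
  have h1 : (1 - a) * X ^ 2 ≤ (1 - a) * (x + a * y) ^ 2 := by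
    have hxy : 0 ≤ x + a * y := by positivity
    nlinarith [mul_le_mul hle hle hX hxy]
  nlinarith [sq_nonneg (x - (1 - a) * y), h1]

private lemma hpe_step {H : Type*} [NormedAddCommGroup H] [InnerProductSpace ℝ H]
    (σ τ η lm ep : ℝ) (W zs zt vv : H)
    (hσ0 : 0 ≤ σ) (hσ1 : σ < 1) (hτ0 : 0 < τ) (hτ1 : τ ≤ 1)
    (hlm : 0 < lm) (hep : 0 ≤ ep)
    (hησ : η * ((1 + σ) * τ) = 2 - (1 + σ) * τ)
    (hmono : ⟪zt - zs, vv⟫ ≥ -ep)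
    (herr : ‖lm • vv + zt - W‖ ^ 2 + 2 * lm * ep ≤ σ ^ 2 * ‖zt - W‖ ^ 2) :
    ‖W - (τ * lm) • vv - zs‖ ^ 2 +
      τ * max (η * τ * ‖lm • vv‖ ^ 2) ((1 - σ ^ 2) * ‖zt - W‖ ^ 2) ≤ ‖W - zs‖ ^ 2 := by
  have h1σ : (0:ℝ) < 1 + σ := by linarith
  have herr' : ‖lm • vv + (zt - W)‖ ^ 2 + 2 * lm * ep ≤ σ ^ 2 * ‖zt - W‖ ^ 2 := by
    have hrw : lm • vv + zt - W = lm • vv + (zt - W) := by abel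
    rwa [hrw] at herr
  have e1 : ‖W - (τ * lm) • vv - zs‖ ^ 2
      = ‖W - zs‖ ^ 2 - 2 * (τ * ⟪W - zs, lm • vv⟫) + τ ^ 2 * ‖lm • vv‖ ^ 2 := by
    have hxy : W - (τ * lm) • vv - zs = (W - zs) - τ • (lm • vv) := by
      rw [smul_smul]; abel
    rw [hxy, norm_sub_sq_real, real_inner_smul_right, norm_smul, Real.norm_eq_abs, mul_pow, sq_abs]
  have e2 : ‖lm • vv + (zt - W)‖ ^ 2
      = ‖lm • vv‖ ^ 2 + 2 * ⟪lm • vv, zt - W⟫ + ‖zt - W‖ ^ 2 := norm_add_sq_real _ _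
  have e3 : ⟪W - zs, lm • vv⟫ = ⟪zt - zs, lm • vv⟫ - ⟪zt - W, lm • vv⟫ := by
    rw [← inner_sub_left]; congr 1; abel
  have e4 : ⟪zt - zs, lm • vv⟫ ≥ -(lm * ep) := by
    rw [real_inner_smul_right]
    nlinarith [mul_nonneg hlm.le (show (0:ℝ) ≤ ⟪zt - zs, vv⟫ + ep by linarith)]
  have e5 : ⟪zt - W, lm • vv⟫ = ⟪lm • vv, zt - W⟫ := real_inner_comm _ _
  have key : 2 * ⟪W - zs, lm • vv⟫ ≥ ‖lm • vv‖ ^ 2 + (1 - σ ^ 2) * ‖zt - W‖ ^ 2 := by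
    nlinarith [e2, e3, e4, e5, herr']
  have hh : ‖W - (τ * lm) • vv - zs‖ ^ 2
      ≤ ‖W - zs‖ ^ 2 - τ * (1 - τ) * ‖lm • vv‖ ^ 2 - τ * (1 - σ ^ 2) * ‖zt - W‖ ^ 2 := by
    have key2 := mul_le_mul_of_nonneg_left key hτ0.le
    nlinarith [key2, e1]
  have hNd : ‖lm • vv‖ ≤ (1 + σ) * ‖zt - W‖ := by
    have h5 : ‖lm • vv + (zt - W)‖ ^ 2 ≤ (σ * ‖zt - W‖) ^ 2 := by
      nlinarith [mul_nonneg (mul_nonneg (by norm_num : (0:ℝ) ≤ 2) hlm.le) hep]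
    have h6 : ‖lm • vv + (zt - W)‖ ≤ σ * ‖zt - W‖ := by
      nlinarith [norm_nonneg (lm • vv + (zt - W)), mul_nonneg hσ0 (norm_nonneg (zt - W))]
    calc ‖lm • vv‖ = ‖(lm • vv + (zt - W)) - (zt - W)‖ := by congr 1; abel
      _ ≤ ‖lm • vv + (zt - W)‖ + ‖zt - W‖ := norm_sub_le _ _
      _ ≤ (1 + σ) * ‖zt - W‖ := by linarith
  have hN2 : ‖lm • vv‖ ^ 2 ≤ (1 + σ) ^ 2 * ‖zt - W‖ ^ 2 := by
    nlinarith [norm_nonneg (lm • vv), norm_nonneg (zt - W), hNd, h1σ]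
  rcases le_total (η * τ * ‖lm • vv‖ ^ 2) ((1 - σ ^ 2) * ‖zt - W‖ ^ 2) with hm | hm
  · rw [max_eq_right hm]
    have hnn : 0 ≤ τ * (1 - τ) * ‖lm • vv‖ ^ 2 :=
      mul_nonneg (mul_nonneg hτ0.le (by linarith)) (sq_nonneg _)
    nlinarith [hh]
  · rw [max_eq_left hm]
    have hfin : η * τ * ‖lm • vv‖ ^ 2 ≤ (1 - τ) * ‖lm • vv‖ ^ 2 + (1 - σ ^ 2) * ‖zt - W‖ ^ 2 := by
      have e : η * τ * ‖lm • vv‖ ^ 2 * (1 + σ) = (2 - (1 + σ) * τ) * ‖lm • vv‖ ^ 2 := by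
        linear_combination ‖lm • vv‖ ^ 2 * hησ
      nlinarith [mul_le_mul_of_nonneg_left hN2 (by linarith : (0:ℝ) ≤ 1 - σ), e, h1σ]
    nlinarith [hh, mul_le_mul_of_nonneg_left hfin hτ0.le]

/-- the summed estimate (Corollary 1) for Algorithm 1 under Assumption (A).
Indexing convention: `z k` is the paper's `z_k` for `k ≥ 0`, the paper's `z_{−1} = z₀` being
encoded by truncated subtraction. -/
theorem stmt12
    {H : Type*} [NormedAddCommGroup H] [InnerProductSpace ℝ H] [CompleteSpace H]
    (T : H → Set H) (hT : IsMaximalMonotoneOp T)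
    (α σ τ : ℝ) (hα0 : 0 ≤ α) (hα1 : α < 1) (hσ0 : 0 ≤ σ) (hσ1 : σ < 1)
    (hτ0 : 0 < τ) (hτ1 : τ ≤ 1)
    (z w ztil v : ℕ → H) (ε lam αs : ℕ → ℝ)
    (hαs : ∀ k, 0 ≤ αs k ∧ αs k ≤ α)
    (hmono : ∀ k, αs k ≤ αs (k + 1))
    (hw : ∀ k, w k = z k + αs k • (z k - z (k - 1)))
    (hlam : ∀ k, 1 ≤ k → 0 < lam k)
    (hεnn : ∀ k, 1 ≤ k → 0 ≤ ε k)
    (hin : ∀ k, 1 ≤ k → v k ∈ enl T (ε k) (ztil k))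
    (herr : ∀ k, 1 ≤ k →
      ‖lam k • v k + ztil k - w (k - 1)‖ ^ 2 + 2 * lam k * ε k ≤
        σ ^ 2 * ‖ztil k - w (k - 1)‖ ^ 2)
    (hz : ∀ k, 1 ≤ k → z k = w (k - 1) - (τ * lam k) • v k)
    -- Assumption (A):
    (β β' : ℝ) (hαβ : α < β) (hβ1 : β < 1)
    (hβ' : β' = max β (2 * (1 - σ) / (3 - σ + Real.sqrt (9 + 2 * σ - 7 * σ ^ 2))))
    (hτA : τ = 2 * (β' - 1) ^ 2 / ((1 + σ) * (2 * (β' - 1) ^ 2 + 3 * β' - 1)))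
    (η : ℝ) (hη : η = 2 / ((1 + σ) * τ) - 1)
    (q : ℝ → ℝ) (hq : ∀ t, q t = (η - 1) * t ^ 2 - (1 + 2 * η) * t + η)
    (zs : H) (hzs : (0 : H) ∈ T zs) :
    ∀ k, 1 ≤ k →
      ‖z k - zs‖ ^ 2 +
        ∑ j ∈ Finset.Icc 1 k,
          τ * max (η * τ * ‖lam j • v j‖ ^ 2) ((1 - σ ^ 2) * ‖ztil j - w (j - 1)‖ ^ 2) ≤
      (1 + 2 * α * (1 + α) / ((1 - α) ^ 2 * q α)) * ‖z 0 - zs‖ ^ 2 := by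
  -- basic scalar facts
  have h1σ : (0:ℝ) < 1 + σ := by linarith
  have h1α : (0:ℝ) < 1 - α := by linarith
  have hτσpos : 0 < (1 + σ) * τ := mul_pos h1σ hτ0
  have hτσ2 : (1 + σ) * τ < 2 := by
    have := mul_le_mul_of_nonneg_left hτ1 h1σ.le
    linarith
  have hησ : η * ((1 + σ) * τ) = 2 - (1 + σ) * τ := by
    rw [hη]; field_simp
  have hηpos : 0 < η := by
    have h2 : 1 < 2 / ((1 + σ) * τ) := (one_lt_div hτσpos).mpr hτσ2
    rw [hη]; linarith
  -- facts about β'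
  have hsq : 0 ≤ Real.sqrt (9 + 2 * σ - 7 * σ ^ 2) := Real.sqrt_nonneg _
  have hden : 0 < 3 - σ + Real.sqrt (9 + 2 * σ - 7 * σ ^ 2) := by linarith
  have hc1 : 2 * (1 - σ) / (3 - σ + Real.sqrt (9 + 2 * σ - 7 * σ ^ 2)) < 1 := by
    rw [div_lt_one hden]; linarith
  have hβ'1 : β' < 1 := by rw [hβ']; exact max_lt hβ1 hc1
  have hβ'α : α < β' := lt_of_lt_of_le hαβ (hβ' ▸ le_max_left _ _)
  have hβ'0 : 0 ≤ β' := hα0.trans hβ'α.le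
  have hDpos : (0:ℝ) < 2 * (β' - 1) ^ 2 + 3 * β' - 1 := by nlinarith [sq_nonneg (4 * β' - 1)]
  have hh2 : (1 + σ) * τ * (2 * (β' - 1) ^ 2 + 3 * β' - 1) = 2 * (β' - 1) ^ 2 := by
    rw [hτA]; field_simp [h1σ.ne', hDpos.ne']
    rw [mul_div_assoc, div_self (ne_of_gt (by linarith [hDpos])), mul_one]
  have hηβ : η * (1 - β') ^ 2 = β' * (1 + β') := by
    have h3 : η * (2 * (β' - 1) ^ 2)
        = 2 * (2 * (β' - 1) ^ 2 + 3 * β' - 1) - 2 * (β' - 1) ^ 2 := by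
      calc η * (2 * (β' - 1) ^ 2)
          = η * ((1 + σ) * τ * (2 * (β' - 1) ^ 2 + 3 * β' - 1)) := by rw [hh2]
        _ = (η * ((1 + σ) * τ)) * (2 * (β' - 1) ^ 2 + 3 * β' - 1) := by ring
        _ = (2 - (1 + σ) * τ) * (2 * (β' - 1) ^ 2 + 3 * β' - 1) := by rw [hησ]
        _ = 2 * (2 * (β' - 1) ^ 2 + 3 * β' - 1)
              - (1 + σ) * τ * (2 * (β' - 1) ^ 2 + 3 * β' - 1) := by ring
        _ = _ := by rw [hh2]
    linear_combination h3 / 2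
  have hqkey : (η * (1 - α) ^ 2 - α * (1 + α)) * (1 - β') ^ 2
      = (β' - α) * (1 + α + β' - 3 * α * β') := by
    linear_combination (1 - α) ^ 2 * hηβ
  have hfac : 0 < (β' - α) * (1 + α + β' - 3 * α * β') := by
    have k1 : 0 ≤ α * (1 - β') := mul_nonneg hα0 (by linarith)
    have k2 : 0 ≤ (1 - α) * β' := mul_nonneg h1α.le hβ'0
    have k3 : 0 < (1 - α) * (1 - β') := mul_pos h1α (by linarith)
    have : 0 < 1 + α + β' - 3 * α * β' := by ring_nf at k1 k2 k3 ⊢; linarith [k1, k2, k3]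
    exact mul_pos (by linarith) this
  have hqpos : 0 < η * (1 - α) ^ 2 - α * (1 + α) := by
    have hb2 : 0 < (1 - β') ^ 2 := pow_pos (by linarith) 2
    by_contra hcon
    push_neg at hcon
    have : (η * (1 - α) ^ 2 - α * (1 + α)) * (1 - β') ^ 2 ≤ 0 :=
      mul_nonpos_of_nonpos_of_nonneg hcon hb2.le
    rw [hqkey] at this
    linarith [hfac]
  have hApos : 0 ≤ α * (1 + α) := mul_nonneg hα0 (by linarith)
  -- local abbreviations
  set A : ℝ := α * (1 + α) with hAdef
  set qA : ℝ := η * (1 - α) ^ 2 - A with hqAdef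
  set hh : ℕ → ℝ := fun n => ‖z n - zs‖ ^ 2 with hhdef
  set uu : ℕ → ℝ := fun n => ‖z n - z (n - 1)‖ ^ 2 with huudef
  set ss : ℕ → ℝ := fun n =>
    τ * max (η * τ * ‖lam n • v n‖ ^ 2) ((1 - σ ^ 2) * ‖ztil n - w (n - 1)‖ ^ 2) with hssdef
  set pp : ℕ → ℝ := fun n => max (hh n - hh (n - 1)) 0 with hppdef
  set UU : ℕ → ℝ := fun n => ∑ j ∈ Finset.Icc 1 n, uu j with hUUdef
  set PP : ℕ → ℝ := fun n => ∑ j ∈ Finset.Icc 1 n, pp j with hPPdef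
  set SS : ℕ → ℝ := fun n => ∑ j ∈ Finset.Icc 1 n, ss j with hSSdef
  have hhnn : ∀ n, 0 ≤ hh n := fun n => by simp only [hhdef]; positivity
  have huunn : ∀ n, 0 ≤ uu n := fun n => by simp only [huudef]; positivity
  have ppnn : ∀ n, 0 ≤ pp n := fun n => le_max_right _ _
  have hu0 : uu 0 = 0 := by simp [huudef]
  have hp0 : pp 0 = 0 := by simp [hppdef]
  have hU0 : UU 0 = 0 := by simp [hUUdef]
  have hP0 : PP 0 = 0 := by simp [hPPdef]
  have hUsucc : ∀ n, UU (n + 1) = UU n + uu (n + 1) := fun n => by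
    simp only [hUUdef]; exact Finset.sum_Icc_succ_top (by omega) _
  have hPsucc : ∀ n, PP (n + 1) = PP n + pp (n + 1) := fun n => by
    simp only [hPPdef]; exact Finset.sum_Icc_succ_top (by omega) _
  have hSsucc : ∀ n, SS (n + 1) = SS n + ss (n + 1) := fun n => by
    simp only [hSSdef]; exact Finset.sum_Icc_succ_top (by omega) _
  have hUUnn : ∀ n, 0 ≤ UU n := fun n => by
    simp only [hUUdef]; exact Finset.sum_nonneg fun j _ => huunn j
  have hPPnn : ∀ n, 0 ≤ PP n := fun n => by
    simp only [hPPdef]; exact Finset.sum_nonneg fun j _ => ppnn j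
  have ssnn : ∀ n, 0 ≤ ss n := by
    intro n
    simp only [hssdef]
    refine mul_nonneg hτ0.le (le_trans ?_ (le_max_right _ _))
    have : (0:ℝ) ≤ 1 - σ ^ 2 := by
      have := mul_nonneg (show (0:ℝ) ≤ 1 - σ by linarith) (show (0:ℝ) ≤ 1 + σ by linarith)
      ring_nf at this ⊢
      linarith
    positivity
  -- step 1 : per-iteration HPE descent
  have step1 : ∀ n : ℕ, hh (n + 1) + ss (n + 1)
      ≤ hh n + αs n * (hh n - hh (n - 1)) + A * uu n := by
    intro n
    have hz' := hz (n + 1) (by omega)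
    rw [Nat.add_sub_cancel] at hz'
    have hmono' : ⟪ztil (n + 1) - zs, v (n + 1)⟫ ≥ -(ε (n + 1)) := by
      have h := hin (n + 1) (by omega) zs 0 hzs
      simpa using h
    have herr' := herr (n + 1) (by omega)
    rw [Nat.add_sub_cancel] at herr'
    have hstep := hpe_step σ τ η (lam (n + 1)) (ε (n + 1)) (w n) zs (ztil (n + 1)) (v (n + 1))
        hσ0 hσ1 hτ0 hτ1 (hlam _ (by omega)) (hεnn _ (by omega)) hησ hmono' herr'
    have hgoal1 : hh (n + 1) + ss (n + 1) ≤ ‖w n - zs‖ ^ 2 := by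
      simp only [hhdef, hssdef, Nat.add_sub_cancel]
      rw [hz']
      exact hstep
    have hid : ‖w n - zs‖ ^ 2
        = (1 + αs n) * hh n - αs n * hh (n - 1) + αs n * (1 + αs n) * uu n := by
      have hrw : w n - zs = (z n - zs) + αs n • ((z n - zs) - (z (n - 1) - zs)) := by
        rw [hw n, show (z n - zs) - (z (n - 1) - zs) = z n - z (n - 1) from by abel]
        abel
      rw [hrw, norm_comb]
      simp only [hhdef, huudef]
      rw [show (z n - zs) - (z (n - 1) - zs) = z n - z (n - 1) from by abel]
    have hAn : αs n * (1 + αs n) * uu n ≤ A * uu n := by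
      have h := hαs n
      have d1 : 0 ≤ (α - αs n) * (1 + α + αs n) :=
        mul_nonneg (by linarith [h.2]) (by linarith [h.1])
      have d2 : 0 ≤ ((α - αs n) * (1 + α + αs n)) * uu n := mul_nonneg d1 (huunn n)
      rw [hAdef]
      ring_nf
      ring_nf at d2
      linarith [d2]
    rw [hid] at hgoal1
    ring_nf at hgoal1 hAn ⊢
    linarith [hgoal1, hAn]
  -- step 2 : lower bound for ss via displacement
  have step2 : ∀ n : ℕ, η * (1 - α) * (uu (n + 1) - α * uu n) ≤ ss (n + 1) := by
    intro n
    have hz' := hz (n + 1) (by omega)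
    rw [Nat.add_sub_cancel] at hz'
    have hnz : ‖z (n + 1) - w n‖ = τ * ‖lam (n + 1) • v (n + 1)‖ := by
      rw [hz', show w n - (τ * lam (n + 1)) • v (n + 1) - w n
          = -(τ • (lam (n + 1) • v (n + 1))) from by rw [smul_smul]; abel]
      rw [norm_neg, norm_smul, Real.norm_eq_abs, abs_of_pos hτ0]
    have htri : ‖z (n + 1) - z n‖ ≤ ‖z (n + 1) - w n‖ + αs n * ‖z n - z (n - 1)‖ := by
      have hrw : z (n + 1) - z n = (z (n + 1) - w n) + αs n • (z n - z (n - 1)) := by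
        rw [hw n]; abel
      rw [hrw]
      refine (norm_add_le _ _).trans ?_
      rw [norm_smul, Real.norm_eq_abs, abs_of_nonneg (hαs n).1]
    have hXxy : ‖z (n + 1) - z n‖ ≤ ‖z (n + 1) - w n‖ + α * ‖z n - z (n - 1)‖ := by
      have := mul_le_mul_of_nonneg_right (hαs n).2 (norm_nonneg (z n - z (n - 1)))
      linarith
    have h1 : (1 - α) * ‖z (n + 1) - z n‖ ^ 2
        ≤ ‖z (n + 1) - w n‖ ^ 2 + α * (1 - α) * ‖z n - z (n - 1)‖ ^ 2 :=
      sq_tri α _ _ _ (norm_nonneg _) (norm_nonneg _) (norm_nonneg _) hα0 hα1 hXxy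
    have h2 : η * ‖z (n + 1) - w n‖ ^ 2 ≤ ss (n + 1) := by
      have hle := le_max_left (η * τ * ‖lam (n + 1) • v (n + 1)‖ ^ 2)
        ((1 - σ ^ 2) * ‖ztil (n + 1) - w n‖ ^ 2)
      have heq : η * ‖z (n + 1) - w n‖ ^ 2
          = τ * (η * τ * ‖lam (n + 1) • v (n + 1)‖ ^ 2) := by rw [hnz]; ring
      simp only [hssdef, Nat.add_sub_cancel]
      rw [heq]
      exact mul_le_mul_of_nonneg_left hle hτ0.le
    have h3 : η * ((1 - α) * ‖z (n + 1) - z n‖ ^ 2 - α * (1 - α) * ‖z n - z (n - 1)‖ ^ 2)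
        ≤ η * ‖z (n + 1) - w n‖ ^ 2 :=
      mul_le_mul_of_nonneg_left (by linarith) hηpos.le
    have huu1 : uu (n + 1) = ‖z (n + 1) - z n‖ ^ 2 := by
      simp only [huudef, Nat.add_sub_cancel]
    have huu2 : uu n = ‖z n - z (n - 1)‖ ^ 2 := by simp only [huudef]
    rw [huu1, huu2]
    ring_nf at h2 h3 ⊢
    linarith [h2, h3]
  -- step 3 : the summed invariant
  have inv : ∀ n, hh (n + 1) + (η * (1 - α)) * UU (n + 1)
      - (α * (η * (1 - α)) + A) * UU n ≤ hh 0 + αs n * hh n := by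
    intro n
    induction n with
    | zero =>
        have s1 := step1 0
        have s2 := step2 0
        have hU1 : UU 1 = uu 1 := by simp [hUUdef]
        have hα0h : 0 ≤ αs 0 * hh 0 := mul_nonneg (hαs 0).1 (hhnn 0)
        rw [hU1, hU0]
        simp only [Nat.zero_sub] at s1
        rw [hu0] at s1 s2
        ring_nf at s1 s2 hα0h ⊢
        linarith [s1, s2, hα0h]
    | succ n ih =>
        have s1 := step1 (n + 1)
        rw [Nat.add_sub_cancel] at s1
        have s2 := step2 (n + 1)
        have hmm := mul_le_mul_of_nonneg_right (hmono n) (hhnn n)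
        rw [hUsucc (n + 1), hUsucc n]
        rw [hUsucc n] at ih
        ring_nf at ih s1 s2 hmm ⊢
        linarith [ih, s1, s2, hmm]
  -- step 4
  have step4 : ∀ n, hh (n + 1) + qA * UU (n + 1) ≤ hh 0 + α * hh n := by
    intro n
    have h1 := inv n
    have hUm : UU n ≤ UU (n + 1) := by
      rw [hUsucc n]; linarith [huunn (n + 1)]
    have hc2 : 0 ≤ α * (η * (1 - α)) + A := by
      have := mul_nonneg hα0 (mul_nonneg hηpos.le h1α.le)
      have h9 : 0 ≤ α * (η * (1 - α)) := mul_nonneg hα0 (mul_nonneg hηpos.le h1α.le)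
      linarith [hApos, h9]
    have h4 : αs n * hh n ≤ α * hh n := mul_le_mul_of_nonneg_right (hαs n).2 (hhnn n)
    have h5 := mul_le_mul_of_nonneg_left hUm hc2
    rw [hqAdef]
    ring_nf at h1 h4 h5 ⊢
    linarith [h1, h4, h5]
  -- step 5 : boundedness of hh
  have step5 : ∀ n, (1 - α) * hh n ≤ hh 0 := by
    intro n
    induction n with
    | zero =>
        have := mul_nonneg hα0 (hhnn 0)
        ring_nf at this ⊢
        linarith
    | succ n ih =>
        have h5 : hh (n + 1) ≤ hh 0 + α * hh n := by
          have hn1 : 0 ≤ qA * UU (n + 1) := mul_nonneg hqpos.le (hUUnn (n + 1))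
          linarith [step4 n]
        have t1 := mul_le_mul_of_nonneg_left h5 h1α.le
        have t2 := mul_le_mul_of_nonneg_left ih hα0
        ring_nf at t1 t2 ⊢
        linarith [t1, t2]
  -- step 6 : bound on UU
  have step6 : ∀ n, (1 - α) * (qA * UU n) ≤ hh 0 := by
    intro n
    cases n with
    | zero => rw [hU0]; simpa using hhnn 0
    | succ n =>
        have t1 := mul_le_mul_of_nonneg_left (step4 n) h1α.le
        have t2 := mul_le_mul_of_nonneg_left (step5 n) hα0
        have t3 : 0 ≤ (1 - α) * hh (n + 1) := mul_nonneg h1α.le (hhnn (n + 1))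
        ring_nf at t1 t2 t3 ⊢
        linarith [t1, t2, t3]
  -- step 7a
  have step7a : ∀ n, hh (n + 1) - hh n + ss (n + 1) ≤ α * pp n + A * uu n := by
    intro n
    have s1 := step1 n
    have hple : αs n * (hh n - hh (n - 1)) ≤ α * pp n := by
      rcases le_total (hh n - hh (n - 1)) 0 with hd | hd
      · have h1 : αs n * (hh n - hh (n - 1)) ≤ 0 := mul_nonpos_of_nonneg_of_nonpos (hαs n).1 hd
        have h2 : 0 ≤ α * pp n := mul_nonneg hα0 (ppnn n)
        linarith
      · have h1 : αs n * (hh n - hh (n - 1)) ≤ α * (hh n - hh (n - 1)) :=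
          mul_le_mul_of_nonneg_right (hαs n).2 hd
        have h2 : hh n - hh (n - 1) ≤ pp n := le_max_left _ _
        have h3 := mul_le_mul_of_nonneg_left h2 hα0
        linarith
    linarith [s1, hple]
  -- step 7b
  have step7b : ∀ n, pp (n + 1) ≤ α * pp n + A * uu n := by
    intro n
    have h1 := step7a n
    have hnn : 0 ≤ α * pp n + A * uu n :=
      add_nonneg (mul_nonneg hα0 (ppnn n)) (mul_nonneg hApos (huunn n))
    have hpeq : pp (n + 1) = max (hh (n + 1) - hh n) 0 := by
      simp only [hppdef, Nat.add_sub_cancel]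
    rw [hpeq]
    exact max_le (by linarith [ssnn (n + 1)]) hnn
  -- step 8
  have step8 : ∀ n, (1 - α) * PP (n + 1) + α * pp (n + 1) ≤ A * UU n := by
    intro n
    induction n with
    | zero =>
        have h1 := step7b 0
        rw [hp0, hu0] at h1
        have hP1 : PP 1 = pp 1 := by simp [hPPdef]
        rw [hP1, hU0]
        ring_nf at h1 ⊢
        linarith [h1, ppnn 1]
    | succ n ih =>
        have h1 := step7b (n + 1)
        rw [hPsucc (n + 1), hUsucc n]
        ring_nf at ih h1 ⊢
        linarith [ih, h1]
  -- step 9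
  have step9 : ∀ n, hh (n + 1) + SS (n + 1) ≤ hh 0 + α * PP n + A * UU n := by
    intro n
    induction n with
    | zero =>
        have h1 := step7a 0
        rw [hp0, hu0] at h1
        have hS1 : SS 1 = ss 1 := by simp [hSSdef]
        rw [hS1, hP0, hU0]
        linarith
    | succ n ih =>
        have h1 := step7a (n + 1)
        rw [hSsucc (n + 1), hPsucc n, hUsucc n]
        ring_nf at ih h1 ⊢
        linarith [ih, h1]
  -- conclusion
  intro k hk
  obtain ⟨n, rfl⟩ : ∃ n, k = n + 1 := ⟨k - 1, by omega⟩
  have main := step9 n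
  have hP : (1 - α) * PP n ≤ A * UU n := by
    cases n with
    | zero => rw [hP0, hU0]; simp
    | succ m =>
        have h1 := step8 m
        have hUm : UU m ≤ UU (m + 1) := by rw [hUsucc m]; linarith [huunn (m + 1)]
        have t1 := mul_le_mul_of_nonneg_left hUm hApos
        have t2 : 0 ≤ α * pp (m + 1) := mul_nonneg hα0 (ppnn (m + 1))
        linarith [h1, t1, t2]
  have hU6 := step6 n
  have hden2 : 0 < (1 - α) ^ 2 * qA := mul_pos (pow_pos h1α 2) hqpos
  have hgoal2 : α * PP n + A * UU n ≤ 2 * A / ((1 - α) ^ 2 * qA) * hh 0 := by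
    rw [div_mul_eq_mul_div, le_div_iff₀ hden2]
    have t1 : α * (1 - α) * qA * ((1 - α) * PP n) ≤ α * (1 - α) * qA * (A * UU n) :=
      mul_le_mul_of_nonneg_left hP
        (mul_nonneg (mul_nonneg hα0 h1α.le) hqpos.le)
    have t2 : α * A * ((1 - α) * (qA * UU n)) ≤ α * A * hh 0 :=
      mul_le_mul_of_nonneg_left hU6 (mul_nonneg hα0 hApos)
    have t3 : A * (1 - α) * ((1 - α) * (qA * UU n)) ≤ A * (1 - α) * hh 0 :=
      mul_le_mul_of_nonneg_left hU6 (mul_nonneg hApos h1α.le)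
    have n1 : 0 ≤ A * hh 0 := mul_nonneg hApos (hhnn 0)
    ring_nf at t1 t2 t3 n1 ⊢
    linarith [t1, t2, t3, n1]
  have hqα : q α = qA := by rw [hq]; simp only [hqAdef, hAdef]; ring
  have hfin : hh (n + 1) + SS (n + 1) ≤ (1 + 2 * A / ((1 - α) ^ 2 * qA)) * hh 0 := by
    have expand : (1 + 2 * A / ((1 - α) ^ 2 * qA)) * hh 0
        = hh 0 + 2 * A / ((1 - α) ^ 2 * qA) * hh 0 := by ring
    rw [expand]
    linarith [main, hgoal2]
  rw [hqα]
  have hA2 : 2 * α * (1 + α) = 2 * A := by rw [hAdef]; ring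
  rw [hA2]
  simpa only [hhdef, hSSdef, hssdef] using hfin
end

section
/- (Pointwise O(1/√k) rate for Algorithm 1.) Let {z̃_k}, {v_k}, {ε_k}, {λ_k} be generated by Algorithm 1 (inertial under-relaxed HPE) for a maximal monotone operator T on a real Hilbert space H with T⁻¹(0) nonempty, assume Assumption (A), let η := 2/((1+σ)τ) − 1 and q(t) := (η−1)t² − (1+2η)t + η, let d₀ be the distance of z₀ to T⁻¹(0), and assume λ_k ≥ λ̲ > 0 for all k ≥ 1. Then for every k ≥ 1 there exists i ∈ {1,…,k} such that v_i ∈ T^{ε_i}(z̃_i), ‖v_i‖ ≤ (d₀/(λ̲ τ √k)) √(η⁻¹ (1 + 2α(1+α)/((1−α)² q(α)))), and ε_i ≤ (σ d₀² / (2(1−σ²) λ̲ τ k)) (1 + 2α(1+α)/((1−α)² q(α))). -/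
set_option maxHeartbeats 1600000


open Filter Finset Topology
open scoped RealInnerProductSpace

lemma stmt13_proj {H : Type*} [NormedAddCommGroup H] [InnerProductSpace ℝ H] [CompleteSpace H]
    (T : H → Set H) (hT : IsMaximalMonotoneOp T) (hzero : ∃ zs : H, (0:H) ∈ T zs) (x : H) :
    ∃ zs : H, (0:H) ∈ T zs ∧ ‖x - zs‖ = Metric.infDist x {y : H | (0:H) ∈ T y} := by
  have hchar : {y : H | (0:H) ∈ T y}
      = {y : H | ∀ z' v', v' ∈ T z' → 0 ≤ ⟪y - z', (0:H) - v'⟫} := by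
    ext y
    constructor
    · intro hy z' v' hv'
      exact hT.1 hy hv'
    · intro hy
      set S' : H → Set H := fun x' => T x' ∪ {u | x' = y ∧ u = 0} with hS'
      have hmonoS' : IsMonotoneOp S' := by
        rintro a b c d (hc | ⟨rfl, rfl⟩) (hd | ⟨rfl, rfl⟩)
        · exact hT.1 hc hd
        · have h1 := hy a c hc
          have h2 : ⟪a - b, c - (0:H)⟫ = ⟪b - a, (0:H) - c⟫ := by
            rw [show a - b = -(b - a) by abel, show c - (0:H) = -((0:H) - c) by abel,
              inner_neg_neg]
          rw [h2]; exact h1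
        · exact hy b d hd
        · simp
      have hsub : ∀ z', T z' ⊆ S' z' := fun z' => Set.subset_union_left
      exact hT.2 S' hmonoS' hsub y (Or.inr ⟨rfl, rfl⟩)
  have hconv : Convex ℝ {y : H | ∀ z' v', v' ∈ T z' → 0 ≤ ⟪y - z', (0:H) - v'⟫} := by
    intro p hp q hq a b ha hb hab
    intro z' v' hv'
    have he : a • p + b • q - z' = a • (p - z') + b • (q - z') := by
      have h2 : a • (p - z') + b • (q - z') = a • p + b • q - (a + b) • z' := by
        rw [smul_sub, smul_sub, add_smul]; abel
      rw [h2, hab, one_smul]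
    rw [Set.mem_setOf_eq] at *
    rw [he, inner_add_left, real_inner_smul_left, real_inner_smul_left]
    exact add_nonneg (mul_nonneg ha (hp z' v' hv')) (mul_nonneg hb (hq z' v' hv'))
  have hclosed : IsClosed {y : H | ∀ z' v', v' ∈ T z' → 0 ≤ ⟪y - z', (0:H) - v'⟫} := by
    have he : {y : H | ∀ z' v', v' ∈ T z' → 0 ≤ ⟪y - z', (0:H) - v'⟫}
        = ⋂ (p : H × H) (_ : p.2 ∈ T p.1), {y : H | 0 ≤ ⟪y - p.1, (0:H) - p.2⟫} := by
      ext y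
      simp only [Set.mem_setOf_eq, Set.mem_iInter]
      exact ⟨fun h p hp => h p.1 p.2 hp, fun h z' v' hv' => h (z', v') hv'⟩
    rw [he]
    refine isClosed_iInter fun p => isClosed_iInter fun hp => ?_
    exact isClosed_le continuous_const
      ((continuous_id.sub continuous_const).inner continuous_const)
  obtain ⟨z1, hz1⟩ := hzero
  have hne : ({y : H | ∀ z' v', v' ∈ T z' → 0 ≤ ⟪y - z', (0:H) - v'⟫}).Nonempty := by
    refine ⟨z1, ?_⟩
    rw [← hchar]
    exact hz1
  obtain ⟨zs, hzs, hmin⟩ := exists_norm_eq_iInf_of_complete_convex hne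
    (hclosed.isComplete) hconv x
  have hzs0 : zs ∈ {y : H | (0:H) ∈ T y} := by rw [hchar]; exact hzs
  refine ⟨zs, hzs0, ?_⟩
  rw [hchar, Metric.infDist_eq_iInf, hmin]
  simp only [dist_eq_norm]

lemma stmt13_real1 (σ nu nr I e : ℝ) (hσ0 : 0 ≤ σ) (hσ1 : σ < 1) (hnu : 0 ≤ nu) (hnr : 0 ≤ nr)
    (hIle : -I ≤ nr * nu) (he : 0 ≤ e) (herr : nr ^ 2 + 2 * e ≤ σ ^ 2 * nu ^ 2)
    (hRU : nr ≤ σ * nu) :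
    nr ^ 2 - 2 * I + nu ^ 2 ≤ (1 + σ) * (nu ^ 2 - I - e) := by
  nlinarith [mul_nonneg (mul_nonneg (by linarith : (0:ℝ) ≤ 1 - σ)
      (by linarith : (0:ℝ) ≤ σ * nu - nr)) (by positivity : (0:ℝ) ≤ σ * nu + nr + 2 * nu),
    mul_nonneg (by linarith : (0:ℝ) ≤ 1 - σ) (by linarith : (0:ℝ) ≤ I + nr * nu),
    mul_nonneg (by linarith : (0:ℝ) ≤ 1 + σ)
      (by linarith : (0:ℝ) ≤ σ ^ 2 * nu ^ 2 - nr ^ 2 - 2 * e)]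

lemma stmt13_key {H : Type*} [NormedAddCommGroup H] [InnerProductSpace ℝ H]
    (σ τ η lam ε : ℝ) (zs w ztil v : H)
    (hσ0 : 0 ≤ σ) (hσ1 : σ < 1) (hτ0 : 0 < τ) (hτ1 : τ ≤ 1)
    (hlam : 0 < lam) (hε : 0 ≤ ε)
    (hηid : (1 + η) * ((1 + σ) * τ) = 2) (hη1 : 0 < 1 + η)
    (hmon : -ε ≤ ⟪ztil - zs, v⟫)
    (herr : ‖lam • v + ztil - w‖ ^ 2 + 2 * lam * ε ≤ σ ^ 2 * ‖ztil - w‖ ^ 2) :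
    η * ‖(τ * lam) • v‖ ^ 2 ≤ ‖w - zs‖ ^ 2 - ‖w - (τ * lam) • v - zs‖ ^ 2 ∧
    τ * (1 - σ ^ 2) * ‖ztil - w‖ ^ 2 ≤ ‖w - zs‖ ^ 2 - ‖w - (τ * lam) • v - zs‖ ^ 2 := by
  set u : H := ztil - w with hu
  set r : H := lam • v + ztil - w with hrdef
  have hlv : lam • v = r - u := by rw [hrdef, hu]; abel
  set U2 : ℝ := ‖u‖ ^ 2 with hU2
  set R2 : ℝ := ‖r‖ ^ 2 with hR2
  set I : ℝ := ⟪u, r⟫ with hI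
  set Pm : ℝ := ⟪ztil - zs, v⟫ with hPmdef
  set e : ℝ := lam * ε with he
  set W : ℝ := R2 - 2 * I + U2 with hWdef
  have herr' : R2 + 2 * e ≤ σ ^ 2 * U2 := by
    simpa [hR2, hU2, he, mul_assoc] using herr
  have hue : 0 ≤ e := mul_nonneg hlam.le hε
  have hW : ‖lam • v‖ ^ 2 = W := by
    rw [hWdef, hU2, hR2, hI, hlv, norm_sub_sq_real, real_inner_comm r u]
  have hWnn : 0 ≤ W := by rw [← hW]; positivity
  have hIle : -I ≤ ‖r‖ * ‖u‖ := by
    have h2 := abs_real_inner_le_norm u r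
    have h3 := neg_abs_le (⟪u, r⟫ : ℝ)
    rw [hI]
    nlinarith [h2, h3, abs_nonneg (⟪u, r⟫ : ℝ)]
  have hRU : ‖r‖ ≤ σ * ‖u‖ := by
    have hh : ‖r‖ ^ 2 ≤ (σ * ‖u‖) ^ 2 := by rw [mul_pow]; nlinarith [herr', hue]
    exact (abs_le_of_sq_le_sq' hh (by positivity)).2
  have hB : ⟪u, lam • v⟫ = I - U2 := by
    rw [hlv, inner_sub_right, real_inner_self_eq_norm_sq, ← hI, ← hU2]
  have hA : ⟪w - zs, lam • v⟫ = U2 - I + lam * Pm := by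
    have h4 : (w - zs : H) = -u + (ztil - zs) := by rw [hu]; abel
    rw [h4, inner_add_left, inner_neg_left, hB, real_inner_smul_right, ← hPmdef]; ring
  have h6 : ‖τ • (lam • v)‖ ^ 2 = τ ^ 2 * W := by
    rw [norm_smul, Real.norm_eq_abs, mul_pow, sq_abs, hW]
  have h7 : ‖(τ * lam) • v‖ ^ 2 = τ ^ 2 * W := by rw [← smul_smul]; exact h6
  have hdiff : ‖w - zs‖ ^ 2 - ‖w - (τ * lam) • v - zs‖ ^ 2
      = 2 * τ * (U2 - I + lam * Pm) - τ ^ 2 * W := by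
    have h1 : w - (τ * lam) • v - zs = (w - zs) - τ • (lam • v) := by
      rw [smul_smul]; abel
    rw [h1, norm_sub_sq_real (w - zs) (τ • (lam • v)), real_inner_smul_right, hA, h6]; ring
  clear_value u r U2 R2 I Pm e W
  have hPm' : -e ≤ lam * Pm := by
    have h20 := mul_le_mul_of_nonneg_left hmon hlam.le
    rw [he]; nlinarith [h20]
  have hWY : W ≤ (1 + σ) * (U2 - I - e) := by
    rw [hWdef, hR2, hU2]
    have herr'' : ‖r‖ ^ 2 + 2 * e ≤ σ ^ 2 * ‖u‖ ^ 2 := by rw [← hR2, ← hU2]; exact herr'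
    exact stmt13_real1 σ ‖u‖ ‖r‖ I e hσ0 hσ1 (norm_nonneg u) (norm_nonneg r) hIle hue herr'' hRU
  have h8 : (1 + η) * τ * W ≤ 2 * (U2 - I - e) := by
    have h9 : (1 + η) * τ * W ≤ (1 + η) * τ * ((1 + σ) * (U2 - I - e)) :=
      mul_le_mul_of_nonneg_left hWY (mul_nonneg hη1.le hτ0.le)
    have h10 : (1 + η) * τ * ((1 + σ) * (U2 - I - e)) = 2 * (U2 - I - e) := by
      rw [show (1 + η) * τ * ((1 + σ) * (U2 - I - e))
        = ((1 + η) * ((1 + σ) * τ)) * (U2 - I - e) by ring, hηid]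
    linarith
  have h11 : τ * (-e) ≤ τ * (lam * Pm) := mul_le_mul_of_nonneg_left hPm' hτ0.le
  constructor
  · rw [h7, hdiff]
    linarith [mul_le_mul_of_nonneg_left h8 hτ0.le, h11]
  · rw [hdiff]
    have h12 : τ * (R2 + 2 * e) ≤ τ * (σ ^ 2 * U2) := mul_le_mul_of_nonneg_left herr' hτ0.le
    have h13 : 0 ≤ (τ * (1 - τ)) * W :=
      mul_nonneg (mul_nonneg hτ0.le (by linarith)) hWnn
    have h14 : τ * W = τ * R2 - 2 * (τ * I) + τ * U2 := by rw [hWdef]; ring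
    linarith [h11, h12, h13, h14]

lemma stmt13_quad (α a s s' : ℝ) (ha0 : 0 ≤ a) (ha1 : a ≤ α) (hα1 : α < 1)
    (hs : 0 ≤ s) (hs' : 0 ≤ s') :
    α * (1 + α) * (1 - α) * s ^ 2 - (α * (1 + α) * (1 - α) - a * (1 + a) * (1 - α) ^ 2) * s' ^ 2
      ≤ α * (1 + α) * (s ^ 2 - 2 * a * (s * s') + a ^ 2 * s' ^ 2) := by
  rcases eq_or_lt_of_le (le_trans ha0 ha1) with h | h
  · have ha : a = 0 := le_antisymm (h ▸ ha1) ha0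
    rw [← h, ha]; ring_nf; exact le_refl 0
  · have hα0 : 0 ≤ α := h.le
    have hm : 0 < α * (1 + α) * α := mul_pos (mul_pos h (by linarith)) h
    nlinarith [hm, sq_nonneg (α * (1 + α) * (α * s - a * s')),
      mul_nonneg (mul_nonneg (mul_nonneg (mul_nonneg
        (mul_nonneg (mul_nonneg hα0 (by linarith : (0:ℝ) ≤ 1 + α))
          (by linarith : (0:ℝ) ≤ 1 - α)) hα0)
        (by linarith : (0:ℝ) ≤ α - a)) (by linarith : (0:ℝ) ≤ 1 + α + 2 * a)) (sq_nonneg s')]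

lemma stmt13_phi (α x y s : ℝ) (hα0 : 0 ≤ α) (hα1 : α < 1) (hy : 0 ≤ y)
    (hs : y ≤ x + s) :
    0 ≤ (1 - α) ^ 2 * x ^ 2 - (1 - α) ^ 2 * α * y ^ 2 + (1 - α) * (α * (1 + α)) * s ^ 2 := by
  have hy2 : y ^ 2 ≤ (x + s) ^ 2 := pow_le_pow_left₀ hy hs 2
  have t0 := mul_le_mul_of_nonneg_left hy2 (show (0:ℝ) ≤ (1 - α) ^ 2 * α by positivity)
  nlinarith [t0, mul_nonneg (show (0:ℝ) ≤ 1 - α by linarith) (sq_nonneg ((1 - α) * x - α * s)),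
    mul_nonneg (mul_nonneg (show (0:ℝ) ≤ 1 - α by linarith) (sq_nonneg α)) (sq_nonneg s)]

section
variable {H : Type*} [NormedAddCommGroup H] [InnerProductSpace ℝ H]

lemma stmt13_wid (x y : H) (a : ℝ) :
    ‖x + a • (x - y)‖ ^ 2
      = (1 + a) * ‖x‖ ^ 2 - a * ‖y‖ ^ 2 + a * (1 + a) * ‖x - y‖ ^ 2 := by
  rw [norm_add_sq_real, real_inner_smul_right, norm_smul, Real.norm_eq_abs, mul_pow, sq_abs,
    inner_sub_right, real_inner_self_eq_norm_sq, norm_sub_sq_real]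
  ring

lemma stmt13_delta (d d' : H) (a : ℝ) (ha : 0 ≤ a) :
    ‖d‖ ^ 2 - 2 * a * (‖d‖ * ‖d'‖) + a ^ 2 * ‖d'‖ ^ 2 ≤ ‖d - a • d'‖ ^ 2 := by
  rw [norm_sub_sq_real, real_inner_smul_right, norm_smul, Real.norm_eq_abs, mul_pow, sq_abs]
  have h1 := mul_le_mul_of_nonneg_left (real_inner_le_norm d d') ha
  linarith

end



theorem stmt13_constants (α σ τ β β' η : ℝ) (hα0 : 0 ≤ α) (hα1 : α < 1) (hσ0 : 0 ≤ σ)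
    (hσ1 : σ < 1) (hτ0 : 0 < τ) (hτ1 : τ ≤ 1)
    (hαβ : α < β) (hβ1 : β < 1)
    (hβ' : β' = max β (2 * (1 - σ) / (3 - σ + Real.sqrt (9 + 2 * σ - 7 * σ ^ 2))))
    (hτA : τ = 2 * (β' - 1) ^ 2 / ((1 + σ) * (2 * (β' - 1) ^ 2 + 3 * β' - 1)))
    (hη : η = 2 / ((1 + σ) * τ) - 1) :
    (1 + η) * ((1 + σ) * τ) = 2 ∧ 0 < η ∧ 0 < η * (1 - α) ^ 2 - α * (1 + α) := by
  have hβle : β ≤ β' := by rw [hβ']; exact le_max_left _ _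
  have hαβ' : α < β' := lt_of_lt_of_le hαβ hβle
  have hβ'0 : 0 < β' := lt_of_le_of_lt hα0 hαβ'
  have hsq := Real.sqrt_nonneg (9 + 2 * σ - 7 * σ ^ 2)
  have hden : 0 < 3 - σ + Real.sqrt (9 + 2 * σ - 7 * σ ^ 2) := by linarith
  have hβ'1 : β' < 1 := by
    rw [hβ']
    exact max_lt hβ1 ((div_lt_one hden).2 (by linarith))
  have hσ1' : (0:ℝ) < 1 + σ := by linarith
  have hc2 : (0:ℝ) < (β' - 1) ^ 2 := by
    rw [show (β' - 1) ^ 2 = (1 - β') ^ 2 by ring]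
    exact pow_pos (by linarith) 2
  have hQpos : 0 < 2 * (β' - 1) ^ 2 + 3 * β' - 1 := by
    by_contra hQ
    push_neg at hQ
    have hτle : τ ≤ 0 := by
      rw [hτA]
      exact div_nonpos_of_nonneg_of_nonpos (by positivity)
        (mul_nonpos_of_nonneg_of_nonpos hσ1'.le (by linarith))
    linarith
  have hτne : (1 + σ) * τ ≠ 0 := ne_of_gt (mul_pos hσ1' hτ0)
  have hηid : (1 + η) * ((1 + σ) * τ) = 2 := by
    rw [hη]; field_simp; ring
  have hτQ : (1 + σ) * τ * (2 * (β' - 1) ^ 2 + 3 * β' - 1) = 2 * (β' - 1) ^ 2 := by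
    rw [hτA, div_eq_mul_inv, mul_inv]
    linear_combination (2 * (β' - 1) ^ 2 * ((2 * (β' - 1) ^ 2 + 3 * β' - 1) * (2 * (β' - 1) ^ 2 + 3 * β' - 1)⁻¹)) * mul_inv_cancel₀ hσ1'.ne' + 2 * (β' - 1) ^ 2 * mul_inv_cancel₀ hQpos.ne'
  have hηβ : η * (1 - β') ^ 2 = β' * (1 + β') := by
    have h2 : (1 + η) * (2 * (β' - 1) ^ 2) = 2 * (2 * (β' - 1) ^ 2 + 3 * β' - 1) := by
      calc (1 + η) * (2 * (β' - 1) ^ 2)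
          = (1 + η) * ((1 + σ) * τ * (2 * (β' - 1) ^ 2 + 3 * β' - 1)) := by rw [hτQ]
        _ = ((1 + η) * ((1 + σ) * τ)) * (2 * (β' - 1) ^ 2 + 3 * β' - 1) := by ring
        _ = 2 * (2 * (β' - 1) ^ 2 + 3 * β' - 1) := by rw [hηid]
    linear_combination h2 / 2
  have hη0 : 0 < η := by
    nlinarith [hηβ, hc2, mul_pos hβ'0 (show (0:ℝ) < 1 + β' by linarith)]
  refine ⟨hηid, hη0, ?_⟩
  have hkey : 0 < 1 + β' + α - 3 * α * β' := by
    nlinarith [mul_pos (show (0:ℝ) < 1 - α by linarith) (show (0:ℝ) < 1 - β' by linarith),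
      mul_nonneg hα0 (show (0:ℝ) ≤ 1 - β' by linarith),
      mul_nonneg hβ'0.le (show (0:ℝ) ≤ 1 - α by linarith)]
  have hfac : 0 < (β' - α) * (1 + β' + α - 3 * α * β') := mul_pos (by linarith) hkey
  have hηβ2 : η * (1 - β') ^ 2 * (1 - α) ^ 2 = β' * (1 + β') * (1 - α) ^ 2 := by
    linear_combination hηβ * (1 - α) ^ 2
  nlinarith [hfac, hηβ2, hc2]

/-- pointwise O(1/√k) convergence rate of Algorithm 1 under Assumption (A).
Indexing convention: `z k` is the paper's `z_k` for `k ≥ 0`, the paper's `z_{−1} = z₀` being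
encoded by truncated subtraction. -/
theorem stmt13
    {H : Type*} [NormedAddCommGroup H] [InnerProductSpace ℝ H] [CompleteSpace H]
    (T : H → Set H) (hT : IsMaximalMonotoneOp T)
    (α σ τ : ℝ) (hα0 : 0 ≤ α) (hα1 : α < 1) (hσ0 : 0 ≤ σ) (hσ1 : σ < 1)
    (hτ0 : 0 < τ) (hτ1 : τ ≤ 1)
    (z w ztil v : ℕ → H) (ε lam αs : ℕ → ℝ)
    (hαs : ∀ k, 0 ≤ αs k ∧ αs k ≤ α)
    (hmono : ∀ k, αs k ≤ αs (k + 1))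
    (hw : ∀ k, w k = z k + αs k • (z k - z (k - 1)))
    (hlam : ∀ k, 1 ≤ k → 0 < lam k)
    (hεnn : ∀ k, 1 ≤ k → 0 ≤ ε k)
    (hin : ∀ k, 1 ≤ k → v k ∈ enl T (ε k) (ztil k))
    (herr : ∀ k, 1 ≤ k →
      ‖lam k • v k + ztil k - w (k - 1)‖ ^ 2 + 2 * lam k * ε k ≤
        σ ^ 2 * ‖ztil k - w (k - 1)‖ ^ 2)
    (hz : ∀ k, 1 ≤ k → z k = w (k - 1) - (τ * lam k) • v k)
    -- Assumption (A):
    (β β' : ℝ) (hαβ : α < β) (hβ1 : β < 1)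
    (hβ' : β' = max β (2 * (1 - σ) / (3 - σ + Real.sqrt (9 + 2 * σ - 7 * σ ^ 2))))
    (hτA : τ = 2 * (β' - 1) ^ 2 / ((1 + σ) * (2 * (β' - 1) ^ 2 + 3 * β' - 1)))
    (η : ℝ) (hη : η = 2 / ((1 + σ) * τ) - 1)
    (q : ℝ → ℝ) (hq : ∀ t, q t = (η - 1) * t ^ 2 - (1 + 2 * η) * t + η)
    (hzero : ∃ zs : H, (0 : H) ∈ T zs)
    (d0 : ℝ) (hd0 : d0 = Metric.infDist (z 0) {x : H | (0 : H) ∈ T x})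
    (lamlb : ℝ) (hlb : 0 < lamlb) (hlam2 : ∀ k, 1 ≤ k → lamlb ≤ lam k) :
    ∀ k : ℕ, 1 ≤ k → ∃ i : ℕ, 1 ≤ i ∧ i ≤ k ∧
      v i ∈ enl T (ε i) (ztil i) ∧
      ‖v i‖ ≤ d0 / (lamlb * τ * Real.sqrt k) *
        Real.sqrt (η⁻¹ * (1 + 2 * α * (1 + α) / ((1 - α) ^ 2 * q α))) ∧
      ε i ≤ σ * d0 ^ 2 / (2 * (1 - σ ^ 2) * lamlb * τ * k) *
        (1 + 2 * α * (1 + α) / ((1 - α) ^ 2 * q α)) := by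
  intro k hk
  obtain ⟨hηid, hη0, hqα'⟩ := stmt13_constants α σ τ β β' η hα0 hα1 hσ0 hσ1 hτ0 hτ1
    hαβ hβ1 hβ' hτA hη
  have hη1p : (0:ℝ) < 1 + η := by linarith
  have hqid : q α = η * (1 - α) ^ 2 - α * (1 + α) := by rw [hq]; ring
  have hqα : 0 < q α := by rw [hqid]; exact hqα'
  have hm0 : (0:ℝ) ≤ α * (1 + α) := mul_nonneg hα0 (by linarith)
  have hc0 : (0:ℝ) < 1 - α := by linarith
  set C : ℝ := 1 + 2 * α * (1 + α) / ((1 - α) ^ 2 * q α) with hCdef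
  have hCnn : (0:ℝ) ≤ C := by
    rw [hCdef]
    have h1 : (0:ℝ) ≤ 2 * α * (1 + α) / ((1 - α) ^ 2 * q α) :=
      div_nonneg (by linarith only [mul_nonneg hα0 (show (0:ℝ) ≤ 1 + α by linarith)])
        (mul_nonneg (sq_nonneg _) hqα.le)
    linarith
  have hCq : η * (1 - α) ^ 2 ≤ C * q α := by
    rw [hCdef]
    have hrw : (1 + 2 * α * (1 + α) / ((1 - α) ^ 2 * q α)) * q α
        = q α + 2 * α * (1 + α) / (1 - α) ^ 2 := by
      field_simp
    rw [hrw, hqid]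
    have h5 : α * (1 + α) ≤ 2 * α * (1 + α) / (1 - α) ^ 2 := by
      rw [le_div_iff₀ (by positivity)]
      have h5a : (1 - α) ^ 2 ≤ 1 ^ 2 := pow_le_pow_left₀ (by linarith) (by linarith) 2
      have h5b : 0 ≤ α * (1 + α) * (2 - (1 - α) ^ 2) := mul_nonneg hm0 (by linarith only [h5a])
      linarith only [h5b]
    linarith
  clear_value C
  -- the projection point
  obtain ⟨zs, hzs, hdz⟩ := stmt13_proj T hT hzero (z 0)
  have hd0eq : d0 = ‖z 0 - zs‖ := by rw [hd0, hdz]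
  have hd0nn : 0 ≤ d0 := hd0eq ▸ norm_nonneg _
  -- notation
  set M : ℕ → ℝ := fun j => ‖w (j - 1) - zs‖ ^ 2 - ‖z j - zs‖ ^ 2 with hMdef
  set Ψ : ℕ → ℝ := fun j => (1 - α) ^ 2 * ‖z j - zs‖ ^ 2
    - (1 - α) ^ 2 * αs j * ‖z (j - 1) - zs‖ ^ 2
    + (1 - α) * (α * (1 + α)) * ‖z j - z (j - 1)‖ ^ 2 with hΨdef
  -- key per-step estimates
  have hkey : ∀ n : ℕ, η * ‖z (n + 1) - w n‖ ^ 2 ≤ M (n + 1) ∧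
      τ * (1 - σ ^ 2) * ‖ztil (n + 1) - w n‖ ^ 2 ≤ M (n + 1) ∧
      2 * lam (n + 1) * ε (n + 1) ≤ σ ^ 2 * ‖ztil (n + 1) - w n‖ ^ 2 ∧
      ‖z (n + 1) - w n‖ ^ 2 = (τ * lam (n + 1)) ^ 2 * ‖v (n + 1)‖ ^ 2 := by
    intro n
    have h1n : 1 ≤ n + 1 := Nat.le_add_left 1 n
    have hzn := hz (n + 1) h1n
    have herrn := herr (n + 1) h1n
    simp only [Nat.add_sub_cancel] at hzn herrn
    have hmn : -(ε (n + 1)) ≤ ⟪ztil (n + 1) - zs, v (n + 1)⟫ := by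
      have h2 := hin (n + 1) h1n zs 0 hzs
      simpa using h2
    have hk2 := stmt13_key σ τ η (lam (n + 1)) (ε (n + 1)) zs (w n) (ztil (n + 1)) (v (n + 1))
      hσ0 hσ1 hτ0 hτ1 (hlam _ h1n) (hεnn _ h1n) hηid hη1p hmn herrn
    have he1 : w n - (τ * lam (n + 1)) • v (n + 1) - zs = z (n + 1) - zs := by rw [hzn]
    have he2 : z (n + 1) - w n = -((τ * lam (n + 1)) • v (n + 1)) := by rw [hzn]; abel
    have he3 : ‖z (n + 1) - w n‖ ^ 2 = ‖(τ * lam (n + 1)) • v (n + 1)‖ ^ 2 := by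
      rw [he2, norm_neg]
    have hM1 : M (n + 1) = ‖w n - zs‖ ^ 2 - ‖z (n + 1) - zs‖ ^ 2 := by
      simp only [hMdef, Nat.add_sub_cancel]
    refine ⟨?_, ?_, ?_, ?_⟩
    · rw [he3, hM1, ← he1]; exact hk2.1
    · rw [hM1, ← he1]; exact hk2.2
    · have h3 := sq_nonneg ‖lam (n + 1) • v (n + 1) + ztil (n + 1) - w n‖
      linarith only [herrn, h3]
    · rw [he3, norm_smul, Real.norm_eq_abs, mul_pow, sq_abs]
  -- per-step descent of the Lyapunov function
  have hstep : ∀ n : ℕ,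
      Ψ (n + 1) + ((1 - α) ^ 2 * M (n + 1) - α * (1 + α) * ‖z (n + 1) - w n‖ ^ 2) ≤ Ψ n := by
    intro n
    have hδ : ‖z (n + 1) - z n‖ ^ 2
        - 2 * αs n * (‖z (n + 1) - z n‖ * ‖z n - z (n - 1)‖)
        + (αs n) ^ 2 * ‖z n - z (n - 1)‖ ^ 2 ≤ ‖z (n + 1) - w n‖ ^ 2 := by
      have h1 : z (n + 1) - w n = (z (n + 1) - z n) - αs n • (z n - z (n - 1)) := by
        rw [hw n]; abel
      rw [h1]
      exact stmt13_delta _ _ _ (hαs n).1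
    have hquad := stmt13_quad α (αs n) ‖z (n + 1) - z n‖ ‖z n - z (n - 1)‖ (hαs n).1
      (hαs n).2 hα1 (norm_nonneg _) (norm_nonneg _)
    have hw2 : ‖w n - zs‖ ^ 2 = (1 + αs n) * ‖z n - zs‖ ^ 2 - αs n * ‖z (n - 1) - zs‖ ^ 2
        + αs n * (1 + αs n) * ‖z n - z (n - 1)‖ ^ 2 := by
      have h1 : w n - zs = (z n - zs) + αs n • ((z n - zs) - (z (n - 1) - zs)) := by
        rw [hw n]
        have h2 : (z n - zs) - (z (n - 1) - zs) = z n - z (n - 1) := by abel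
        rw [h2]
        abel
      rw [h1, stmt13_wid]
      have h3 : (z n - zs) - (z (n - 1) - zs) = z n - z (n - 1) := by abel
      rw [h3]
    have hw2' : (1 - α) ^ 2 * ‖w n - zs‖ ^ 2
        = (1 - α) ^ 2 * ((1 + αs n) * ‖z n - zs‖ ^ 2 - αs n * ‖z (n - 1) - zs‖ ^ 2
          + αs n * (1 + αs n) * ‖z n - z (n - 1)‖ ^ 2) := by rw [hw2]
    have hmono' : 0 ≤ (1 - α) ^ 2 * (αs (n + 1) - αs n) * ‖z n - zs‖ ^ 2 :=
      mul_nonneg (mul_nonneg (sq_nonneg _) (sub_nonneg.2 (hmono n))) (sq_nonneg _)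
    have hmd := mul_le_mul_of_nonneg_left hδ hm0
    have hΨ1 : Ψ (n + 1) = (1 - α) ^ 2 * ‖z (n + 1) - zs‖ ^ 2
        - (1 - α) ^ 2 * αs (n + 1) * ‖z n - zs‖ ^ 2
        + (1 - α) * (α * (1 + α)) * ‖z (n + 1) - z n‖ ^ 2 := by
      simp only [hΨdef, Nat.add_sub_cancel]
    have hΨ0 : Ψ n = (1 - α) ^ 2 * ‖z n - zs‖ ^ 2
        - (1 - α) ^ 2 * αs n * ‖z (n - 1) - zs‖ ^ 2
        + (1 - α) * (α * (1 + α)) * ‖z n - z (n - 1)‖ ^ 2 := by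
      simp only [hΨdef]
    have hM1 : M (n + 1) = ‖w n - zs‖ ^ 2 - ‖z (n + 1) - zs‖ ^ 2 := by
      simp only [hMdef, Nat.add_sub_cancel]
    rw [hΨ1, hΨ0, hM1]
    linarith only [hmd, hquad, hmono', hw2']
  -- telescoping
  have htel : ∀ n : ℕ, Ψ n + ∑ j ∈ Finset.Icc 1 n,
      ((1 - α) ^ 2 * M j - α * (1 + α) * ‖z j - w (j - 1)‖ ^ 2) ≤ Ψ 0 := by
    intro n
    induction n with
    | zero => simp
    | succ n ih =>
        rw [Finset.sum_Icc_succ_top (Nat.le_add_left 1 n)]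
        have h1 := hstep n
        simp only [Nat.add_sub_cancel]
        linarith only [h1, ih]
  -- nonnegativity of Ψ
  have hΨnn : ∀ j, 0 ≤ Ψ j := by
    intro j
    have h1 : ‖z (j - 1) - zs‖ ≤ ‖z j - zs‖ + ‖z j - z (j - 1)‖ := by
      have h2 : z (j - 1) - zs = (z j - zs) - (z j - z (j - 1)) := by abel
      rw [h2]
      exact norm_sub_le _ _
    have h3 := stmt13_phi α ‖z j - zs‖ ‖z (j - 1) - zs‖ ‖z j - z (j - 1)‖ hα0 hα1
      (norm_nonneg _) h1
    have h4 : (1 - α) ^ 2 * αs j * ‖z (j - 1) - zs‖ ^ 2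
        ≤ (1 - α) ^ 2 * α * ‖z (j - 1) - zs‖ ^ 2 :=
      mul_le_mul_of_nonneg_right
        (mul_le_mul_of_nonneg_left (hαs j).2 (sq_nonneg _)) (sq_nonneg _)
    simp only [hΨdef]
    linarith only [h3, h4]
  have hΨ0le : Ψ 0 ≤ (1 - α) ^ 2 * d0 ^ 2 := by
    have h0 : (0:ℕ) - 1 = 0 := rfl
    have h1 : Ψ 0 = (1 - α) ^ 2 * ‖z 0 - zs‖ ^ 2 - (1 - α) ^ 2 * αs 0 * ‖z 0 - zs‖ ^ 2 := by
      simp only [hΨdef, h0, sub_self, norm_zero]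
      ring
    rw [h1, hd0eq]
    linarith only [mul_nonneg (mul_nonneg (sq_nonneg (1 - α)) (hαs 0).1) (sq_nonneg ‖z 0 - zs‖)]
  -- pointwise comparison and summation
  have hpoint : ∀ j ∈ Finset.Icc 1 k, q α * M j
      ≤ η * ((1 - α) ^ 2 * M j - α * (1 + α) * ‖z j - w (j - 1)‖ ^ 2) := by
    intro j hj
    obtain ⟨hj1, hjk⟩ := Finset.mem_Icc.1 hj
    obtain ⟨n, rfl⟩ : ∃ n, j = n + 1 := ⟨j - 1, by omega⟩
    simp only [Nat.add_sub_cancel]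
    have h1 := (hkey n).1
    have h2 : q α * M (n + 1) = (η * (1 - α) ^ 2 - α * (1 + α)) * M (n + 1) := by rw [hqid]
    linarith only [h2, mul_nonneg hm0 (sub_nonneg.2 h1)]
  have hsum : q α * (∑ j ∈ Finset.Icc 1 k, M j) ≤ η * ((1 - α) ^ 2 * d0 ^ 2) := by
    have h1 : ∑ j ∈ Finset.Icc 1 k, q α * M j
        ≤ ∑ j ∈ Finset.Icc 1 k, η * ((1 - α) ^ 2 * M j - α * (1 + α) * ‖z j - w (j - 1)‖ ^ 2) :=
      Finset.sum_le_sum hpoint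
    rw [← Finset.mul_sum, ← Finset.mul_sum] at h1
    have h2 : ∑ j ∈ Finset.Icc 1 k, ((1 - α) ^ 2 * M j - α * (1 + α) * ‖z j - w (j - 1)‖ ^ 2)
        ≤ (1 - α) ^ 2 * d0 ^ 2 := by
      have h3 := htel k
      have h4 := hΨnn k
      linarith only [h3, h4, hΨ0le]
    calc q α * (∑ j ∈ Finset.Icc 1 k, M j)
        ≤ η * (∑ j ∈ Finset.Icc 1 k,
            ((1 - α) ^ 2 * M j - α * (1 + α) * ‖z j - w (j - 1)‖ ^ 2)) := h1
      _ ≤ η * ((1 - α) ^ 2 * d0 ^ 2) := mul_le_mul_of_nonneg_left h2 hη0.le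
  -- choose the minimizing index
  obtain ⟨i, hiIcc, himin⟩ := Finset.exists_min_image (Finset.Icc 1 k) M ⟨1, by
    simp [Finset.mem_Icc, hk]⟩
  obtain ⟨hi1, hik⟩ := Finset.mem_Icc.1 hiIcc
  have hcard : (Finset.Icc 1 k).card = k := by rw [Nat.card_Icc]; omega
  have hkMi : (k:ℝ) * M i ≤ ∑ j ∈ Finset.Icc 1 k, M j := by
    have h1 := Finset.card_nsmul_le_sum (Finset.Icc 1 k) M (M i) (fun j hj => himin j hj)
    rwa [hcard, nsmul_eq_mul] at h1
  have hMiC : (k:ℝ) * M i ≤ C * d0 ^ 2 := by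
    have h3 : q α * ((k:ℝ) * M i) ≤ η * ((1 - α) ^ 2 * d0 ^ 2) :=
      le_trans (mul_le_mul_of_nonneg_left hkMi hqα.le) hsum
    have h4 : η * ((1 - α) ^ 2 * d0 ^ 2) ≤ (C * q α) * d0 ^ 2 := by
      have h4a := mul_le_mul_of_nonneg_right hCq (sq_nonneg d0)
      linarith only [h4a]
    have h5 : q α * ((k:ℝ) * M i) ≤ q α * (C * d0 ^ 2) := by
      linarith only [h3, h4]
    exact le_of_mul_le_mul_left h5 hqα
  -- final bounds
  obtain ⟨n, rfl⟩ : ∃ n, i = n + 1 := ⟨i - 1, by omega⟩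
  obtain ⟨hk1, hk2', hk3, hk4⟩ := hkey n
  have hεi := hεnn (n + 1) hi1
  have hlami := hlam2 (n + 1) hi1
  have hki : (0:ℝ) < (k:ℝ) := by exact_mod_cast Nat.lt_of_lt_of_le Nat.zero_lt_one hk
  refine ⟨n + 1, hi1, hik, hin (n + 1) hi1, ?_, ?_⟩
  · -- bound on ‖v i‖
    have h6 : (τ * lamlb) ^ 2 ≤ (τ * lam (n + 1)) ^ 2 :=
      pow_le_pow_left₀ (mul_nonneg hτ0.le hlb.le)
        (mul_le_mul_of_nonneg_left hlami hτ0.le) 2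
    have h7 : η * ((τ * lamlb) ^ 2 * ‖v (n + 1)‖ ^ 2) ≤ M (n + 1) := by
      have h8 : η * ((τ * lamlb) ^ 2 * ‖v (n + 1)‖ ^ 2)
          ≤ η * ((τ * lam (n + 1)) ^ 2 * ‖v (n + 1)‖ ^ 2) :=
        mul_le_mul_of_nonneg_left (mul_le_mul_of_nonneg_right h6 (sq_nonneg _)) hη0.le
      rw [← hk4] at h8
      exact h8.trans hk1
    have h9 : (k:ℝ) * (η * ((τ * lamlb) ^ 2 * ‖v (n + 1)‖ ^ 2))
        ≤ C * d0 ^ 2 :=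
      le_trans (mul_le_mul_of_nonneg_left h7 hki.le) hMiC
    have hvR : ‖v (n + 1)‖ ^ 2
        ≤ d0 ^ 2 * (η⁻¹ * C)
          / (lamlb ^ 2 * τ ^ 2 * (k:ℝ)) := by
      rw [le_div_iff₀ (by positivity)]
      have h10 := mul_le_mul_of_nonneg_left h9 (inv_nonneg.2 hη0.le)
      have h11 : η⁻¹ * ((k:ℝ) * (η * ((τ * lamlb) ^ 2 * ‖v (n + 1)‖ ^ 2)))
          = (k:ℝ) * ((τ * lamlb) ^ 2 * ‖v (n + 1)‖ ^ 2) := by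
        field_simp [hη0.ne']
      rw [h11] at h10
      linarith only [h10]
    have hRnn : 0 ≤ d0 / (lamlb * τ * Real.sqrt k) *
        Real.sqrt (η⁻¹ * C) :=
      mul_nonneg (div_nonneg hd0nn (by positivity)) (Real.sqrt_nonneg _)
    have hRsq : (d0 / (lamlb * τ * Real.sqrt k) *
        Real.sqrt (η⁻¹ * C)) ^ 2
        = d0 ^ 2 * (η⁻¹ * C)
          / (lamlb ^ 2 * τ ^ 2 * (k:ℝ)) := by
      rw [mul_pow, div_pow, mul_pow, mul_pow,
        Real.sq_sqrt (mul_nonneg (inv_nonneg.2 hη0.le) hCnn),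
        Real.sq_sqrt (Nat.cast_nonneg k)]
      ring
    have h12 : ‖v (n + 1)‖ ^ 2 ≤ (d0 / (lamlb * τ * Real.sqrt k) *
        Real.sqrt (η⁻¹ * C)) ^ 2 := by
      rw [hRsq]
      exact hvR
    calc ‖v (n + 1)‖ = Real.sqrt (‖v (n + 1)‖ ^ 2) := (Real.sqrt_sq (norm_nonneg _)).symm
      _ ≤ _ := by
          rw [← Real.sqrt_sq hRnn]
          exact Real.sqrt_le_sqrt h12
  · -- bound on ε i
    have hσQ : (0:ℝ) < 1 - σ ^ 2 := by
      have := mul_pos (show (0:ℝ) < 1 - σ by linarith) (show (0:ℝ) < 1 + σ by linarith)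
      linarith only [this]
    have hDpos : (0:ℝ) < 2 * (1 - σ ^ 2) * lamlb * τ * (k:ℝ) := by positivity
    have h40 : 2 * lamlb * ε (n + 1) ≤ 2 * lam (n + 1) * ε (n + 1) := by
      have := mul_le_mul_of_nonneg_right hlami hεi
      linarith only [this]
    have t1 : 2 * lamlb * ε (n + 1) * ((1 - σ ^ 2) * τ * (k:ℝ))
        ≤ σ ^ 2 * ‖ztil (n + 1) - w n‖ ^ 2 * ((1 - σ ^ 2) * τ * (k:ℝ)) :=
      mul_le_mul_of_nonneg_right (h40.trans hk3) (by positivity)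
    have t2 : σ ^ 2 * (k:ℝ) * (τ * (1 - σ ^ 2) * ‖ztil (n + 1) - w n‖ ^ 2)
        ≤ σ ^ 2 * (k:ℝ) * M (n + 1) :=
      mul_le_mul_of_nonneg_left hk2' (by positivity)
    have t3 : σ ^ 2 * ((k:ℝ) * M (n + 1))
        ≤ σ ^ 2 * (C * d0 ^ 2) :=
      mul_le_mul_of_nonneg_left hMiC (sq_nonneg σ)
    have t4 : σ ^ 2 * (C * d0 ^ 2)
        ≤ σ * (C * d0 ^ 2) :=
      mul_le_mul_of_nonneg_right
        (by have := mul_nonneg hσ0 (show (0:ℝ) ≤ 1 - σ by linarith); linarith only [this])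
        (mul_nonneg hCnn (sq_nonneg d0))
    have h50 : ε (n + 1) * (2 * (1 - σ ^ 2) * lamlb * τ * (k:ℝ))
        ≤ σ * d0 ^ 2 * C := by
      linarith only [t1, t2, t3, t4]
    have h51 : σ * d0 ^ 2 / (2 * (1 - σ ^ 2) * lamlb * τ * (k:ℝ))
        * C
        = σ * d0 ^ 2 * C
          / (2 * (1 - σ ^ 2) * lamlb * τ * (k:ℝ)) := by ring
    rw [h51, le_div_iff₀ hDpos]
    exact h50
end
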